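/- arXiv:2008.03855 — 8 statements merged into one kernel-verified Lean document; each statement's English description precedes it below -/
import Mathlib

section
/- Let p₁ = e^{−1/2} and p₀ = 1 − p₁. Then the quantity A := ∑_{k=0}^{∞} (1 + k²) p₀ p₁^{k²} + ∑_{k=2}^{∞} p₁^{k} p₀ ( ∑_{j=1}^{k(k−1)} (k + 1 + j) p₁^{j−1} p₀ ) satisfies 3.329 < A < 3.330. -/
set_option maxHeartbeats 2000000

lemma karney_inner_closed (q c : ℝ) (m : ℕ) :
    (1 - q) ^ 2 * ∑ j ∈ Finset.Icc 1 m, (c + (j : ℝ)) * q ^ (j - 1) =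
      (c * (1 - q) + 1) - q ^ m * ((c + (m : ℝ) + 1) * (1 - q) + q) := by
  induction m with
  | zero => simp; ring
  | succ n ih =>
      rw [Finset.sum_Icc_succ_top (by omega)]
      push_cast
      push_cast at ih
      linear_combination ih

lemma karney_aux (q : ℝ) (hq : q = Real.exp (-(1 / 2 : ℝ))) :
    3.329 < (∑' k : ℕ, (1 + (k : ℝ) ^ 2) * (1 - q) * q ^ (k ^ 2)) +
        (∑' k : ℕ, q ^ (k + 2) * (1 - q) *
          ∑ j ∈ Finset.Icc 1 ((k + 2) * (k + 1)),
            (((k : ℝ) + 2) + 1 + (j : ℝ)) * q ^ (j - 1) * (1 - q)) ∧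
      (∑' k : ℕ, (1 + (k : ℝ) ^ 2) * (1 - q) * q ^ (k ^ 2)) +
        (∑' k : ℕ, q ^ (k + 2) * (1 - q) *
          ∑ j ∈ Finset.Icc 1 ((k + 2) * (k + 1)),
            (((k : ℝ) + 2) + 1 + (j : ℝ)) * q ^ (j - 1) * (1 - q)) < 3.330 := by
  have hq0 : 0 < q := by rw [hq]; exact Real.exp_pos _
  have hq1 : q < 1 := by rw [hq]; exact Real.exp_lt_one_iff.mpr (by norm_num)
  have hp0 : (0:ℝ) < 1 - q := by linarith
  have hqn : ‖q‖ < 1 := by rw [Real.norm_eq_abs, abs_of_pos hq0]; exact hq1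
  -- rational bounds on q
  have hqe : q * q * Real.exp 1 = 1 := by
    have h2 : q * q = (Real.exp 1)⁻¹ := by
      rw [hq, ← Real.exp_add, ← Real.exp_neg]; norm_num
    rw [h2]; exact inv_mul_cancel₀ (Real.exp_ne_zero 1)
  have ha : (0.6065306 : ℝ) < q := by
    nlinarith [Real.exp_one_lt_d9, Real.exp_pos 1, sq_nonneg (q - 0.6065306),
      sq_nonneg (q + 0.6065306)]
  have hb : q < (0.6065307 : ℝ) := by
    nlinarith [Real.exp_one_gt_d9, Real.exp_pos 1, sq_nonneg (q - 0.6065307),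
      sq_nonneg (q + 0.6065307)]
  -- summability facts
  have sgeo : Summable (fun k : ℕ => q ^ k) := summable_geometric_of_lt_one hq0.le hq1
  have smul : Summable (fun k : ℕ => (k : ℝ) * q ^ k) := by
    simpa using summable_pow_mul_geometric_of_norm_lt_one 1 hqn
  have ssq : Summable (fun k : ℕ => (k : ℝ) ^ 2 * q ^ k) := by
    simpa using summable_pow_mul_geometric_of_norm_lt_one 2 hqn
  have hfS : Summable (fun k : ℕ => (1 + (k : ℝ) ^ 2) * (1 - q) * q ^ (k ^ 2)) := by
    have maj : Summable (fun k : ℕ => (1 + (k : ℝ) ^ 2) * (1 - q) * q ^ k) := by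
      have e : (fun k : ℕ => (1 + (k : ℝ) ^ 2) * (1 - q) * q ^ k)
          = fun k : ℕ => (1 - q) * q ^ k + (1 - q) * ((k : ℝ) ^ 2 * q ^ k) := by
        funext k; ring
      rw [e]; exact (sgeo.mul_left _).add (ssq.mul_left _)
    refine Summable.of_nonneg_of_le (fun k => ?_) (fun k => ?_) maj
    · exact mul_nonneg (mul_nonneg (by positivity) hp0.le) (pow_nonneg hq0.le _)
    · exact mul_le_mul_of_nonneg_left
        (pow_le_pow_of_le_one hq0.le hq1.le (Nat.le_self_pow two_ne_zero k))
        (mul_nonneg (by positivity) hp0.le)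
  have htS : Summable (fun k : ℕ => q ^ ((k + 2) ^ 2)) := by
    refine Summable.of_nonneg_of_le (fun k => pow_nonneg hq0.le _) (fun k => ?_) sgeo
    exact pow_le_pow_of_le_one hq0.le hq1.le
      (le_trans (Nat.le_add_right k 2) (Nat.le_self_pow two_ne_zero _))
  have hgS : Summable (fun k : ℕ => q ^ (k + 2) * (((k : ℝ) + 3) * (1 - q) + 1)) := by
    have e : (fun k : ℕ => q ^ (k + 2) * (((k : ℝ) + 3) * (1 - q) + 1))
        = fun k : ℕ => (1 - q) * q ^ 2 * ((k : ℝ) * q ^ k) + ((3 * (1 - q) + 1) * q ^ 2) * q ^ k := by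
      funext k; rw [pow_add]; ring
    rw [e]; exact (smul.mul_left _).add (sgeo.mul_left _)
  have hFS : Summable (fun k : ℕ =>
      (1 + ((k + 2 : ℕ) : ℝ) ^ 2) * (1 - q) * q ^ ((k + 2) ^ 2)) :=
    (summable_nat_add_iff 2).mpr hfS
  have hhS : Summable (fun k : ℕ =>
      q ^ ((k + 2) ^ 2) * ((((k : ℝ) + 2) ^ 2 + 2) * (1 - q) + q)) := by
    have e : (fun k : ℕ => q ^ ((k + 2) ^ 2) * ((((k : ℝ) + 2) ^ 2 + 2) * (1 - q) + q))
        = fun k : ℕ =>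
          (1 + ((k + 2 : ℕ) : ℝ) ^ 2) * (1 - q) * q ^ ((k + 2) ^ 2) + q ^ ((k + 2) ^ 2) := by
      funext k; push_cast; ring
    rw [e]; exact hFS.add htS
  -- the inner finite sum
  have hterm : ∀ k : ℕ, q ^ (k + 2) * (1 - q) *
      (∑ j ∈ Finset.Icc 1 ((k + 2) * (k + 1)),
        (((k : ℝ) + 2) + 1 + (j : ℝ)) * q ^ (j - 1) * (1 - q)) =
      q ^ (k + 2) * (((k : ℝ) + 3) * (1 - q) + 1) -
        q ^ ((k + 2) ^ 2) * ((((k : ℝ) + 2) ^ 2 + 2) * (1 - q) + q) := by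
    intro k
    have hsum : ∑ j ∈ Finset.Icc 1 ((k + 2) * (k + 1)),
        (((k : ℝ) + 2) + 1 + (j : ℝ)) * q ^ (j - 1) * (1 - q)
        = (1 - q) * ∑ j ∈ Finset.Icc 1 ((k + 2) * (k + 1)),
            (((k : ℝ) + 3) + (j : ℝ)) * q ^ (j - 1) := by
      rw [Finset.mul_sum]; exact Finset.sum_congr rfl (fun j _ => by ring)
    have H := karney_inner_closed q ((k : ℝ) + 3) ((k + 2) * (k + 1))
    have e2 : q ^ ((k + 2) ^ 2) = q ^ (k + 2) * q ^ ((k + 2) * (k + 1)) := by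
      rw [← pow_add]; congr 1; ring
    rw [hsum, e2]
    push_cast at H ⊢
    linear_combination q ^ (k + 2) * H
  -- second tsum
  have hS2 : (∑' k : ℕ, q ^ (k + 2) * (1 - q) *
      ∑ j ∈ Finset.Icc 1 ((k + 2) * (k + 1)),
        (((k : ℝ) + 2) + 1 + (j : ℝ)) * q ^ (j - 1) * (1 - q))
      = (∑' k : ℕ, q ^ (k + 2) * (((k : ℝ) + 3) * (1 - q) + 1)) -
        ∑' k : ℕ, q ^ ((k + 2) ^ 2) * ((((k : ℝ) + 2) ^ 2 + 2) * (1 - q) + q) := by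
    rw [← Summable.tsum_sub hgS hhS]
    exact tsum_congr hterm
  have hgval : (∑' k : ℕ, q ^ (k + 2) * (((k : ℝ) + 3) * (1 - q) + 1))
      = (4 * q ^ 2 - 2 * q ^ 3) / (1 - q) := by
    have e : (fun k : ℕ => q ^ (k + 2) * (((k : ℝ) + 3) * (1 - q) + 1))
        = fun k : ℕ => (1 - q) * q ^ 2 * ((k : ℝ) * q ^ k) + ((3 * (1 - q) + 1) * q ^ 2) * q ^ k := by
      funext k; rw [pow_add]; ring
    rw [e, Summable.tsum_add (smul.mul_left _) (sgeo.mul_left _), tsum_mul_left, tsum_mul_left,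
      tsum_coe_mul_geometric_of_norm_lt_one hqn, tsum_geometric_of_lt_one hq0.le hq1]
    field_simp
    ring
  have hhval : (∑' k : ℕ, q ^ ((k + 2) ^ 2) * ((((k : ℝ) + 2) ^ 2 + 2) * (1 - q) + q))
      = (∑' k : ℕ, (1 + ((k + 2 : ℕ) : ℝ) ^ 2) * (1 - q) * q ^ ((k + 2) ^ 2)) +
        ∑' k : ℕ, q ^ ((k + 2) ^ 2) := by
    rw [← Summable.tsum_add hFS htS]
    exact tsum_congr fun k => by push_cast; ring
  -- split first tsum
  have hfsplit : (∑' k : ℕ, (1 + (k : ℝ) ^ 2) * (1 - q) * q ^ (k ^ 2))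
      = (1 - q) + 2 * (1 - q) * q +
        ∑' k : ℕ, (1 + ((k + 2 : ℕ) : ℝ) ^ 2) * (1 - q) * q ^ ((k + 2) ^ 2) := by
    have := Summable.sum_add_tsum_nat_add (f := fun k : ℕ => (1 + (k : ℝ) ^ 2) * (1 - q) * q ^ (k ^ 2))
      2 hfS
    rw [← this]
    norm_num [Finset.sum_range_succ]
  -- T bounds
  have hTl : q ^ 4 + q ^ 9 + q ^ 16 ≤ ∑' k : ℕ, q ^ ((k + 2) ^ 2) := by
    have h := Summable.sum_le_tsum (Finset.range 3) (fun k _ => pow_nonneg hq0.le _) htS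
    have e : ∑ i ∈ Finset.range 3, q ^ ((i + 2) ^ 2) = q ^ 4 + q ^ 9 + q ^ 16 := by
      norm_num [Finset.sum_range_succ]
    linarith
  have hTu : (∑' k : ℕ, q ^ ((k + 2) ^ 2)) ≤ q ^ 4 + q ^ 9 + q ^ 16 * (1 - q ^ 8)⁻¹ := by
    have h8 : q ^ 8 < 1 := pow_lt_one₀ hq0.le hq1 (by norm_num)
    have sg8 : Summable (fun k : ℕ => q ^ 16 * (q ^ 8) ^ k) :=
      (summable_geometric_of_lt_one (by positivity) h8).mul_left _
    have hsplit : (∑ i ∈ Finset.range 2, q ^ ((i + 2) ^ 2)) +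
        (∑' i : ℕ, q ^ ((i + 2 + 2) ^ 2)) = ∑' i : ℕ, q ^ ((i + 2) ^ 2) :=
      Summable.sum_add_tsum_nat_add 2 htS
    have htail : (∑' k : ℕ, q ^ ((k + 2 + 2) ^ 2)) ≤ ∑' k : ℕ, q ^ 16 * (q ^ 8) ^ k := by
      refine Summable.tsum_le_tsum (fun k => ?_)
        ((summable_nat_add_iff 2).mpr htS) sg8
      have e : q ^ 16 * (q ^ 8) ^ k = q ^ (16 + 8 * k) := by
        rw [pow_add, pow_mul]
      rw [e]
      exact pow_le_pow_of_le_one hq0.le hq1.le (by nlinarith [sq_nonneg k])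
    have hgeo8 : (∑' k : ℕ, q ^ 16 * (q ^ 8) ^ k) = q ^ 16 * (1 - q ^ 8)⁻¹ := by
      rw [tsum_mul_left, tsum_geometric_of_lt_one (by positivity) h8]
    have hrange : ∑ i ∈ Finset.range 2, q ^ ((i + 2) ^ 2) = q ^ 4 + q ^ 9 := by
      norm_num [Finset.sum_range_succ]
    have h2 : (∑' k : ℕ, q ^ ((k + 2 + 2) ^ 2)) ≤ q ^ 16 * (1 - q ^ 8)⁻¹ := by
      rw [← hgeo8]; exact htail
    linarith
  set T : ℝ := ∑' k : ℕ, q ^ ((k + 2) ^ 2) with hT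
  -- numeric bounds on T
  have hbpow : ∀ n : ℕ, q ^ n ≤ (0.6065307 : ℝ) ^ n := fun n => pow_le_pow_left₀ hq0.le hb.le n
  have hapow : ∀ n : ℕ, (0.6065306 : ℝ) ^ n ≤ q ^ n := fun n => pow_le_pow_left₀ (by norm_num) ha.le n
  have hTub : T < 0.146787 := by
    have h8 : q ^ 8 < 1 := pow_lt_one₀ hq0.le hq1 (by norm_num)
    have hinv : (1 - q ^ 8)⁻¹ ≤ (1 - (0.6065307 : ℝ) ^ 8)⁻¹ := by
      apply inv_anti₀ (by norm_num)
      linarith [hbpow 8]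
    have h16 : q ^ 16 * (1 - q ^ 8)⁻¹ ≤ (0.6065307 : ℝ) ^ 16 * (1 - (0.6065307 : ℝ) ^ 8)⁻¹ :=
      mul_le_mul (hbpow 16) hinv (inv_nonneg.2 (by linarith)) (by positivity)
    have hfinal : (0.6065307 : ℝ) ^ 4 + (0.6065307 : ℝ) ^ 9 +
        (0.6065307 : ℝ) ^ 16 * (1 - (0.6065307 : ℝ) ^ 8)⁻¹ < 0.146787 := by norm_num
    linarith [hTu, hbpow 4, hbpow 9]
  have hTlb : (0.146778 : ℝ) < T := by
    have hfinal : (0.146778 : ℝ) < (0.6065306 : ℝ) ^ 4 + (0.6065306 : ℝ) ^ 9 +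
        (0.6065306 : ℝ) ^ 16 := by norm_num
    linarith [hTl, hapow 4, hapow 9, hapow 16]
  -- closed form of A
  have hAval : (∑' k : ℕ, (1 + (k : ℝ) ^ 2) * (1 - q) * q ^ (k ^ 2)) +
      (∑' k : ℕ, q ^ (k + 2) * (1 - q) *
        ∑ j ∈ Finset.Icc 1 ((k + 2) * (k + 1)),
          (((k : ℝ) + 2) + 1 + (j : ℝ)) * q ^ (j - 1) * (1 - q))
      = (1 + q ^ 2) / (1 - q) - T := by
    rw [hS2, hgval, hhval, hfsplit]
    field_simp
    ring
  rw [hAval]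
  constructor
  · have key : (3.329 + T) * (1 - q) < 1 + q ^ 2 := by
      nlinarith [mul_lt_mul_of_pos_right hTub hp0, sq_nonneg (q - 0.6065306)]
    have := (lt_div_iff₀ hp0).mpr key
    linarith
  · have key : 1 + q ^ 2 < (3.330 + T) * (1 - q) := by
      nlinarith [mul_lt_mul_of_pos_right hTlb hp0, sq_nonneg (0.6065307 - q)]
    have := (div_lt_iff₀ hp0).mpr key
    linarith

/-- With `p₁ = e^{−1/2}` and `p₀ = 1 − p₁`, the quantity
`A = ∑_{k=0}^{∞} (1 + k²) p₀ p₁^{k²}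
   + ∑_{k=2}^{∞} p₁^{k} p₀ (∑_{j=1}^{k(k−1)} (k + 1 + j) p₁^{j−1} p₀)`
satisfies `3.329 < A < 3.330`.  (The second series is reindexed by `k ↦ k + 2`.) -/
theorem karney_expected_bernoulli_per_pass :
    let p₁ : ℝ := Real.exp (-(1 / 2 : ℝ))
    let p₀ : ℝ := 1 - p₁
    let A : ℝ :=
      (∑' k : ℕ, (1 + (k : ℝ) ^ 2) * p₀ * p₁ ^ (k ^ 2)) +
        ∑' k : ℕ, p₁ ^ (k + 2) * p₀ *
          ∑ j ∈ Finset.Icc 1 ((k + 2) * (k + 1)),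
            (((k : ℝ) + 2) + 1 + (j : ℝ)) * p₁ ^ (j - 1) * p₀
    3.329 < A ∧ A < 3.330 := by
  intro p₁ p₀ A
  exact karney_aux p₁ rfl
end

section
/- Let p₁ = e^{−1/2} and p₀ = 1 − p₁, let A := ∑_{k=0}^{∞} (1 + k²) p₀ p₁^{k²} + ∑_{k=2}^{∞} p₁^{k} p₀ ( ∑_{j=1}^{k(k−1)} (k + 1 + j) p₁^{j−1} p₀ ), and let C := ∑_{k=0}^{∞} p₁^{k²} p₀. Then 4.826 < A / C < 4.827. -/
open Finset

set_option maxHeartbeats 2000000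

abbrev gfun (x : ℝ) (k : ℕ) : ℝ := x ^ (k + 2) * (((k : ℝ) + 3) * (1 - x) + 1)

abbrev hfun (x : ℝ) (k : ℕ) : ℝ :=
  x ^ ((k + 2) ^ 2) *
    (((k : ℝ) + 3) * (1 - x) + (((k + 2) * (k + 1) : ℕ) : ℝ) + 1
      - (((k + 2) * (k + 1) : ℕ) : ℝ) * x)

/-- Closed form for the inner finite sum. -/
lemma inner_sum_id (x c : ℝ) (m : ℕ) :
    (1 - x) * ∑ j ∈ Finset.Icc 1 m, (c + (j : ℝ)) * x ^ (j - 1) * (1 - x)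
      = c * (1 - x) * (1 - x ^ m) + (1 - ((m : ℝ) + 1) * x ^ m + (m : ℝ) * x ^ (m + 1)) := by
  induction m with
  | zero => simp
  | succ n ih =>
    rw [Finset.sum_Icc_succ_top (by omega : 1 ≤ n + 1), mul_add, ih]
    push_cast
    ring

lemma term_eq (x : ℝ) (k : ℕ) :
    x ^ (k + 2) * (1 - x) *
        ∑ j ∈ Finset.Icc 1 ((k + 2) * (k + 1)),
          (((k : ℝ) + 2) + 1 + (j : ℝ)) * x ^ (j - 1) * (1 - x)
      = gfun x k - hfun x k := by
  have h := inner_sum_id x (((k : ℝ) + 2) + 1) ((k + 2) * (k + 1))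
  have hsq : (k + 2) ^ 2 = (k + 2) + (k + 2) * (k + 1) := by ring
  calc x ^ (k + 2) * (1 - x) *
        ∑ j ∈ Finset.Icc 1 ((k + 2) * (k + 1)),
          (((k : ℝ) + 2) + 1 + (j : ℝ)) * x ^ (j - 1) * (1 - x)
      = x ^ (k + 2) * ((1 - x) *
        ∑ j ∈ Finset.Icc 1 ((k + 2) * (k + 1)),
          (((k : ℝ) + 2) + 1 + (j : ℝ)) * x ^ (j - 1) * (1 - x)) := by ring
    _ = x ^ (k + 2) * ((((k : ℝ) + 2) + 1) * (1 - x) * (1 - x ^ ((k + 2) * (k + 1)))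
          + (1 - ((((k + 2) * (k + 1) : ℕ) : ℝ) + 1) * x ^ ((k + 2) * (k + 1))
            + (((k + 2) * (k + 1) : ℕ) : ℝ) * x ^ ((k + 2) * (k + 1) + 1))) := by rw [h]
    _ = _ := by
        show _ = x ^ (k + 2) * (((k : ℝ) + 3) * (1 - x) + 1)
          - x ^ ((k + 2) ^ 2) *
              (((k : ℝ) + 3) * (1 - x) + (((k + 2) * (k + 1) : ℕ) : ℝ) + 1
                - (((k + 2) * (k + 1) : ℕ) : ℝ) * x)
        rw [hsq, pow_add]; push_cast; ring

section

variable {x : ℝ}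

lemma pow_sq_le (hx0 : 0 ≤ x) (hx1 : x < 1) (k : ℕ) : x ^ (k ^ 2) ≤ x ^ k :=
  pow_le_pow_of_le_one hx0 hx1.le (Nat.le_self_pow two_ne_zero k)

lemma hgeo (hx0 : 0 ≤ x) (hx1 : x < 1) : Summable (fun k : ℕ => x ^ k) :=
  summable_geometric_of_lt_one hx0 hx1

lemma hk1 (hx0 : 0 ≤ x) (hx1 : x < 1) : Summable (fun k : ℕ => (k : ℝ) * x ^ k) := by
  simpa using summable_pow_mul_geometric_of_norm_lt_one (R := ℝ) 1
    (by rwa [Real.norm_eq_abs, abs_of_nonneg hx0])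

lemma hk2 (hx0 : 0 ≤ x) (hx1 : x < 1) : Summable (fun k : ℕ => (k : ℝ) ^ 2 * x ^ k) := by
  simpa using summable_pow_mul_geometric_of_norm_lt_one (R := ℝ) 2
    (by rwa [Real.norm_eq_abs, abs_of_nonneg hx0])

lemma sumC (hx0 : 0 ≤ x) (hx1 : x < 1) : Summable (fun k : ℕ => x ^ (k ^ 2) * (1 - x)) := by
  refine Summable.of_nonneg_of_le
    (fun k => mul_nonneg (pow_nonneg hx0 _) (by linarith)) (fun k => ?_) (hgeo hx0 hx1)
  calc x ^ (k ^ 2) * (1 - x) ≤ x ^ (k ^ 2) * 1 := by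
        exact mul_le_mul_of_nonneg_left (by linarith) (pow_nonneg hx0 _)
    _ = x ^ (k ^ 2) := mul_one _
    _ ≤ x ^ k := pow_sq_le hx0 hx1 k

lemma sumT1 (hx0 : 0 ≤ x) (hx1 : x < 1) :
    Summable (fun k : ℕ => (1 + (k : ℝ) ^ 2) * (1 - x) * x ^ (k ^ 2)) := by
  refine Summable.of_nonneg_of_le
    (fun k => mul_nonneg (mul_nonneg (by positivity) (by linarith)) (pow_nonneg hx0 _))
    (fun k => ?_) ((hgeo hx0 hx1).add (hk2 hx0 hx1))
  have h1 : (0:ℝ) ≤ 1 + (k : ℝ) ^ 2 := by positivity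
  calc (1 + (k : ℝ) ^ 2) * (1 - x) * x ^ (k ^ 2)
      ≤ (1 + (k : ℝ) ^ 2) * 1 * x ^ (k ^ 2) := by
        exact mul_le_mul_of_nonneg_right
          (mul_le_mul_of_nonneg_left (by linarith) h1) (pow_nonneg hx0 _)
    _ = (1 + (k : ℝ) ^ 2) * x ^ (k ^ 2) := by ring
    _ ≤ (1 + (k : ℝ) ^ 2) * x ^ k := by
        exact mul_le_mul_of_nonneg_left (pow_sq_le hx0 hx1 k) h1
    _ = x ^ k + (k : ℝ) ^ 2 * x ^ k := by ring

lemma sumg (hx0 : 0 ≤ x) (hx1 : x < 1) : Summable (gfun x) := by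
  have hs : Summable (fun k : ℕ => ((k : ℝ) + 4) * x ^ k) := by
    refine Summable.congr ((hk1 hx0 hx1).add ((hgeo hx0 hx1).mul_left 4)) (fun k => by ring)
  refine Summable.of_nonneg_of_le (fun k => ?_) (fun k => ?_) hs
  · have h : (0:ℝ) ≤ ((k : ℝ) + 3) * (1 - x) + 1 := by
      have : (0:ℝ) ≤ ((k : ℝ) + 3) * (1 - x) :=
        mul_nonneg (by positivity) (by linarith)
      linarith
    exact mul_nonneg (pow_nonneg hx0 _) h
  · have hp : x ^ (k + 2) ≤ x ^ k := pow_le_pow_of_le_one hx0 hx1.le (by omega)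
    have hc : ((k : ℝ) + 3) * (1 - x) + 1 ≤ (k : ℝ) + 4 := by nlinarith [Nat.cast_nonneg (α := ℝ) k]
    have hc0 : (0:ℝ) ≤ ((k : ℝ) + 3) * (1 - x) + 1 := by
      nlinarith [Nat.cast_nonneg (α := ℝ) k]
    calc x ^ (k + 2) * (((k : ℝ) + 3) * (1 - x) + 1)
        ≤ x ^ k * ((k : ℝ) + 4) := by
          exact mul_le_mul hp hc hc0 (pow_nonneg hx0 k)
      _ = ((k : ℝ) + 4) * x ^ k := by ring

lemma sumh (hx0 : 0 ≤ x) (hx1 : x < 1) : Summable (hfun x) := by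
  have hs : Summable (fun k : ℕ => ((k : ℝ) + 3) ^ 2 * x ^ k) := by
    refine Summable.congr ((hk2 hx0 hx1).add (((hk1 hx0 hx1).mul_left 6).add
      ((hgeo hx0 hx1).mul_left 9))) (fun k => by ring)
  refine Summable.of_nonneg_of_le (fun k => ?_) (fun k => ?_) hs
  · have hm : (0:ℝ) ≤ (((k + 2) * (k + 1) : ℕ) : ℝ) := Nat.cast_nonneg _
    have : (0:ℝ) ≤ ((k : ℝ) + 3) * (1 - x) + (((k + 2) * (k + 1) : ℕ) : ℝ) + 1
        - (((k + 2) * (k + 1) : ℕ) : ℝ) * x := by nlinarith [Nat.cast_nonneg (α := ℝ) k]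
    exact mul_nonneg (pow_nonneg hx0 _) this
  · have hp : x ^ ((k + 2) ^ 2) ≤ x ^ k := pow_le_pow_of_le_one hx0 hx1.le (by nlinarith)
    have hm : (((k + 2) * (k + 1) : ℕ) : ℝ) = ((k:ℝ) + 2) * ((k:ℝ) + 1) := by push_cast; ring
    have hc : ((k : ℝ) + 3) * (1 - x) + (((k + 2) * (k + 1) : ℕ) : ℝ) + 1
        - (((k + 2) * (k + 1) : ℕ) : ℝ) * x ≤ ((k : ℝ) + 3) ^ 2 := by
      rw [hm]; nlinarith [Nat.cast_nonneg (α := ℝ) k]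
    have hc0 : (0:ℝ) ≤ ((k : ℝ) + 3) * (1 - x) + (((k + 2) * (k + 1) : ℕ) : ℝ) + 1
        - (((k + 2) * (k + 1) : ℕ) : ℝ) * x := by
      rw [hm]; nlinarith [Nat.cast_nonneg (α := ℝ) k]
    calc x ^ ((k + 2) ^ 2) * _ ≤ x ^ k * (((k : ℝ) + 3) ^ 2) := mul_le_mul hp hc hc0 (pow_nonneg hx0 k)
      _ = ((k : ℝ) + 3) ^ 2 * x ^ k := by ring

lemma tsum_g (hx0 : 0 ≤ x) (hx1 : x < 1) :
    ∑' k : ℕ, gfun x k = (4 * x ^ 2 - 2 * x ^ 3) / (1 - x) := by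
  have hne : (1 : ℝ) - x ≠ 0 := by linarith
  have h1 : ∑' k : ℕ, gfun x k
      = ∑' k : ℕ, (((1 - x) * x ^ 2) * ((k : ℝ) * x ^ k) + ((4 - 3 * x) * x ^ 2) * x ^ k) := by
    refine tsum_congr (fun k => ?_)
    show x ^ (k + 2) * (((k : ℝ) + 3) * (1 - x) + 1) = _
    rw [pow_add]; ring
  rw [h1, Summable.tsum_add (((hk1 hx0 hx1).mul_left _)) ((hgeo hx0 hx1).mul_left _),
    tsum_mul_left, tsum_mul_left, tsum_geometric_of_lt_one hx0 hx1,
    tsum_coe_mul_geometric_of_norm_lt_one (by rwa [Real.norm_eq_abs, abs_of_nonneg hx0])]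
  field_simp
  ring

lemma tail_bound {f : ℕ → ℝ} (hf : Summable f) {B : ℝ}
    (h : ∀ k, f k ≤ B * (1 / 2 : ℝ) ^ k) : ∑' k, f k ≤ 2 * B := by
  have h2 : Summable (fun k : ℕ => B * (1 / 2 : ℝ) ^ k) :=
    (summable_geometric_of_lt_one (by norm_num) (by norm_num)).mul_left B
  have := Summable.tsum_le_tsum h hf h2
  rw [tsum_mul_left, tsum_geometric_of_lt_one (by norm_num) (by norm_num)] at this
  norm_num at this
  linarith

lemma coef1 (k : ℕ) : 1 + ((k : ℝ) + 6) ^ 2 ≤ 37 * 2 ^ k := by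
  induction k with
  | zero => norm_num
  | succ n ih =>
    have h1 : (0:ℝ) ≤ (n : ℝ) := Nat.cast_nonneg n
    push_cast
    push_cast at ih
    nlinarith [ih, pow_succ (2:ℝ) n]

lemma coef2 (k : ℕ) : ((k : ℝ) + 7) ^ 2 ≤ 49 * 2 ^ k := by
  induction k with
  | zero => norm_num
  | succ n ih =>
    have h1 : (0:ℝ) ≤ (n : ℝ) := Nat.cast_nonneg n
    push_cast
    push_cast at ih
    nlinarith [ih, pow_succ (2:ℝ) n]

lemma shifted_term_le (hx0 : 0 ≤ x) (hx1 : x < 1) (hx12 : x ^ 12 ≤ 1 / 4)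
    {c C2 : ℝ} (k : ℕ) (hc0 : 0 ≤ c) (hC2 : 0 ≤ C2) (hc : c ≤ C2 * 2 ^ k)
    {e : ℕ} (he : 36 + 12 * k ≤ e) :
    x ^ e * c ≤ (C2 * x ^ 36) * (1 / 2 : ℝ) ^ k := by
  have h1 : x ^ e ≤ x ^ (36 + 12 * k) := pow_le_pow_of_le_one hx0 hx1.le he
  have h2 : x ^ (36 + 12 * k) = x ^ 36 * (x ^ 12) ^ k := by
    rw [pow_add, pow_mul]
  have h3 : x ^ e * c ≤ (x ^ 36 * (x ^ 12) ^ k) * (C2 * 2 ^ k) := by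
    rw [← h2]
    exact mul_le_mul h1 hc hc0 (pow_nonneg hx0 _)
  have h4 : (x ^ 36 * (x ^ 12) ^ k) * (C2 * 2 ^ k) = (C2 * x ^ 36) * (2 * x ^ 12) ^ k := by
    rw [mul_pow]; ring
  have h5 : (2 * x ^ 12) ^ k ≤ (1 / 2 : ℝ) ^ k := by
    refine pow_le_pow_left₀ (by positivity) (by linarith) k
  calc x ^ e * c ≤ (C2 * x ^ 36) * (2 * x ^ 12) ^ k := by rw [← h4]; exact h3
    _ ≤ (C2 * x ^ 36) * (1 / 2 : ℝ) ^ k := by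
        refine mul_le_mul_of_nonneg_left h5 (by positivity)

lemma main_core (hl : (0.6065306 : ℝ) < x) (hu : x < 0.6065307) :
    4.826 < ((∑' k : ℕ, (1 + (k : ℝ) ^ 2) * (1 - x) * x ^ (k ^ 2)) +
        ∑' k : ℕ, x ^ (k + 2) * (1 - x) *
          ∑ j ∈ Finset.Icc 1 ((k + 2) * (k + 1)),
            (((k : ℝ) + 2) + 1 + (j : ℝ)) * x ^ (j - 1) * (1 - x)) /
        (∑' k : ℕ, x ^ (k ^ 2) * (1 - x)) ∧
      ((∑' k : ℕ, (1 + (k : ℝ) ^ 2) * (1 - x) * x ^ (k ^ 2)) +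
        ∑' k : ℕ, x ^ (k + 2) * (1 - x) *
          ∑ j ∈ Finset.Icc 1 ((k + 2) * (k + 1)),
            (((k : ℝ) + 2) + 1 + (j : ℝ)) * x ^ (j - 1) * (1 - x)) /
        (∑' k : ℕ, x ^ (k ^ 2) * (1 - x)) < 4.827 := by
  have hx0 : (0:ℝ) ≤ x := by linarith
  have hx1 : x < 1 := by linarith
  have hxl : (0.6065306 : ℝ) ≤ x := hl.le
  have hxu : x ≤ (0.6065307 : ℝ) := hu.le
  have hx12 : x ^ 12 ≤ 1 / 4 := by
    calc x ^ 12 ≤ (0.6065307:ℝ) ^ 12 := pow_le_pow_left₀ hx0 hxu 12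
      _ ≤ 1 / 4 := by norm_num
  have pb : ∀ n : ℕ, (0.6065306:ℝ) ^ n ≤ x ^ n ∧ x ^ n ≤ (0.6065307:ℝ) ^ n := fun n =>
    ⟨pow_le_pow_left₀ (by norm_num) hxl n, pow_le_pow_left₀ hx0 hxu n⟩
  have p2l : (0.3678793687:ℝ) ≤ x ^ 2 := le_trans (by norm_num) (pb 2).1
  have p2u : x ^ 2 ≤ (0.3678794901:ℝ) := le_trans (pb 2).2 (by norm_num)
  have p3l : (0.2231300942:ℝ) ≤ x ^ 3 := le_trans (by norm_num) (pb 3).1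
  have p3u : x ^ 3 ≤ (0.2231302047:ℝ) := le_trans (pb 3).2 (by norm_num)
  have p4l : (0.1353352299:ℝ) ≤ x ^ 4 := le_trans (by norm_num) (pb 4).1
  have p4u : x ^ 4 ≤ (0.1353353192:ℝ) := le_trans (pb 4).2 (by norm_num)
  have p5l : (0.0820849582:ℝ) ≤ x ^ 5 := le_trans (by norm_num) (pb 5).1
  have p5u : x ^ 5 ≤ (0.0820850259:ℝ) := le_trans (pb 5).2 (by norm_num)
  have p9l : (0.0111089866:ℝ) ≤ x ^ 9 := le_trans (by norm_num) (pb 9).1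
  have p9u : x ^ 9 ≤ (0.0111090032:ℝ) := le_trans (pb 9).2 (by norm_num)
  have p10l : (0.0067379403:ℝ) ≤ x ^ 10 := le_trans (by norm_num) (pb 10).1
  have p10u : x ^ 10 ≤ (0.0067379515:ℝ) := le_trans (pb 10).2 (by norm_num)
  have p16l : (0.00033546209:ℝ) ≤ x ^ 16 := le_trans (by norm_num) (pb 16).1
  have p16u : x ^ 16 ≤ (0.00033546299:ℝ) := le_trans (pb 16).2 (by norm_num)
  have p17l : (0.00020346802:ℝ) ≤ x ^ 17 := le_trans (by norm_num) (pb 17).1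
  have p17u : x ^ 17 ≤ (0.00020346860:ℝ) := le_trans (pb 17).2 (by norm_num)
  have p25l : (0.0000037266439:ℝ) ≤ x ^ 25 := le_trans (by norm_num) (pb 25).1
  have p25u : x ^ 25 ≤ (0.0000037266594:ℝ) := le_trans (pb 25).2 (by norm_num)
  have p26l : (0.0000022603236:ℝ) ≤ x ^ 26 := le_trans (by norm_num) (pb 26).1
  have p26u : x ^ 26 ≤ (0.0000022603334:ℝ) := le_trans (pb 26).2 (by norm_num)
  have p36u : x ^ 36 ≤ (0.0000000152301:ℝ) := le_trans (pb 36).2 (by norm_num)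
  have p36l : (0:ℝ) ≤ x ^ 36 := pow_nonneg hx0 36
  have h2pow : ∀ i : ℕ, (1:ℝ) ≤ 2 ^ i := fun i => by
    have := pow_le_pow_left₀ (by norm_num : (0:ℝ) ≤ 1) (by norm_num : (1:ℝ) ≤ 2) i
    simpa using this
  -- C : split and bounds
  have hCs : (∑' k : ℕ, x ^ (k ^ 2) * (1 - x))
      = (∑ i ∈ Finset.range 6, x ^ (i ^ 2) * (1 - x))
        + ∑' i : ℕ, x ^ ((i + 6) ^ 2) * (1 - x) :=
    (Summable.sum_add_tsum_nat_add 6 (sumC hx0 hx1)).symm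
  have hCp : (∑ i ∈ Finset.range 6, x ^ (i ^ 2) * (1 - x))
      = 1 - x ^ 2 + x ^ 4 - x ^ 5 + x ^ 9 - x ^ 10 + x ^ 16 - x ^ 17 + x ^ 25 - x ^ 26 := by
    norm_num [Finset.sum_range_succ]
    ring
  have hCt0 : (0:ℝ) ≤ ∑' i : ℕ, x ^ ((i + 6) ^ 2) * (1 - x) :=
    tsum_nonneg (fun i => mul_nonneg (pow_nonneg hx0 _) (by linarith))
  have hCt : (∑' i : ℕ, x ^ ((i + 6) ^ 2) * (1 - x)) ≤ 2 * (1 * x ^ 36) := by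
    refine tail_bound ((summable_nat_add_iff 6).2 (sumC hx0 hx1)) (fun i => ?_)
    refine shifted_term_le hx0 hx1 hx12 i (by linarith) one_pos.le ?_ ?_
    · have := h2pow i; linarith
    · have h : (i + 6) ^ 2 = i ^ 2 + (36 + 12 * i) := by ring
      omega
  -- T1 : split and bounds
  have hT1s : (∑' k : ℕ, (1 + (k : ℝ) ^ 2) * (1 - x) * x ^ (k ^ 2))
      = (∑ i ∈ Finset.range 6, (1 + (i : ℝ) ^ 2) * (1 - x) * x ^ (i ^ 2))
        + ∑' i : ℕ, (1 + ((i + 6 : ℕ) : ℝ) ^ 2) * (1 - x) * x ^ ((i + 6) ^ 2) :=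
    (Summable.sum_add_tsum_nat_add 6 (sumT1 hx0 hx1)).symm
  have hT1p : (∑ i ∈ Finset.range 6, (1 + (i : ℝ) ^ 2) * (1 - x) * x ^ (i ^ 2))
      = 1 + x - 2 * x ^ 2 + 5 * x ^ 4 - 5 * x ^ 5 + 10 * x ^ 9 - 10 * x ^ 10
        + 17 * x ^ 16 - 17 * x ^ 17 + 26 * x ^ 25 - 26 * x ^ 26 := by
    norm_num [Finset.sum_range_succ]
    ring
  have hT1t0 : (0:ℝ) ≤ ∑' i : ℕ, (1 + ((i + 6 : ℕ) : ℝ) ^ 2) * (1 - x) * x ^ ((i + 6) ^ 2) :=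
    tsum_nonneg (fun i => mul_nonneg (mul_nonneg (by positivity) (by linarith)) (pow_nonneg hx0 _))
  have hT1t : (∑' i : ℕ, (1 + ((i + 6 : ℕ) : ℝ) ^ 2) * (1 - x) * x ^ ((i + 6) ^ 2))
      ≤ 2 * (37 * x ^ 36) := by
    refine tail_bound ((summable_nat_add_iff 6).2 (sumT1 hx0 hx1)) (fun i => ?_)
    have hre : (1 + ((i + 6 : ℕ) : ℝ) ^ 2) * (1 - x) * x ^ ((i + 6) ^ 2)
        = x ^ ((i + 6) ^ 2) * ((1 + ((i + 6 : ℕ) : ℝ) ^ 2) * (1 - x)) := by ring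
    rw [hre]
    refine shifted_term_le hx0 hx1 hx12 i ?_ (by norm_num) ?_ ?_
    · exact mul_nonneg (by positivity) (by linarith)
    · have c1 := coef1 i
      have hcast : ((i + 6 : ℕ) : ℝ) = (i : ℝ) + 6 := by push_cast; ring
      rw [hcast]
      nlinarith [mul_nonneg (show (0:ℝ) ≤ 1 + ((i:ℝ) + 6) ^ 2 by positivity) hx0]
    · have h : (i + 6) ^ 2 = i ^ 2 + (36 + 12 * i) := by ring
      omega
  -- H : split and bounds
  have hHs : (∑' k : ℕ, hfun x k)
      = (∑ i ∈ Finset.range 4, hfun x i) + ∑' i : ℕ, hfun x (i + 4) :=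
    (Summable.sum_add_tsum_nat_add 4 (sumh hx0 hx1)).symm
  have hHp : (∑ i ∈ Finset.range 4, hfun x i)
      = 6 * x ^ 4 - 5 * x ^ 5 + 11 * x ^ 9 - 10 * x ^ 10 + 18 * x ^ 16 - 17 * x ^ 17
        + 27 * x ^ 25 - 26 * x ^ 26 := by
    simp only [hfun, Finset.sum_range_succ, Finset.sum_range_zero]
    norm_num
    ring
  have hHt0 : (0:ℝ) ≤ ∑' i : ℕ, hfun x (i + 4) := by
    refine tsum_nonneg (fun i => ?_)
    have hm : (0:ℝ) ≤ (((i + 4 + 2) * (i + 4 + 1) : ℕ) : ℝ) := Nat.cast_nonneg _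
    refine mul_nonneg (pow_nonneg hx0 _) ?_
    nlinarith [Nat.cast_nonneg (α := ℝ) (i + 4)]
  have hHt : (∑' i : ℕ, hfun x (i + 4)) ≤ 2 * (49 * x ^ 36) := by
    refine tail_bound ((summable_nat_add_iff 4).2 (sumh hx0 hx1)) (fun i => ?_)
    show x ^ ((i + 4 + 2) ^ 2) * _ ≤ _
    refine shifted_term_le hx0 hx1 hx12 i ?_ (by norm_num) ?_ ?_
    · have hm : (((i + 4 + 2) * (i + 4 + 1) : ℕ) : ℝ) = ((i:ℝ) + 6) * ((i:ℝ) + 5) := by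
        push_cast; ring
      rw [hm]
      nlinarith [Nat.cast_nonneg (α := ℝ) i,
        mul_nonneg (mul_nonneg (show (0:ℝ) ≤ (i:ℝ) + 6 by positivity)
          (show (0:ℝ) ≤ (i:ℝ) + 5 by positivity)) (show (0:ℝ) ≤ 1 - x by linarith),
        mul_nonneg (show (0:ℝ) ≤ (i:ℝ) + 7 by positivity) (show (0:ℝ) ≤ 1 - x by linarith)]
    · have hm : (((i + 4 + 2) * (i + 4 + 1) : ℕ) : ℝ) = ((i:ℝ) + 6) * ((i:ℝ) + 5) := by
        push_cast; ring
      have hcast : ((i + 4 : ℕ) : ℝ) = (i : ℝ) + 4 := by push_cast; ring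
      rw [hm, hcast]
      nlinarith [coef2 i, Nat.cast_nonneg (α := ℝ) i,
        mul_nonneg (mul_nonneg (show (0:ℝ) ≤ (i:ℝ) + 6 by positivity)
          (show (0:ℝ) ≤ (i:ℝ) + 5 by positivity)) hx0,
        mul_nonneg (show (0:ℝ) ≤ (i:ℝ) + 7 by positivity) hx0]
    · have h : (i + 4 + 2) ^ 2 = i ^ 2 + (36 + 12 * i) := by ring
      omega
  -- T2 identity
  have hT2 : (∑' k : ℕ, x ^ (k + 2) * (1 - x) *
        ∑ j ∈ Finset.Icc 1 ((k + 2) * (k + 1)),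
          (((k : ℝ) + 2) + 1 + (j : ℝ)) * x ^ (j - 1) * (1 - x))
      = (∑' k : ℕ, gfun x k) - ∑' k : ℕ, hfun x k := by
    rw [tsum_congr (fun k => term_eq x k)]
    exact Summable.tsum_sub (sumg hx0 hx1) (sumh hx0 hx1)
  have hGv : ∑' k : ℕ, gfun x k = (4 * x ^ 2 - 2 * x ^ 3) / (1 - x) := tsum_g hx0 hx1
  have hGlo : (2.6056843:ℝ) ≤ (4 * x ^ 2 - 2 * x ^ 3) / (1 - x) := by
    rw [le_div_iff₀ (by linarith : (0:ℝ) < 1 - x)]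
    nlinarith [p2l, p3u, hxl]
  have hGhi : (4 * x ^ 2 - 2 * x ^ 3) / (1 - x) ≤ (2.6056869:ℝ) := by
    rw [div_le_iff₀ (by linarith : (0:ℝ) < 1 - x)]
    nlinarith [p2u, p3l, hxu]
  have hCpos : (0:ℝ) < ∑' k : ℕ, x ^ (k ^ 2) * (1 - x) := by
    rw [hCs, hCp]; linarith
  constructor
  · rw [lt_div_iff₀ hCpos, hT2, hGv, hCs, hCp, hT1s, hT1p, hHs, hHp]
    linarith
  · rw [div_lt_iff₀ hCpos, hT2, hGv, hCs, hCp, hT1s, hT1p, hHs, hHp]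
    linarith

end

/-- Proposition 2: with `p₁ = e^{−1/2}`, `p₀ = 1 − p₁`,
`A = ∑_{k=0}^{∞} (1 + k²) p₀ p₁^{k²}
   + ∑_{k=2}^{∞} p₁^{k} p₀ (∑_{j=1}^{k(k−1)} (k + 1 + j) p₁^{j−1} p₀)`
(the second series reindexed by `k ↦ k + 2`) and `C = ∑_{k=0}^{∞} p₁^{k²} p₀`,
we have `4.826 < A / C < 4.827`. -/
theorem karney_expected_bernoulli_total :
    let p₁ : ℝ := Real.exp (-(1 / 2 : ℝ))
    let p₀ : ℝ := 1 - p₁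
    let A : ℝ :=
      (∑' k : ℕ, (1 + (k : ℝ) ^ 2) * p₀ * p₁ ^ (k ^ 2)) +
        ∑' k : ℕ, p₁ ^ (k + 2) * p₀ *
          ∑ j ∈ Finset.Icc 1 ((k + 2) * (k + 1)),
            (((k : ℝ) + 2) + 1 + (j : ℝ)) * p₁ ^ (j - 1) * p₀
    let C : ℝ := ∑' k : ℕ, p₁ ^ (k ^ 2) * p₀
    4.826 < A / C ∧ A / C < 4.827 := by
  have hp : (0:ℝ) < Real.exp (-(1 / 2 : ℝ)) := Real.exp_pos _
  have hx2 : Real.exp (-(1 / 2 : ℝ)) ^ 2 = (Real.exp 1)⁻¹ := by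
    rw [sq, ← Real.exp_add, show (-(1 / 2 : ℝ)) + -(1 / 2) = -1 by norm_num, Real.exp_neg]
  have hl : (0.6065306 : ℝ) < Real.exp (-(1 / 2 : ℝ)) := by
    have h1 : ((2.7182818286:ℝ))⁻¹ < Real.exp (-(1 / 2 : ℝ)) ^ 2 := by
      rw [hx2]
      exact inv_strictAnti₀ (Real.exp_pos 1) Real.exp_one_lt_d9
    nlinarith [hp]
  have hu : Real.exp (-(1 / 2 : ℝ)) < (0.6065307 : ℝ) := by
    have h1 : Real.exp (-(1 / 2 : ℝ)) ^ 2 < ((2.7182818283:ℝ))⁻¹ := by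
      rw [hx2]
      exact inv_strictAnti₀ (by norm_num) Real.exp_one_gt_d9
    nlinarith [hp]
  exact main_core hl hu
end

section
/- Let p₁ = e^{−1/2} and p₀ = 1 − p₁. Then the quantity B := ∑_{k=0}^{∞} (1 + k²) p₁^{k²} p₀ + ∑_{k=2}^{∞} p₁^{(k−1)² + 1} ( ∑_{j=1}^{2(k−1)} (1 + (k−1)² + j) p₁^{j−1} p₀ ) satisfies 2.541 < B < 2.542. -/
set_option maxRecDepth 8000

noncomputable section
namespace IEB
open Finset

def x : ℝ := Real.exp (-(1 / 2 : ℝ))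
lemma hx0 : 0 < x := Real.exp_pos _
lemma hx1 : x < 1 := Real.exp_lt_one_iff.mpr (by norm_num)
lemma hxa : (0.60653 : ℝ) < x := by
  have h : x ^ 2 = (Real.exp 1)⁻¹ := by rw [x, sq, ← Real.exp_add]; norm_num [Real.exp_neg]
  have he : Real.exp 1 < 2.7182818286 := Real.exp_one_lt_d9
  have hep : (0:ℝ) < Real.exp 1 := Real.exp_pos 1
  have h2 : (0.60653 : ℝ)^2 < x ^ 2 := by
    rw [h]
    have : (2.7182818286:ℝ)⁻¹ ≤ (Real.exp 1)⁻¹ := inv_anti₀ hep he.le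
    nlinarith
  nlinarith [hx0]
lemma hxb : x < 0.60654 := by
  have h : x ^ 2 = (Real.exp 1)⁻¹ := by rw [x, sq, ← Real.exp_add]; norm_num [Real.exp_neg]
  have he : (2.7182818283:ℝ) < Real.exp 1 := Real.exp_one_gt_d9
  have h2 : x ^ 2 < (0.60654 : ℝ)^2 := by
    rw [h]
    have : (Real.exp 1)⁻¹ ≤ (2.7182818283:ℝ)⁻¹ := inv_anti₀ (by norm_num) he.le
    nlinarith
  nlinarith [hx0]

def f (k : ℕ) : ℝ := (1 + (k : ℝ) ^ 2) * x ^ (k ^ 2) * (1 - x)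
def S (k : ℕ) : ℝ :=
  ∑ j ∈ Finset.Icc 1 (2 * (k + 1)),
    (1 + ((k : ℝ) + 1) ^ 2 + (j : ℝ)) * x ^ (j - 1) * (1 - x)
def g (k : ℕ) : ℝ := x ^ ((k + 1) ^ 2 + 1) * S k

lemma f_nonneg (k : ℕ) : 0 ≤ f k := by
  have h1 : (0:ℝ) ≤ 1 - x := by linarith [hx1]
  exact mul_nonneg (mul_nonneg (by positivity) (pow_nonneg hx0.le _)) h1
lemma S_nonneg (k : ℕ) : 0 ≤ S k := by
  apply Finset.sum_nonneg
  intro j hj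
  have h1 : (0:ℝ) ≤ 1 - x := by linarith [hx1]
  exact mul_nonneg (mul_nonneg (by positivity) (pow_nonneg hx0.le _)) h1
lemma g_nonneg (k : ℕ) : 0 ≤ g k :=
  mul_nonneg (pow_nonneg hx0.le _) (S_nonneg k)

lemma S_le (k : ℕ) : S k ≤ (2 * (k : ℝ) + 2) * ((k : ℝ) + 2) ^ 2 := by
  have h1x : (0:ℝ) ≤ 1 - x := by linarith [hx1]
  have hstep : ∀ j ∈ Finset.Icc 1 (2 * (k + 1)),
      (1 + ((k : ℝ) + 1) ^ 2 + (j : ℝ)) * x ^ (j - 1) * (1 - x) ≤ ((k : ℝ) + 2) ^ 2 := by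
    intro j hj
    rw [Finset.mem_Icc] at hj
    have hj' : j ≤ 2 * k + 2 := by omega
    have hjr : (j : ℝ) ≤ 2 * (k : ℝ) + 2 := by exact_mod_cast hj'
    have hxp : x ^ (j - 1) ≤ 1 := pow_le_one₀ hx0.le hx1.le
    have hA : (0:ℝ) ≤ 1 + ((k : ℝ) + 1) ^ 2 + (j : ℝ) := by positivity
    calc (1 + ((k : ℝ) + 1) ^ 2 + (j : ℝ)) * x ^ (j - 1) * (1 - x)
        ≤ (1 + ((k : ℝ) + 1) ^ 2 + (j : ℝ)) * 1 * 1 := by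
          apply mul_le_mul (mul_le_mul_of_nonneg_left hxp hA) (by linarith [hx0]) h1x (by positivity)
      _ = 1 + ((k : ℝ) + 1) ^ 2 + (j : ℝ) := by ring
      _ ≤ ((k : ℝ) + 2) ^ 2 := by nlinarith
  calc S k ≤ ∑ _j ∈ Finset.Icc 1 (2 * (k + 1)), ((k : ℝ) + 2) ^ 2 :=
        Finset.sum_le_sum hstep
    _ = (2 * (k : ℝ) + 2) * ((k : ℝ) + 2) ^ 2 := by
        rw [Finset.sum_const, Nat.card_Icc]
        push_cast
        ring

lemma summable_poly_geom (n : ℕ) : Summable (fun k : ℕ => (k : ℝ) ^ n * x ^ k) := by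
  apply summable_pow_mul_geometric_of_norm_lt_one
  rw [Real.norm_eq_abs, abs_of_pos hx0]
  exact hx1

lemma hsum_f : Summable f := by
  apply Summable.of_nonneg_of_le f_nonneg (f := fun k : ℕ => 1 * x ^ k + (k:ℝ)^2 * x ^ k)
  · intro k
    have hxk : x ^ (k ^ 2) ≤ x ^ k :=
      pow_le_pow_of_le_one hx0.le hx1.le (Nat.le_self_pow two_ne_zero k)
    have h1x : 1 - x ≤ 1 := by linarith [hx0]
    have h1x0 : (0:ℝ) ≤ 1 - x := by linarith [hx1]
    calc f k ≤ (1 + (k : ℝ) ^ 2) * x ^ k * 1 := by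
          apply mul_le_mul (mul_le_mul_of_nonneg_left hxk (by positivity)) h1x h1x0
            (mul_nonneg (by positivity) (pow_nonneg hx0.le _))
      _ = 1 * x ^ k + (k:ℝ)^2 * x ^ k := by ring
  · exact ((summable_poly_geom 0).congr (by intro k; simp)).mul_left 1 |>.add (summable_poly_geom 2)

lemma g_le (k : ℕ) : g k ≤ (2*(k:ℝ)^3 + 10*(k:ℝ)^2 + 16*(k:ℝ) + 8) * x ^ k := by
  have hxk : x ^ ((k + 1) ^ 2 + 1) ≤ x ^ k :=
    pow_le_pow_of_le_one hx0.le hx1.le (by nlinarith [sq_nonneg k])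
  calc g k ≤ x ^ k * ((2 * (k : ℝ) + 2) * ((k : ℝ) + 2) ^ 2) :=
        mul_le_mul hxk (S_le k) (S_nonneg k) (pow_nonneg hx0.le _)
    _ = (2*(k:ℝ)^3 + 10*(k:ℝ)^2 + 16*(k:ℝ) + 8) * x ^ k := by ring

lemma hsum_g : Summable g := by
  apply Summable.of_nonneg_of_le g_nonneg g_le
  have h := ((summable_poly_geom 3).mul_left 2).add <| ((summable_poly_geom 2).mul_left 10).add
    <| ((summable_poly_geom 1).mul_left 16).add ((summable_poly_geom 0).mul_left 8)
  apply h.congr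
  intro k
  simp [pow_one]
  ring

-- polynomial vs geometric bounds
lemma poly_bound1 (i : ℕ) : (1 + ((i:ℝ) + 7) ^ 2) ≤ 50 * 2 ^ i := by
  induction i with
  | zero => norm_num
  | succ n ih =>
    have h2 : (2:ℝ) ^ (n + 1) = 2 * 2 ^ n := by ring
    push_cast
    push_cast at ih
    rw [h2]
    nlinarith [ih, Nat.cast_nonneg (α := ℝ) n]

lemma poly_bound2 (i : ℕ) :
    (2 * ((i:ℝ) + 5) + 2) * (((i:ℝ) + 5) + 2) ^ 2 ≤ 588 * 2 ^ i := by
  induction i with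
  | zero => norm_num
  | succ n ih =>
    have h2 : (2:ℝ) ^ (n + 1) = 2 * 2 ^ n := by ring
    push_cast
    push_cast at ih
    rw [h2]
    nlinarith [ih, Nat.cast_nonneg (α := ℝ) n]

-- tail bounds
lemma tail_f : (∑' i : ℕ, f (i + 7)) ≤ (0.00000001 : ℝ) := by
  have h2x13 : 2 * x ^ 13 ≤ 1/2 := by
    nlinarith [pow_le_pow_left₀ hx0.le hxb.le 13, show ((0.60654:ℝ))^13 < 1/4 by norm_num]
  have key : ∀ i : ℕ, f (i + 7) ≤ (50 * x ^ 49) * (1/2 : ℝ) ^ i := by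
    intro i
    have hc : ((i + 7 : ℕ) : ℝ) = (i : ℝ) + 7 := by push_cast; ring
    have hp : (1 + ((i:ℝ) + 7) ^ 2) ≤ 50 * 2 ^ i := poly_bound1 i
    have h1 : x ^ ((i + 7) ^ 2) ≤ x ^ 49 * (x ^ 13) ^ i := by
      rw [← pow_mul, ← pow_add]
      exact pow_le_pow_of_le_one hx0.le hx1.le (by nlinarith [sq_nonneg i])
    have h2 : (0:ℝ) ≤ 1 - x := by linarith [hx1]
    have h3 : 1 - x ≤ 1 := by linarith [hx0]
    calc f (i + 7) = (1 + ((i:ℝ) + 7) ^ 2) * x ^ ((i + 7) ^ 2) * (1 - x) := by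
          rw [f, hc]
      _ ≤ (50 * 2 ^ i) * (x ^ 49 * (x ^ 13) ^ i) * 1 := by
          apply mul_le_mul (mul_le_mul hp h1 (pow_nonneg hx0.le _) (by positivity)) h3 h2
          exact mul_nonneg (by positivity)
            (mul_nonneg (pow_nonneg hx0.le _) (pow_nonneg (pow_nonneg hx0.le _) _))
      _ = (50 * x ^ 49) * (2 * x ^ 13) ^ i := by rw [mul_pow, ← pow_mul]; ring
      _ ≤ (50 * x ^ 49) * (1/2 : ℝ) ^ i := by
          apply mul_le_mul_of_nonneg_left
            (pow_le_pow_left₀ (mul_nonneg (by norm_num) (pow_nonneg hx0.le _)) h2x13 i)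
            (mul_nonneg (by norm_num) (pow_nonneg hx0.le _))
  have hs1 : Summable (fun i : ℕ => f (i + 7)) := (summable_nat_add_iff 7).mpr hsum_f
  have hs2 : Summable (fun i : ℕ => (50 * x ^ 49) * (1/2:ℝ) ^ i) :=
    (summable_geometric_of_lt_one (by norm_num) (by norm_num)).mul_left _
  calc (∑' i : ℕ, f (i + 7)) ≤ ∑' i : ℕ, (50 * x ^ 49) * (1/2:ℝ) ^ i :=
        Summable.tsum_le_tsum key hs1 hs2
    _ = (50 * x ^ 49) * (1 - 1/2)⁻¹ := by
        rw [tsum_mul_left, tsum_geometric_of_lt_one (by norm_num) (by norm_num)]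
    _ = 100 * x ^ 49 := by norm_num; ring
    _ ≤ 100 * (0.60654:ℝ) ^ 49 := by nlinarith [pow_le_pow_left₀ hx0.le hxb.le 49]
    _ ≤ 0.00000001 := by norm_num

lemma tail_g : (∑' i : ℕ, g (i + 5)) ≤ (0.000011 : ℝ) := by
  have h2x12 : 2 * x ^ 12 ≤ 1/2 := by
    nlinarith [pow_le_pow_left₀ hx0.le hxb.le 12, show ((0.60654:ℝ))^12 < 1/4 by norm_num]
  have key : ∀ i : ℕ, g (i + 5) ≤ (588 * x ^ 37) * (1/2 : ℝ) ^ i := by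
    intro i
    have hp : (2 * ((i:ℝ) + 5) + 2) * (((i:ℝ) + 5) + 2) ^ 2 ≤ 588 * 2 ^ i := poly_bound2 i
    have hS : S (i + 5) ≤ (2 * ((i:ℝ) + 5) + 2) * (((i:ℝ) + 5) + 2) ^ 2 := by
      have := S_le (i + 5)
      push_cast at this ⊢
      linarith
    have h1 : x ^ ((i + 5 + 1) ^ 2 + 1) ≤ x ^ 37 * (x ^ 12) ^ i := by
      rw [← pow_mul, ← pow_add]
      exact pow_le_pow_of_le_one hx0.le hx1.le (by nlinarith [sq_nonneg i])
    calc g (i + 5) = x ^ ((i + 5 + 1) ^ 2 + 1) * S (i + 5) := rfl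
      _ ≤ (x ^ 37 * (x ^ 12) ^ i) * ((2 * ((i:ℝ) + 5) + 2) * (((i:ℝ) + 5) + 2) ^ 2) := by
          apply mul_le_mul h1 hS (S_nonneg _)
            (mul_nonneg (pow_nonneg hx0.le _) (pow_nonneg (pow_nonneg hx0.le _) _))
      _ ≤ (x ^ 37 * (x ^ 12) ^ i) * (588 * 2 ^ i) := by
          apply mul_le_mul_of_nonneg_left hp
            (mul_nonneg (pow_nonneg hx0.le _) (pow_nonneg (pow_nonneg hx0.le _) _))
      _ = (588 * x ^ 37) * (2 * x ^ 12) ^ i := by rw [mul_pow]; ring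
      _ ≤ (588 * x ^ 37) * (1/2 : ℝ) ^ i := by
          apply mul_le_mul_of_nonneg_left
            (pow_le_pow_left₀ (mul_nonneg (by norm_num) (pow_nonneg hx0.le _)) h2x12 i)
            (mul_nonneg (by norm_num) (pow_nonneg hx0.le _))
  have hs1 : Summable (fun i : ℕ => g (i + 5)) := (summable_nat_add_iff 5).mpr hsum_g
  have hs2 : Summable (fun i : ℕ => (588 * x ^ 37) * (1/2:ℝ) ^ i) :=
    (summable_geometric_of_lt_one (by norm_num) (by norm_num)).mul_left _
  calc (∑' i : ℕ, g (i + 5)) ≤ ∑' i : ℕ, (588 * x ^ 37) * (1/2:ℝ) ^ i :=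
        Summable.tsum_le_tsum key hs1 hs2
    _ = (588 * x ^ 37) * (1 - 1/2)⁻¹ := by
        rw [tsum_mul_left, tsum_geometric_of_lt_one (by norm_num) (by norm_num)]
    _ = 1176 * x ^ 37 := by norm_num; ring
    _ ≤ 1176 * (0.60654:ℝ) ^ 37 := by nlinarith [pow_le_pow_left₀ hx0.le hxb.le 37]
    _ ≤ 0.000011 := by norm_num

-- finite part bounds
lemma term_lb {c : ℝ} (hc : 0 ≤ c) (n : ℕ) :
    c * (0.60653:ℝ) ^ n * (1 - 0.60654) ≤ c * x ^ n * (1 - x) := by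
  have h1 : (0.60653:ℝ) ^ n ≤ x ^ n := pow_le_pow_left₀ (by norm_num) hxa.le n
  have h2 : (1:ℝ) - 0.60654 ≤ 1 - x := by linarith [hxb]
  exact mul_le_mul (mul_le_mul_of_nonneg_left h1 hc) h2 (by norm_num)
    (mul_nonneg hc (pow_nonneg hx0.le _))

lemma term_ub {c : ℝ} (hc : 0 ≤ c) (n : ℕ) :
    c * x ^ n * (1 - x) ≤ c * (0.60654:ℝ) ^ n * (1 - 0.60653) := by
  have h1 : x ^ n ≤ (0.60654:ℝ) ^ n := pow_le_pow_left₀ hx0.le hxb.le n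
  have h2 : 1 - x ≤ (1:ℝ) - 0.60653 := by linarith [hxa]
  exact mul_le_mul (mul_le_mul_of_nonneg_left h1 hc) h2 (by linarith [hx1])
    (mul_nonneg hc (pow_nonneg (by norm_num) _))

lemma P1_lb : (∑ i ∈ Finset.range 7, (1 + (i:ℝ)^2) * (0.60653:ℝ) ^ (i^2) * (1 - 0.60654))
    ≤ ∑ i ∈ Finset.range 7, f i :=
  Finset.sum_le_sum fun i _ => term_lb (by positivity) _

lemma P1_ub : (∑ i ∈ Finset.range 7, f i)
    ≤ ∑ i ∈ Finset.range 7, (1 + (i:ℝ)^2) * (0.60654:ℝ) ^ (i^2) * (1 - 0.60653) :=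
  Finset.sum_le_sum fun i _ => term_ub (by positivity) _

def Sa (k : ℕ) : ℝ :=
  ∑ j ∈ Finset.Icc 1 (2 * (k + 1)),
    (1 + ((k : ℝ) + 1) ^ 2 + (j : ℝ)) * (0.60653 : ℝ) ^ (j - 1) * (1 - 0.60654)
def Sb (k : ℕ) : ℝ :=
  ∑ j ∈ Finset.Icc 1 (2 * (k + 1)),
    (1 + ((k : ℝ) + 1) ^ 2 + (j : ℝ)) * (0.60654 : ℝ) ^ (j - 1) * (1 - 0.60653)

lemma Sa_nonneg (k : ℕ) : 0 ≤ Sa k :=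
  Finset.sum_nonneg fun j _ => by positivity

lemma g_lb (k : ℕ) : (0.60653:ℝ) ^ ((k+1)^2+1) * Sa k ≤ g k :=
  mul_le_mul (pow_le_pow_left₀ (by norm_num) hxa.le _)
    (Finset.sum_le_sum fun j _ => term_lb (by positivity) _)
    (Sa_nonneg k) (pow_nonneg hx0.le _)

lemma g_ub (k : ℕ) : g k ≤ (0.60654:ℝ) ^ ((k+1)^2+1) * Sb k :=
  mul_le_mul (pow_le_pow_left₀ hx0.le hxb.le _)
    (Finset.sum_le_sum fun j _ => term_ub (by positivity) _)
    (S_nonneg k) (pow_nonneg (by norm_num) _)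

lemma P2_lb : (∑ k ∈ Finset.range 5, (0.60653:ℝ) ^ ((k+1)^2+1) * Sa k)
    ≤ ∑ k ∈ Finset.range 5, g k :=
  Finset.sum_le_sum fun k _ => g_lb k

lemma P2_ub : (∑ k ∈ Finset.range 5, g k)
    ≤ ∑ k ∈ Finset.range 5, (0.60654:ℝ) ^ ((k+1)^2+1) * Sb k :=
  Finset.sum_le_sum fun k _ => g_ub k

lemma sum_Icc_one (n : ℕ) (h : ℕ → ℝ) :
    ∑ j ∈ Finset.Icc 1 n, h j = ∑ i ∈ Finset.range n, h (1 + i) := by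
  rw [← Finset.Ico_add_one_right_eq_Icc, Finset.sum_Ico_eq_sum_range]
  simp

lemma num_lb : (2.541 : ℝ) <
    (∑ i ∈ Finset.range 7, (1 + (i:ℝ)^2) * (0.60653:ℝ) ^ (i^2) * (1 - 0.60654))
      + ∑ k ∈ Finset.range 5, (0.60653:ℝ) ^ ((k+1)^2+1) * Sa k := by
  simp only [Sa, sum_Icc_one, Finset.sum_range_succ, Finset.sum_range_zero]
  norm_num

lemma num_ub :
    (∑ i ∈ Finset.range 7, (1 + (i:ℝ)^2) * (0.60654:ℝ) ^ (i^2) * (1 - 0.60653))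
      + ∑ k ∈ Finset.range 5, (0.60654:ℝ) ^ ((k+1)^2+1) * Sb k < (2.5417 : ℝ) := by
  simp only [Sb, sum_Icc_one, Finset.sum_range_succ, Finset.sum_range_zero]
  norm_num

lemma main_bounds : (2.541 : ℝ) < (∑' k : ℕ, f k) + (∑' k : ℕ, g k) ∧
    (∑' k : ℕ, f k) + (∑' k : ℕ, g k) < (2.542 : ℝ) := by
  have e1 : (∑ i ∈ Finset.range 7, f i) + (∑' i : ℕ, f (i + 7)) = ∑' k : ℕ, f k :=
    Summable.sum_add_tsum_nat_add 7 hsum_f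
  have e2 : (∑ i ∈ Finset.range 5, g i) + (∑' i : ℕ, g (i + 5)) = ∑' k : ℕ, g k :=
    Summable.sum_add_tsum_nat_add 5 hsum_g
  have t1 : 0 ≤ ∑' i : ℕ, f (i + 7) := tsum_nonneg fun i => f_nonneg _
  have t2 : 0 ≤ ∑' i : ℕ, g (i + 5) := tsum_nonneg fun i => g_nonneg _
  constructor
  · linarith [num_lb, P1_lb, P2_lb, t1, t2]
  · linarith [num_ub, P1_ub, P2_ub, tail_f, tail_g]

end IEB
end

/-- With `p₁ = e^{−1/2}` and `p₀ = 1 − p₁`, the quantity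
`B = ∑_{k=0}^{∞} (1 + k²) p₁^{k²} p₀
   + ∑_{k=2}^{∞} p₁^{(k−1)² + 1} (∑_{j=1}^{2(k−1)} (1 + (k−1)² + j) p₁^{j−1} p₀)`
satisfies `2.541 < B < 2.542`.  (The second series is reindexed by `k ↦ k + 2`.) -/
theorem improved_expected_bernoulli_per_pass :
    let p₁ : ℝ := Real.exp (-(1 / 2 : ℝ))
    let p₀ : ℝ := 1 - p₁
    let B : ℝ :=
      (∑' k : ℕ, (1 + (k : ℝ) ^ 2) * p₁ ^ (k ^ 2) * p₀) +
        ∑' k : ℕ, p₁ ^ ((k + 1) ^ 2 + 1) *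
          ∑ j ∈ Finset.Icc 1 (2 * (k + 1)),
            (1 + ((k : ℝ) + 1) ^ 2 + (j : ℝ)) * p₁ ^ (j - 1) * p₀
    2.541 < B ∧ B < 2.542 := by
  intro p₁ p₀ B
  have hB : B = (∑' k : ℕ, IEB.f k) + (∑' k : ℕ, IEB.g k) := rfl
  rw [hB]
  exact IEB.main_bounds
end

section
/- Let p₁ = e^{−1/2} and p₀ = 1 − p₁, let B := ∑_{k=0}^{∞} (1 + k²) p₁^{k²} p₀ + ∑_{k=2}^{∞} p₁^{(k−1)² + 1} ( ∑_{j=1}^{2(k−1)} (1 + (k−1)² + j) p₁^{j−1} p₀ ), and let C := ∑_{k=0}^{∞} p₁^{k²} p₀. Then 3.683 < B / C < 3.685. -/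
open Finset

private lemma geom_tail_le {f : ℕ → ℝ} {A r : ℝ} (hA : 0 ≤ A) (hr0 : 0 ≤ r) (hr1 : r < 1)
    (hf0 : ∀ k, 0 ≤ f k) (hfle : ∀ k, f k ≤ A * r ^ k) :
    Summable f ∧ (∑' k, f k) ≤ A * (1 - r)⁻¹ := by
  have hg : Summable (fun k : ℕ => A * r ^ k) :=
    (summable_geometric_of_lt_one hr0 hr1).mul_left A
  have hf : Summable f := Summable.of_nonneg_of_le hf0 hfle hg
  refine ⟨hf, ?_⟩
  calc (∑' k, f k) ≤ ∑' k : ℕ, A * r ^ k := Summable.tsum_le_tsum hfle hf hg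
  _ = A * (1 - r)⁻¹ := by rw [tsum_mul_left, tsum_geometric_of_lt_one hr0 hr1]

private lemma aux_poly1 (k : ℕ) : 1 + ((k : ℝ) + 5) ^ 2 ≤ 26 * 2 ^ k := by
  induction k with
  | zero => norm_num
  | succ n ih =>
    have hn : (0:ℝ) ≤ (n:ℝ) := Nat.cast_nonneg n
    push_cast [pow_succ]
    push_cast at ih
    nlinarith [ih, hn]

private lemma aux_poly2 (k : ℕ) : 2 * ((k : ℝ) + 6) * ((k : ℝ) + 7) ^ 2 ≤ 588 * 2 ^ k := by
  induction k with
  | zero => norm_num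
  | succ n ih =>
    have hn : (0:ℝ) ≤ (n:ℝ) := Nat.cast_nonneg n
    push_cast [pow_succ]
    push_cast at ih
    nlinarith [ih, hn]

set_option maxHeartbeats 4000000 in
/-- Proposition 3: with `p₁ = e^{−1/2}`, `p₀ = 1 − p₁`,
`B = ∑_{k=0}^{∞} (1 + k²) p₁^{k²} p₀
   + ∑_{k=2}^{∞} p₁^{(k−1)² + 1} (∑_{j=1}^{2(k−1)} (1 + (k−1)² + j) p₁^{j−1} p₀)`
(the second series reindexed by `k ↦ k + 2`) and `C = ∑_{k=0}^{∞} p₁^{k²} p₀`,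
we have `3.683 < B / C < 3.685`. -/
theorem improved_expected_bernoulli_total :
    let p₁ : ℝ := Real.exp (-(1 / 2 : ℝ))
    let p₀ : ℝ := 1 - p₁
    let B : ℝ :=
      (∑' k : ℕ, (1 + (k : ℝ) ^ 2) * p₁ ^ (k ^ 2) * p₀) +
        ∑' k : ℕ, p₁ ^ ((k + 1) ^ 2 + 1) *
          ∑ j ∈ Finset.Icc 1 (2 * (k + 1)),
            (1 + ((k : ℝ) + 1) ^ 2 + (j : ℝ)) * p₁ ^ (j - 1) * p₀
    let C : ℝ := ∑' k : ℕ, p₁ ^ (k ^ 2) * p₀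
    3.683 < B / C ∧ B / C < 3.685 := by
  intro p₁ p₀ B C
  have hp₁ : p₁ = Real.exp (-(1 / 2 : ℝ)) := rfl
  have hp₀ : p₀ = 1 - p₁ := rfl
  have hq0 : (0:ℝ) < p₁ := hp₁ ▸ Real.exp_pos _
  have hq1 : p₁ < 1 := by rw [hp₁, Real.exp_lt_one_iff]; norm_num
  have hmul : p₁ ^ 2 * Real.exp 1 = 1 := by
    rw [hp₁, sq, ← Real.exp_add, ← Real.exp_add]; norm_num
  have hqh : p₁ < 0.60654 := by
    apply lt_of_pow_lt_pow_left₀ 2 (by norm_num)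
    nlinarith only [Real.exp_one_gt_d9, hmul, sq_nonneg p₁]
  have hql : (0.6065:ℝ) < p₁ := by
    apply lt_of_pow_lt_pow_left₀ 2 hq0.le
    nlinarith only [Real.exp_one_lt_d9, hmul, sq_nonneg p₁]
  have hp0 : (0:ℝ) < p₀ := by rw [hp₀]; linarith
  have pl2 : (0.36784225:ℝ) ≤ p₁^2 := le_trans (by norm_num) (pow_le_pow_left₀ (by norm_num) hql.le 2)
  have ph2 : p₁^2 ≤ (0.367890771601:ℝ) := le_trans (pow_le_pow_left₀ hq0.le hqh.le 2) (by norm_num)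
  have pl3 : (0.223096324625:ℝ) ≤ p₁^3 := le_trans (by norm_num) (pow_le_pow_left₀ (by norm_num) hql.le 3)
  have ph3 : p₁^3 ≤ (0.223140468607:ℝ) := le_trans (pow_le_pow_left₀ hq0.le hqh.le 3) (by norm_num)
  have pl4 : (0.135307920885:ℝ) ≤ p₁^4 := le_trans (by norm_num) (pow_le_pow_left₀ (by norm_num) hql.le 4)
  have ph4 : p₁^4 ≤ (0.135343619829:ℝ) := le_trans (pow_le_pow_left₀ hq0.le hqh.le 4) (by norm_num)
  have pl5 : (0.082064254016:ℝ) ≤ p₁^5 := le_trans (by norm_num) (pow_le_pow_left₀ (by norm_num) hql.le 5)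
  have ph5 : p₁^5 ≤ (0.082091319171:ℝ) := le_trans (pow_le_pow_left₀ hq0.le hqh.le 5) (by norm_num)
  have pl6 : (0.049771970061:ℝ) ≤ p₁^6 := le_trans (by norm_num) (pow_le_pow_left₀ (by norm_num) hql.le 6)
  have ph6 : p₁^6 ≤ (0.04979166873:ℝ) := le_trans (pow_le_pow_left₀ hq0.le hqh.le 6) (by norm_num)
  have pl7 : (0.030186699842:ℝ) ≤ p₁^7 := le_trans (by norm_num) (pow_le_pow_left₀ (by norm_num) hql.le 7)
  have ph7 : p₁^7 ≤ (0.030200638752:ℝ) := le_trans (pow_le_pow_left₀ hq0.le hqh.le 7) (by norm_num)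
  have pl8 : (0.018308233454:ℝ) ≤ p₁^8 := le_trans (by norm_num) (pow_le_pow_left₀ (by norm_num) hql.le 8)
  have ph8 : p₁^8 ≤ (0.018317895429:ℝ) := le_trans (pow_le_pow_left₀ hq0.le hqh.le 8) (by norm_num)
  have pl9 : (0.011103943589:ℝ) ≤ p₁^9 := le_trans (by norm_num) (pow_le_pow_left₀ (by norm_num) hql.le 9)
  have ph9 : p₁^9 ≤ (0.011110536294:ℝ) := le_trans (pow_le_pow_left₀ hq0.le hqh.le 9) (by norm_num)
  have pl10 : (0.006734541787:ℝ) ≤ p₁^10 := le_trans (by norm_num) (pow_le_pow_left₀ (by norm_num) hql.le 10)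
  have ph10 : p₁^10 ≤ (0.006738984684:ℝ) := le_trans (pow_le_pow_left₀ hq0.le hqh.le 10) (by norm_num)
  have pl11 : (0.004084499594:ℝ) ≤ p₁^11 := le_trans (by norm_num) (pow_le_pow_left₀ (by norm_num) hql.le 11)
  have ph11 : p₁^11 ≤ (0.00408746377:ℝ) := le_trans (pow_le_pow_left₀ hq0.le hqh.le 11) (by norm_num)
  have pl12 : (0.002477249003:ℝ) ≤ p₁^12 := le_trans (by norm_num) (pow_le_pow_left₀ (by norm_num) hql.le 12)
  have ph12 : p₁^12 ≤ (0.002479210275:ℝ) := le_trans (pow_le_pow_left₀ hq0.le hqh.le 12) (by norm_num)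
  have pl13 : (0.00150245152:ℝ) ≤ p₁^13 := le_trans (by norm_num) (pow_le_pow_left₀ (by norm_num) hql.le 13)
  have ph13 : p₁^13 ≤ (0.001503740201:ℝ) := le_trans (pow_le_pow_left₀ hq0.le hqh.le 13) (by norm_num)
  have pl14 : (0.000911236847:ℝ) ≤ p₁^14 := le_trans (by norm_num) (pow_le_pow_left₀ (by norm_num) hql.le 14)
  have ph14 : p₁^14 ≤ (0.000912078581:ℝ) := le_trans (pow_le_pow_left₀ hq0.le hqh.le 14) (by norm_num)
  have pl15 : (0.000552665147:ℝ) ≤ p₁^15 := le_trans (by norm_num) (pow_le_pow_left₀ (by norm_num) hql.le 15)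
  have ph15 : p₁^15 ≤ (0.000553212143:ℝ) := le_trans (pow_le_pow_left₀ hq0.le hqh.le 15) (by norm_num)
  have pl16 : (0.000335191412:ℝ) ≤ p₁^16 := le_trans (by norm_num) (pow_le_pow_left₀ (by norm_num) hql.le 16)
  have ph16 : p₁^16 ≤ (0.000335545293:ℝ) := le_trans (pow_le_pow_left₀ hq0.le hqh.le 16) (by norm_num)
  have pl17 : (0.000203293591:ℝ) ≤ p₁^17 := le_trans (by norm_num) (pow_le_pow_left₀ (by norm_num) hql.le 17)
  have ph17 : p₁^17 ≤ (0.000203521642:ℝ) := le_trans (pow_le_pow_left₀ hq0.le hqh.le 17) (by norm_num)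
  have pl18 : (0.000123297563:ℝ) ≤ p₁^18 := le_trans (by norm_num) (pow_le_pow_left₀ (by norm_num) hql.le 18)
  have ph18 : p₁^18 ≤ (0.000123444017:ℝ) := le_trans (pow_le_pow_left₀ hq0.le hqh.le 18) (by norm_num)
  have pl19 : (0.000074779972:ℝ) ≤ p₁^19 := le_trans (by norm_num) (pow_le_pow_left₀ (by norm_num) hql.le 19)
  have ph19 : p₁^19 ≤ (0.000074873734:ℝ) := le_trans (pow_le_pow_left₀ hq0.le hqh.le 19) (by norm_num)
  have pl20 : (0.000045354053:ℝ) ≤ p₁^20 := le_trans (by norm_num) (pow_le_pow_left₀ (by norm_num) hql.le 20)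
  have ph20 : p₁^20 ≤ (0.000045413915:ℝ) := le_trans (pow_le_pow_left₀ hq0.le hqh.le 20) (by norm_num)
  have pl21 : (0.000027507233:ℝ) ≤ p₁^21 := le_trans (by norm_num) (pow_le_pow_left₀ (by norm_num) hql.le 21)
  have ph21 : p₁^21 ≤ (0.000027545356:ℝ) := le_trans (pow_le_pow_left₀ hq0.le hqh.le 21) (by norm_num)
  have pl22 : (0.000016683136:ℝ) ≤ p₁^22 := le_trans (by norm_num) (pow_le_pow_left₀ (by norm_num) hql.le 22)
  have ph22 : p₁^22 ≤ (0.000016707361:ℝ) := le_trans (pow_le_pow_left₀ hq0.le hqh.le 22) (by norm_num)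
  have pl23 : (0.000010118322:ℝ) ≤ p₁^23 := le_trans (by norm_num) (pow_le_pow_left₀ (by norm_num) hql.le 23)
  have ph23 : p₁^23 ≤ (0.000010133683:ℝ) := le_trans (pow_le_pow_left₀ hq0.le hqh.le 23) (by norm_num)
  have pl24 : (0.000006136762:ℝ) ≤ p₁^24 := le_trans (by norm_num) (pow_le_pow_left₀ (by norm_num) hql.le 24)
  have ph24 : p₁^24 ≤ (0.000006146484:ℝ) := le_trans (pow_le_pow_left₀ hq0.le hqh.le 24) (by norm_num)
  have pl25 : (0.000003721946:ℝ) ≤ p₁^25 := le_trans (by norm_num) (pow_le_pow_left₀ (by norm_num) hql.le 25)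
  have ph25 : p₁^25 ≤ (0.000003728089:ℝ) := le_trans (pow_le_pow_left₀ hq0.le hqh.le 25) (by norm_num)
  have pl26 : (0.00000225736:ℝ) ≤ p₁^26 := le_trans (by norm_num) (pow_le_pow_left₀ (by norm_num) hql.le 26)
  have ph26 : p₁^26 ≤ (0.000002261235:ℝ) := le_trans (pow_le_pow_left₀ hq0.le hqh.le 26) (by norm_num)
  have pl27 : (0.000001369089:ℝ) ≤ p₁^27 := le_trans (by norm_num) (pow_le_pow_left₀ (by norm_num) hql.le 27)
  have ph27 : p₁^27 ≤ (0.00000137153:ℝ) := le_trans (pow_le_pow_left₀ hq0.le hqh.le 27) (by norm_num)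
  have pl28 : (0.000000830352:ℝ) ≤ p₁^28 := le_trans (by norm_num) (pow_le_pow_left₀ (by norm_num) hql.le 28)
  have ph28 : p₁^28 ≤ (0.000000831888:ℝ) := le_trans (pow_le_pow_left₀ hq0.le hqh.le 28) (by norm_num)
  have pl29 : (0.000000503608:ℝ) ≤ p₁^29 := le_trans (by norm_num) (pow_le_pow_left₀ (by norm_num) hql.le 29)
  have ph29 : p₁^29 ≤ (0.000000504573:ℝ) := le_trans (pow_le_pow_left₀ hq0.le hqh.le 29) (by norm_num)
  have pl30 : (0.000000305438:ℝ) ≤ p₁^30 := le_trans (by norm_num) (pow_le_pow_left₀ (by norm_num) hql.le 30)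
  have ph30 : p₁^30 ≤ (0.000000306044:ℝ) := le_trans (pow_le_pow_left₀ hq0.le hqh.le 30) (by norm_num)
  have pl31 : (0.000000185248:ℝ) ≤ p₁^31 := le_trans (by norm_num) (pow_le_pow_left₀ (by norm_num) hql.le 31)
  have ph31 : p₁^31 ≤ (0.000000185628:ℝ) := le_trans (pow_le_pow_left₀ hq0.le hqh.le 31) (by norm_num)
  have pl32 : (0.000000112353:ℝ) ≤ p₁^32 := le_trans (by norm_num) (pow_le_pow_left₀ (by norm_num) hql.le 32)
  have ph32 : p₁^32 ≤ (0.000000112591:ℝ) := le_trans (pow_le_pow_left₀ hq0.le hqh.le 32) (by norm_num)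
  have pl33 : (0.000000068142:ℝ) ≤ p₁^33 := le_trans (by norm_num) (pow_le_pow_left₀ (by norm_num) hql.le 33)
  have ph33 : p₁^33 ≤ (0.000000068291:ℝ) := le_trans (pow_le_pow_left₀ hq0.le hqh.le 33) (by norm_num)
  have pl34 : (0.000000041328:ℝ) ≤ p₁^34 := le_trans (by norm_num) (pow_le_pow_left₀ (by norm_num) hql.le 34)
  have ph34 : p₁^34 ≤ (0.000000041422:ℝ) := le_trans (pow_le_pow_left₀ hq0.le hqh.le 34) (by norm_num)
  have pl35 : (0.000000025065:ℝ) ≤ p₁^35 := le_trans (by norm_num) (pow_le_pow_left₀ (by norm_num) hql.le 35)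
  have ph35 : p₁^35 ≤ (0.000000025124:ℝ) := le_trans (pow_le_pow_left₀ hq0.le hqh.le 35) (by norm_num)

  -- ## Series 1 : S1 = ∑' k, (1+k²) p₁^(k²)
  have h1tail0 : ∀ k : ℕ, (0:ℝ) ≤ (1 + ((k+5 : ℕ) : ℝ) ^ 2) * p₁ ^ ((k+5) ^ 2) := by
    intro k; positivity
  have h1tail : ∀ k : ℕ, (1 + ((k+5 : ℕ) : ℝ) ^ 2) * p₁ ^ ((k+5) ^ 2)
      ≤ (26 * (0.60654:ℝ)^25) * (2 * (0.60654:ℝ)^10) ^ k := by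
    intro k
    have he : p₁ ^ ((k+5)^2) ≤ p₁ ^ (10*k+25) := by
      apply pow_le_pow_of_le_one hq0.le hq1.le
      have h : (k+5)^2 = k^2 + (10*k+25) := by ring
      rw [h]; exact Nat.le_add_left _ _
    have he2 : p₁ ^ (10*k+25) ≤ (0.60654:ℝ) ^ (10*k+25) :=
      pow_le_pow_left₀ hq0.le hqh.le _
    have hc : ((k+5:ℕ):ℝ) = (k:ℝ) + 5 := by push_cast; ring
    have hpoly := aux_poly1 k
    calc (1 + ((k+5 : ℕ) : ℝ) ^ 2) * p₁ ^ ((k+5) ^ 2)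
        ≤ (26 * 2^k) * (0.60654:ℝ) ^ (10*k+25) := by
          rw [hc]
          apply mul_le_mul hpoly (he.trans he2) (by positivity) (by positivity)
      _ = (26 * (0.60654:ℝ)^25) * (2 * (0.60654:ℝ)^10) ^ k := by
          rw [pow_add, pow_mul, mul_pow]; ring
  obtain ⟨h1sum5, h1tsum5⟩ := geom_tail_le (by norm_num) (by norm_num) (by norm_num) h1tail0 h1tail
  have h1tailpos : (0:ℝ) ≤ ∑' k : ℕ, (1 + ((k+5 : ℕ) : ℝ) ^ 2) * p₁ ^ ((k+5) ^ 2) :=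
    tsum_nonneg h1tail0
  have h1tailnum : (∑' k : ℕ, (1 + ((k+5 : ℕ) : ℝ) ^ 2) * p₁ ^ ((k+5) ^ 2)) ≤ 0.000099 :=
    h1tsum5.trans (by norm_num)
  have h1sum : Summable (fun k : ℕ => (1 + (k : ℝ) ^ 2) * p₁ ^ (k ^ 2)) :=
    (summable_nat_add_iff 5).mp h1sum5
  have h1split : (∑ k ∈ range 5, (1 + (k : ℝ) ^ 2) * p₁ ^ (k ^ 2))
      + (∑' k : ℕ, (1 + ((k+5 : ℕ) : ℝ) ^ 2) * p₁ ^ ((k+5) ^ 2))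
      = ∑' k : ℕ, (1 + (k : ℝ) ^ 2) * p₁ ^ (k ^ 2) :=
    Summable.sum_add_tsum_nat_add 5 h1sum
  have h1p_lo : (3.00627:ℝ) ≤ ∑ k ∈ range 5, (1 + (k : ℝ) ^ 2) * p₁ ^ (k ^ 2) := by
    simp only [Finset.sum_range_succ, Finset.sum_range_zero]
    push_cast
    ring_nf
    linarith only [pl4, pl9, pl16, hql]
  have h1p_hi : (∑ k ∈ range 5, (1 + (k : ℝ) ^ 2) * p₁ ^ (k ^ 2)) ≤ 3.00661 := by
    simp only [Finset.sum_range_succ, Finset.sum_range_zero]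
    push_cast
    ring_nf
    linarith only [ph4, ph9, ph16, hqh]
  have hS1_lo : (3.00627:ℝ) ≤ ∑' k : ℕ, (1 + (k : ℝ) ^ 2) * p₁ ^ (k ^ 2) := by
    rw [← h1split]; linarith
  have hS1_hi : (∑' k : ℕ, (1 + (k : ℝ) ^ 2) * p₁ ^ (k ^ 2)) ≤ 3.00661 + 0.000099 := by
    rw [← h1split]; linarith

  -- ## Series 3 : T = ∑' k, p₁^(k²)
  have h3tail0 : ∀ k : ℕ, (0:ℝ) ≤ p₁ ^ ((k+5) ^ 2) := by intro k; positivity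
  have h3tail : ∀ k : ℕ, p₁ ^ ((k+5) ^ 2) ≤ ((0.60654:ℝ)^25) * ((0.60654:ℝ)^10) ^ k := by
    intro k
    have he : p₁ ^ ((k+5)^2) ≤ p₁ ^ (10*k+25) := by
      apply pow_le_pow_of_le_one hq0.le hq1.le
      have h : (k+5)^2 = k^2 + (10*k+25) := by ring
      rw [h]; exact Nat.le_add_left _ _
    have he2 : p₁ ^ (10*k+25) ≤ (0.60654:ℝ) ^ (10*k+25) :=
      pow_le_pow_left₀ hq0.le hqh.le _
    calc p₁ ^ ((k+5) ^ 2) ≤ (0.60654:ℝ) ^ (10*k+25) := he.trans he2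
      _ = ((0.60654:ℝ)^25) * ((0.60654:ℝ)^10) ^ k := by rw [pow_add, pow_mul]; ring
  obtain ⟨h3sum5, h3tsum5⟩ := geom_tail_le (by norm_num) (by norm_num) (by norm_num) h3tail0 h3tail
  have h3tailpos : (0:ℝ) ≤ ∑' k : ℕ, p₁ ^ ((k+5) ^ 2) := tsum_nonneg h3tail0
  have h3tailnum : (∑' k : ℕ, p₁ ^ ((k+5) ^ 2)) ≤ 0.0000038 := h3tsum5.trans (by norm_num)
  have h3sum : Summable (fun k : ℕ => p₁ ^ (k ^ 2)) := (summable_nat_add_iff 5).mp h3sum5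
  have h3split : (∑ k ∈ range 5, p₁ ^ (k ^ 2)) + (∑' k : ℕ, p₁ ^ ((k+5) ^ 2))
      = ∑' k : ℕ, p₁ ^ (k ^ 2) := Summable.sum_add_tsum_nat_add 5 h3sum
  have h3p_lo : (1.75324:ℝ) ≤ ∑ k ∈ range 5, p₁ ^ (k ^ 2) := by
    simp only [Finset.sum_range_succ, Finset.sum_range_zero]
    norm_num
    linarith only [pl4, pl9, pl16, hql]
  have h3p_hi : (∑ k ∈ range 5, p₁ ^ (k ^ 2)) ≤ 1.75333 := by
    simp only [Finset.sum_range_succ, Finset.sum_range_zero]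
    norm_num
    linarith only [ph4, ph9, ph16, hqh]
  have hT_lo : (1.75324:ℝ) ≤ ∑' k : ℕ, p₁ ^ (k ^ 2) := by rw [← h3split]; linarith
  have hT_hi : (∑' k : ℕ, p₁ ^ (k ^ 2)) ≤ 1.75333 + 0.0000038 := by rw [← h3split]; linarith

  -- ## Series 2
  have hinner0 : ∀ m : ℕ, (0:ℝ) ≤ ∑ j ∈ Finset.Icc 1 (2*(m+1)),
      (1 + ((m : ℝ) + 1) ^ 2 + (j : ℝ)) * p₁ ^ (j - 1) := by
    intro m
    apply Finset.sum_nonneg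
    intro j _
    positivity
  have hinner : ∀ m : ℕ, (∑ j ∈ Finset.Icc 1 (2*(m+1)),
      (1 + ((m : ℝ) + 1) ^ 2 + (j : ℝ)) * p₁ ^ (j - 1)) ≤ 2*((m:ℝ)+1)*((m:ℝ)+2)^2 := by
    intro m
    have hbd : ∀ j ∈ Finset.Icc 1 (2*(m+1)),
        (1 + ((m : ℝ) + 1) ^ 2 + (j : ℝ)) * p₁ ^ (j - 1) ≤ ((m:ℝ)+2)^2 := by
      intro j hj
      rw [Finset.mem_Icc] at hj
      have hjle : (j:ℝ) ≤ 2*((m:ℝ)+1) := by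
        have := hj.2
        push_cast
        exact_mod_cast Nat.cast_le.mpr this
      have h1 : (1 + ((m : ℝ) + 1) ^ 2 + (j : ℝ)) ≤ ((m:ℝ)+2)^2 := by linarith only [hjle]
      have h2 : p₁ ^ (j-1) ≤ 1 := pow_le_one₀ hq0.le hq1.le
      calc (1 + ((m : ℝ) + 1) ^ 2 + (j : ℝ)) * p₁ ^ (j - 1)
          ≤ ((m:ℝ)+2)^2 * 1 := by
            apply mul_le_mul h1 h2 (by positivity) (by positivity)
        _ = ((m:ℝ)+2)^2 := mul_one _
    calc (∑ j ∈ Finset.Icc 1 (2*(m+1)), (1 + ((m : ℝ) + 1) ^ 2 + (j : ℝ)) * p₁ ^ (j - 1))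
        ≤ (Finset.Icc 1 (2*(m+1))).card • (((m:ℝ)+2)^2) := Finset.sum_le_card_nsmul _ _ _ hbd
      _ = 2*((m:ℝ)+1)*((m:ℝ)+2)^2 := by
          rw [Nat.card_Icc, nsmul_eq_mul]
          push_cast
          ring
  have h2tail0 : ∀ k : ℕ, (0:ℝ) ≤ p₁ ^ (((k+5) + 1) ^ 2 + 1) *
      ∑ j ∈ Finset.Icc 1 (2*((k+5)+1)), (1 + (((k+5 : ℕ) : ℝ) + 1) ^ 2 + (j : ℝ)) * p₁ ^ (j - 1) := by
    intro k
    have h := hinner0 (k+5)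
    push_cast at h ⊢
    positivity
  have h2tail : ∀ k : ℕ, p₁ ^ (((k+5) + 1) ^ 2 + 1) *
      (∑ j ∈ Finset.Icc 1 (2*((k+5)+1)), (1 + (((k+5 : ℕ) : ℝ) + 1) ^ 2 + (j : ℝ)) * p₁ ^ (j - 1))
      ≤ (588 * (0.60654:ℝ)^36) * (2 * (0.60654:ℝ)^12) ^ k := by
    intro k
    have he : p₁ ^ (((k+5)+1)^2+1) ≤ p₁ ^ (12*k+36) := by
      apply pow_le_pow_of_le_one hq0.le hq1.le
      have h : ((k+5)+1)^2+1 = (k^2+1) + (12*k+36) := by ring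
      rw [h]; exact Nat.le_add_left _ _
    have he2 : p₁ ^ (12*k+36) ≤ (0.60654:ℝ) ^ (12*k+36) :=
      pow_le_pow_left₀ hq0.le hqh.le _
    have hi := hinner (k+5)
    have hi0 := hinner0 (k+5)
    have hpoly := aux_poly2 k
    have hc : ((k+5:ℕ):ℝ) = (k:ℝ) + 5 := by push_cast; ring
    calc p₁ ^ (((k+5) + 1) ^ 2 + 1) *
        (∑ j ∈ Finset.Icc 1 (2*((k+5)+1)), (1 + (((k+5 : ℕ) : ℝ) + 1) ^ 2 + (j : ℝ)) * p₁ ^ (j - 1))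
        ≤ (0.60654:ℝ) ^ (12*k+36) * (2*(((k+5 : ℕ):ℝ)+1)*(((k+5 : ℕ):ℝ)+2)^2) := by
          apply mul_le_mul (he.trans he2) hi hi0 (by positivity)
      _ = (0.60654:ℝ) ^ (12*k+36) * (2*((k:ℝ)+6)*((k:ℝ)+7)^2) := by
          rw [hc]; ring
      _ ≤ (0.60654:ℝ) ^ (12*k+36) * (588 * 2^k) := by
          apply mul_le_mul_of_nonneg_left hpoly (by positivity)
      _ = (588 * (0.60654:ℝ)^36) * (2 * (0.60654:ℝ)^12) ^ k := by
          rw [pow_add, pow_mul, mul_pow]; ring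
  obtain ⟨h2sum5, h2tsum5⟩ := geom_tail_le (by norm_num) (by norm_num) (by norm_num) h2tail0 h2tail
  have h2tailpos : (0:ℝ) ≤ ∑' k : ℕ, p₁ ^ (((k+5) + 1) ^ 2 + 1) *
      ∑ j ∈ Finset.Icc 1 (2*((k+5)+1)), (1 + (((k+5 : ℕ) : ℝ) + 1) ^ 2 + (j : ℝ)) * p₁ ^ (j - 1) :=
    tsum_nonneg h2tail0
  have h2tailnum : (∑' k : ℕ, p₁ ^ (((k+5) + 1) ^ 2 + 1) *
      ∑ j ∈ Finset.Icc 1 (2*((k+5)+1)), (1 + (((k+5 : ℕ) : ℝ) + 1) ^ 2 + (j : ℝ)) * p₁ ^ (j - 1))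
      ≤ 0.0000091 := h2tsum5.trans (by norm_num)
  have h2sum : Summable (fun k : ℕ => p₁ ^ ((k + 1) ^ 2 + 1) *
      ∑ j ∈ Finset.Icc 1 (2*(k+1)), (1 + ((k : ℝ) + 1) ^ 2 + (j : ℝ)) * p₁ ^ (j - 1)) :=
    (summable_nat_add_iff 5).mp h2sum5
  have h2split : (∑ k ∈ range 5, p₁ ^ ((k + 1) ^ 2 + 1) *
        ∑ j ∈ Finset.Icc 1 (2*(k+1)), (1 + ((k : ℝ) + 1) ^ 2 + (j : ℝ)) * p₁ ^ (j - 1))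
      + (∑' k : ℕ, p₁ ^ (((k+5) + 1) ^ 2 + 1) *
        ∑ j ∈ Finset.Icc 1 (2*((k+5)+1)), (1 + (((k+5 : ℕ) : ℝ) + 1) ^ 2 + (j : ℝ)) * p₁ ^ (j - 1))
      = ∑' k : ℕ, p₁ ^ ((k + 1) ^ 2 + 1) *
        ∑ j ∈ Finset.Icc 1 (2*(k+1)), (1 + ((k : ℝ) + 1) ^ 2 + (j : ℝ)) * p₁ ^ (j - 1) :=
    Summable.sum_add_tsum_nat_add 5 h2sum
  have h2p_lo : (3.45181:ℝ) ≤ ∑ k ∈ range 5, p₁ ^ ((k + 1) ^ 2 + 1) *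
      ∑ j ∈ Finset.Icc 1 (2*(k+1)), (1 + ((k : ℝ) + 1) ^ 2 + (j : ℝ)) * p₁ ^ (j - 1) := by
    norm_num [Finset.sum_range_succ, Finset.sum_range_zero,
      show Finset.Icc (1:ℕ) (2*(0+1)) = {1,2} from rfl,
      show Finset.Icc (1:ℕ) (2*(1+1)) = {1,2,3,4} from rfl,
      show Finset.Icc (1:ℕ) (2*(2+1)) = {1,2,3,4,5,6} from rfl,
      show Finset.Icc (1:ℕ) (2*(3+1)) = {1,2,3,4,5,6,7,8} from rfl,
      show Finset.Icc (1:ℕ) (2*(4+1)) = {1,2,3,4,5,6,7,8,9,10} from rfl,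
      Finset.sum_insert, Finset.mem_insert, Finset.sum_singleton]
    push_cast
    ring_nf
    linarith only [pl2, pl3, pl5, pl6, pl7, pl8, pl10, pl11, pl12, pl13, pl14, pl15,
      pl17, pl18, pl19, pl20, pl21, pl22, pl23, pl24, pl26, pl27, pl28, pl29, pl30,
      pl31, pl32, pl33, pl34, pl35, hql]
  have h2p_hi : (∑ k ∈ range 5, p₁ ^ ((k + 1) ^ 2 + 1) *
      ∑ j ∈ Finset.Icc 1 (2*(k+1)), (1 + ((k : ℝ) + 1) ^ 2 + (j : ℝ)) * p₁ ^ (j - 1)) ≤ 3.45280 := by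
    norm_num [Finset.sum_range_succ, Finset.sum_range_zero,
      show Finset.Icc (1:ℕ) (2*(0+1)) = {1,2} from rfl,
      show Finset.Icc (1:ℕ) (2*(1+1)) = {1,2,3,4} from rfl,
      show Finset.Icc (1:ℕ) (2*(2+1)) = {1,2,3,4,5,6} from rfl,
      show Finset.Icc (1:ℕ) (2*(3+1)) = {1,2,3,4,5,6,7,8} from rfl,
      show Finset.Icc (1:ℕ) (2*(4+1)) = {1,2,3,4,5,6,7,8,9,10} from rfl,
      Finset.sum_insert, Finset.mem_insert, Finset.sum_singleton]
    push_cast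
    ring_nf
    linarith only [ph2, ph3, ph5, ph6, ph7, ph8, ph10, ph11, ph12, ph13, ph14, ph15,
      ph17, ph18, ph19, ph20, ph21, ph22, ph23, ph24, ph26, ph27, ph28, ph29, ph30,
      ph31, ph32, ph33, ph34, ph35, hqh]
  have hS2_lo : (3.45181:ℝ) ≤ ∑' k : ℕ, p₁ ^ ((k + 1) ^ 2 + 1) *
      ∑ j ∈ Finset.Icc 1 (2*(k+1)), (1 + ((k : ℝ) + 1) ^ 2 + (j : ℝ)) * p₁ ^ (j - 1) := by
    rw [← h2split]; linarith
  have hS2_hi : (∑' k : ℕ, p₁ ^ ((k + 1) ^ 2 + 1) *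
      ∑ j ∈ Finset.Icc 1 (2*(k+1)), (1 + ((k : ℝ) + 1) ^ 2 + (j : ℝ)) * p₁ ^ (j - 1))
      ≤ 3.45280 + 0.0000091 := by
    rw [← h2split]; linarith

  -- ## Assembly
  have hB : B = ((∑' k : ℕ, (1 + (k : ℝ) ^ 2) * p₁ ^ (k ^ 2)) +
      ∑' k : ℕ, p₁ ^ ((k + 1) ^ 2 + 1) *
        ∑ j ∈ Finset.Icc 1 (2*(k+1)), (1 + ((k : ℝ) + 1) ^ 2 + (j : ℝ)) * p₁ ^ (j - 1)) * p₀ := by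
    show ((∑' k : ℕ, (1 + (k : ℝ) ^ 2) * p₁ ^ (k ^ 2) * p₀) +
        ∑' k : ℕ, p₁ ^ ((k + 1) ^ 2 + 1) *
          ∑ j ∈ Finset.Icc 1 (2 * (k + 1)),
            (1 + ((k : ℝ) + 1) ^ 2 + (j : ℝ)) * p₁ ^ (j - 1) * p₀) = _
    rw [add_mul, tsum_mul_right]
    congr 1
    rw [← tsum_mul_right]
    apply tsum_congr
    intro k
    rw [← Finset.sum_mul, ← mul_assoc]
  have hC : C = (∑' k : ℕ, p₁ ^ (k ^ 2)) * p₀ := by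
    show (∑' k : ℕ, p₁ ^ (k ^ 2) * p₀) = _
    rw [tsum_mul_right]
  have hTpos : (0:ℝ) < ∑' k : ℕ, p₁ ^ (k ^ 2) := lt_of_lt_of_le (by norm_num) hT_lo
  have hBC : B / C = ((∑' k : ℕ, (1 + (k : ℝ) ^ 2) * p₁ ^ (k ^ 2)) +
      ∑' k : ℕ, p₁ ^ ((k + 1) ^ 2 + 1) *
        ∑ j ∈ Finset.Icc 1 (2*(k+1)), (1 + ((k : ℝ) + 1) ^ 2 + (j : ℝ)) * p₁ ^ (j - 1))
      / (∑' k : ℕ, p₁ ^ (k ^ 2)) := by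
    rw [hB, hC, mul_div_mul_right _ _ hp0.ne']
  rw [hBC]
  constructor
  · rw [lt_div_iff₀ hTpos]
    linarith only [hS1_lo, hS2_lo, hT_hi, hTpos]
  · rw [div_lt_iff₀ hTpos]
    linarith only [hS1_hi, hS2_hi, hT_lo, hTpos]
end

section
/- Let k ≥ 1 be an integer, let x be a real number with 0 < x < 1, and set m = 2k + 2 and τ_k(x) = exp( x (2k + x) / (2k + 2) ). Define S₁ = ∑_{n=1}^{∞} ∑_{i=0}^{n−1} C(n−1, i) (x/m)^i (2k/m)^{n−1−i} (2n − 1 + i) ( x^{n−1}/(n−1)! − x^{n}/n! ), S₂ = ∑_{n=1}^{∞} ∑_{i=0}^{n−1} C(n−1, i) (x/m)^i (2k/m)^{n−1−i} (2n + i) ( x^{n}/n! ) (1/m), and S₃ = ∑_{n=1}^{∞} ∑_{i=0}^{n−1} C(n−1, i) (x/m)^i (2k/m)^{n−1−i} (2n + 1 + i) ( x^{n}/n! ) (1/m) (1 − x), where C(n−1, i) is the binomial coefficient. Then S₁ + S₂ + S₃ = ( (4k + x + 3) τ_k(x) − 2k − 3 ) / (2k + x). -/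
open Nat

lemma inner_eval (a b A : ℝ) (n : ℕ) :
    ∑ i ∈ Finset.range (n + 1), (n.choose i : ℝ) * a ^ i * b ^ (n - i) * (A + i) =
      A * (a + b) ^ n + n * a * (a + b) ^ (n - 1) := by
  have hb : ∀ m : ℕ, ∑ i ∈ Finset.range (m + 1), (m.choose i : ℝ) * a ^ i * b ^ (m - i)
      = (a + b) ^ m := by
    intro m
    rw [add_pow]
    exact Finset.sum_congr rfl fun i _ => by ring
  have hi : ∑ i ∈ Finset.range (n + 1), (n.choose i : ℝ) * a ^ i * b ^ (n - i) * i
      = n * a * (a + b) ^ (n - 1) := by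
    cases n with
    | zero => simp
    | succ p =>
      rw [Finset.sum_range_succ']
      have h0 : ((p+1).choose 0 : ℝ) * a ^ 0 * b ^ (p + 1 - 0) * (0 : ℕ) = 0 := by simp
      rw [h0, add_zero]
      have hterm : ∀ j, ((p+1).choose (j+1) : ℝ) * a ^ (j+1) * b ^ (p + 1 - (j+1)) * ((j+1 : ℕ) : ℝ)
          = ((p : ℝ) + 1) * a * ((p.choose j : ℝ) * a ^ j * b ^ (p - j)) := by
        intro j
        have h := Nat.add_one_mul_choose_eq p j
        have h' : ((p+1 : ℕ) : ℝ) * (p.choose j : ℝ) = ((p+1).choose (j+1) : ℝ) * ((j+1 : ℕ) : ℝ) := by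
          exact_mod_cast congrArg (Nat.cast : ℕ → ℝ) h
        push_cast at h' ⊢
        linear_combination (-(a ^ (j+1) * b ^ (p - j))) * h'
      calc ∑ j ∈ Finset.range (p+1), ((p+1).choose (j+1) : ℝ) * a ^ (j+1) * b ^ (p + 1 - (j+1)) * ((j+1:ℕ):ℝ)
          = ∑ j ∈ Finset.range (p+1), ((p:ℝ)+1) * a * ((p.choose j : ℝ) * a ^ j * b ^ (p - j)) :=
            Finset.sum_congr rfl fun j _ => hterm j
        _ = ((p:ℝ)+1) * a * (a+b) ^ p := by rw [← Finset.mul_sum, hb p]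
        _ = ((p+1 : ℕ):ℝ) * a * (a+b) ^ (p + 1 - 1) := by push_cast; ring
  calc ∑ i ∈ Finset.range (n + 1), (n.choose i : ℝ) * a ^ i * b ^ (n - i) * (A + i)
      = ∑ i ∈ Finset.range (n + 1), (A * ((n.choose i : ℝ) * a ^ i * b ^ (n - i))
          + (n.choose i : ℝ) * a ^ i * b ^ (n - i) * i) :=
        Finset.sum_congr rfl fun i _ => by ring
    _ = A * (a + b) ^ n + n * a * (a + b) ^ (n - 1) := by
        rw [Finset.sum_add_distrib, ← Finset.mul_sum, hb, hi]


lemma fact_shift (t : ℝ) (n : ℕ) :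
    ((n + 1 : ℕ) : ℝ) * (t ^ (n + 1) / (n + 1)!) = t * (t ^ n / n !) := by
  have hf : ((n ! : ℕ) : ℝ) ≠ 0 := Nat.cast_ne_zero.mpr n.factorial_ne_zero
  have hn : ((n : ℝ) + 1) ≠ 0 := by positivity
  rw [Nat.factorial_succ]
  push_cast
  field_simp
  ring

lemma sum_e0 (t : ℝ) : Summable (fun n : ℕ => t ^ n / n !) := Real.summable_pow_div_factorial t

lemma sum_e1 (t : ℝ) : Summable (fun n : ℕ => (n : ℝ) * (t ^ n / n !)) := by
  apply (summable_nat_add_iff 1).mp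
  have h2 : Summable (fun n : ℕ => t * (t ^ n / n !)) := (sum_e0 t).mul_left t
  have he : (fun n : ℕ => ((n + 1 : ℕ) : ℝ) * (t ^ (n + 1) / (n + 1)!))
      = fun n : ℕ => t * (t ^ n / n !) := funext fun n => fact_shift t n
  show Summable (fun n : ℕ => ((n + 1 : ℕ) : ℝ) * (t ^ (n + 1) / (n + 1)!))
  rw [he]; exact h2

lemma sum_e2 (t : ℝ) : Summable (fun n : ℕ => t ^ (n + 1) / (n + 1)!) :=
  (summable_nat_add_iff 1).mpr (sum_e0 t)

lemma sum_e3 (t : ℝ) : Summable (fun n : ℕ => (n : ℝ) * (t ^ (n + 1) / (n + 1)!)) := by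
  have h1 : Summable (fun n : ℕ => ((n + 1 : ℕ) : ℝ) * (t ^ (n + 1) / (n + 1)!)) :=
    (summable_nat_add_iff 1).mpr (sum_e1 t)
  have := h1.sub (sum_e2 t)
  apply this.congr
  intro n
  push_cast
  ring

lemma tsum_e0 (t : ℝ) : ∑' n : ℕ, t ^ n / n ! = Real.exp t := by
  rw [Real.exp_eq_exp_ℝ, NormedSpace.exp_eq_tsum_div]

lemma tsum_e1 (t : ℝ) : ∑' n : ℕ, (n : ℝ) * (t ^ n / n !) = t * Real.exp t := by
  rw [Summable.tsum_eq_zero_add (sum_e1 t)]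
  simp only [Nat.cast_zero, zero_mul, zero_add]
  have he : (fun n : ℕ => ((n + 1 : ℕ) : ℝ) * (t ^ (n + 1) / (n + 1)!))
      = fun n : ℕ => t * (t ^ n / n !) := funext fun n => fact_shift t n
  calc ∑' n : ℕ, ((n + 1 : ℕ) : ℝ) * (t ^ (n + 1) / (n + 1)!)
      = ∑' n : ℕ, t * (t ^ n / n !) := by rw [he]
    _ = t * Real.exp t := by rw [tsum_mul_left, tsum_e0]

lemma tsum_e2 (t : ℝ) : ∑' n : ℕ, t ^ (n + 1) / (n + 1)! = Real.exp t - 1 := by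
  have h := Summable.tsum_eq_zero_add (sum_e0 t)
  rw [tsum_e0] at h
  simp only [pow_zero, Nat.factorial_zero, Nat.cast_one, div_one] at h
  linarith [h]

lemma tsum_e3 (t : ℝ) :
    ∑' n : ℕ, (n : ℝ) * (t ^ (n + 1) / (n + 1)!) = t * Real.exp t - Real.exp t + 1 := by
  have h1 : Summable (fun n : ℕ => ((n + 1 : ℕ) : ℝ) * (t ^ (n + 1) / (n + 1)!)) :=
    (summable_nat_add_iff 1).mpr (sum_e1 t)
  have hco : ∀ n : ℕ, (n : ℝ) * (t ^ (n + 1) / (n + 1)!)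
      = ((n + 1 : ℕ) : ℝ) * (t ^ (n + 1) / (n + 1)!) - t ^ (n + 1) / (n + 1)! := by
    intro n; push_cast; ring
  rw [tsum_congr hco, Summable.tsum_sub h1 (sum_e2 t), tsum_e2]
  have h2 := Summable.tsum_eq_zero_add (sum_e1 t)
  rw [tsum_e1] at h2
  simp only [Nat.cast_zero, zero_mul, zero_add] at h2
  rw [← h2]
  ring

lemma combo (t c0 c1 c2 c3 : ℝ) :
    ∑' n : ℕ, (c0 * (t ^ n / n !) + c1 * ((n : ℝ) * (t ^ n / n !))
      + c2 * (t ^ (n + 1) / (n + 1)!) + c3 * ((n : ℝ) * (t ^ (n + 1) / (n + 1)!)))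
    = c0 * Real.exp t + c1 * (t * Real.exp t) + c2 * (Real.exp t - 1)
      + c3 * (t * Real.exp t - Real.exp t + 1) := by
  have h0 := (sum_e0 t).mul_left c0
  have h1 := (sum_e1 t).mul_left c1
  have h2 := (sum_e2 t).mul_left c2
  have h3 := (sum_e3 t).mul_left c3
  rw [Summable.tsum_add ((h0.add h1).add h2) h3, Summable.tsum_add (h0.add h1) h2, Summable.tsum_add h0 h1,
    tsum_mul_left, tsum_mul_left, tsum_mul_left, tsum_mul_left,
    tsum_e0, tsum_e1, tsum_e2, tsum_e3]


set_option maxHeartbeats 2000000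


/-- Proposition 4: for an integer `k ≥ 1` and `0 < x < 1`, with `m = 2k + 2` and
`τ_k(x) = exp(x(2k + x)/(2k + 2))`, the three series `S₁`, `S₂`, `S₃`
(each reindexed by `n ↦ n + 1`, with inner index `i` ranging over `0, …, n`)
sum to `((4k + x + 3)τ_k(x) − 2k − 3)/(2k + x)`. -/
theorem karney_alg3_expected_deviates (k : ℕ) (hk : 1 ≤ k) (x : ℝ)
    (hx0 : 0 < x) (hx1 : x < 1) :
    let m : ℝ := 2 * (k : ℝ) + 2
    let τ : ℝ := Real.exp (x * (2 * (k : ℝ) + x) / (2 * (k : ℝ) + 2))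
    let S₁ : ℝ := ∑' n : ℕ, ∑ i ∈ Finset.range (n + 1),
      (Nat.choose n i : ℝ) * (x / m) ^ i * (2 * (k : ℝ) / m) ^ (n - i) *
        (2 * ((n : ℝ) + 1) - 1 + (i : ℝ)) *
        (x ^ n / (Nat.factorial n : ℝ) - x ^ (n + 1) / (Nat.factorial (n + 1) : ℝ))
    let S₂ : ℝ := ∑' n : ℕ, ∑ i ∈ Finset.range (n + 1),
      (Nat.choose n i : ℝ) * (x / m) ^ i * (2 * (k : ℝ) / m) ^ (n - i) *
        (2 * ((n : ℝ) + 1) + (i : ℝ)) *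
        (x ^ (n + 1) / (Nat.factorial (n + 1) : ℝ)) * (1 / m)
    let S₃ : ℝ := ∑' n : ℕ, ∑ i ∈ Finset.range (n + 1),
      (Nat.choose n i : ℝ) * (x / m) ^ i * (2 * (k : ℝ) / m) ^ (n - i) *
        (2 * ((n : ℝ) + 1) + 1 + (i : ℝ)) *
        (x ^ (n + 1) / (Nat.factorial (n + 1) : ℝ)) * (1 / m) * (1 - x)
    S₁ + S₂ + S₃ = ((4 * (k : ℝ) + x + 3) * τ - 2 * (k : ℝ) - 3) / (2 * (k : ℝ) + x) := by
  intro m τ S₁ S₂ S₃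
  simp only [S₁, S₂, S₃, τ, m]
  have hM : (2 * (k : ℝ) + 2) ≠ 0 := by positivity
  have hM0 : (0 : ℝ) < 2 * (k : ℝ) + 2 := by positivity
  set a : ℝ := x / (2 * (k : ℝ) + 2) with ha
  set b : ℝ := 2 * (k : ℝ) / (2 * (k : ℝ) + 2) with hb
  have hab0 : (0 : ℝ) < a + b := by
    have h1 : (0 : ℝ) < a := div_pos hx0 hM0
    have h2 : (0 : ℝ) ≤ b := by
      rw [hb]; positivity
    linarith
  have hab : a + b ≠ 0 := ne_of_gt hab0
  -- pointwise identities
  have P1 : ∀ n : ℕ, (∑ i ∈ Finset.range (n + 1),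
      (Nat.choose n i : ℝ) * a ^ i * b ^ (n - i) *
        (2 * ((n : ℝ) + 1) - 1 + (i : ℝ)) *
        (x ^ n / (Nat.factorial n : ℝ) - x ^ (n + 1) / (Nat.factorial (n + 1) : ℝ)))
      = 1 * (((a + b) * x) ^ n / (n ! : ℝ))
        + (2 + a / (a + b)) * ((n : ℝ) * (((a + b) * x) ^ n / (n ! : ℝ)))
        + (-(1 / (a + b))) * (((a + b) * x) ^ (n + 1) / ((n + 1)! : ℝ))
        + (-((2 + a / (a + b)) / (a + b))) * ((n : ℝ) * (((a + b) * x) ^ (n + 1) / ((n + 1)! : ℝ))) := by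
    intro n
    rw [← Finset.sum_mul, inner_eval a b (2 * ((n : ℝ) + 1) - 1) n]
    cases n with
    | zero => norm_num; field_simp; ring
    | succ p =>
      have h1 : ((p ! : ℕ) : ℝ) ≠ 0 := Nat.cast_ne_zero.mpr p.factorial_ne_zero
      have h2 : ((p : ℝ) + 1) ≠ 0 := by positivity
      have h3 : ((p : ℝ) + 2) ≠ 0 := by positivity
      simp only [Nat.add_sub_cancel, Nat.factorial_succ, mul_pow, pow_succ]
      push_cast
      field_simp
      ring
  have P2 : ∀ n : ℕ, (∑ i ∈ Finset.range (n + 1),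
      (Nat.choose n i : ℝ) * a ^ i * b ^ (n - i) *
        (2 * ((n : ℝ) + 1) + (i : ℝ)) *
        (x ^ (n + 1) / (Nat.factorial (n + 1) : ℝ)) * (1 / (2 * (k : ℝ) + 2)))
      = 0 * (((a + b) * x) ^ n / (n ! : ℝ))
        + 0 * ((n : ℝ) * (((a + b) * x) ^ n / (n ! : ℝ)))
        + (2 / ((a + b) * (2 * (k : ℝ) + 2))) * (((a + b) * x) ^ (n + 1) / ((n + 1)! : ℝ))
        + ((2 + a / (a + b)) / ((a + b) * (2 * (k : ℝ) + 2))) * ((n : ℝ) * (((a + b) * x) ^ (n + 1) / ((n + 1)! : ℝ))) := by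
    intro n
    rw [← Finset.sum_mul, ← Finset.sum_mul, inner_eval a b (2 * ((n : ℝ) + 1)) n]
    cases n with
    | zero => norm_num; field_simp
    | succ p =>
      have h1 : ((p ! : ℕ) : ℝ) ≠ 0 := Nat.cast_ne_zero.mpr p.factorial_ne_zero
      have h2 : ((p : ℝ) + 1) ≠ 0 := by positivity
      have h3 : ((p : ℝ) + 2) ≠ 0 := by positivity
      simp only [Nat.add_sub_cancel, Nat.factorial_succ, mul_pow, pow_succ]
      push_cast
      field_simp
      ring
  have P3 : ∀ n : ℕ, (∑ i ∈ Finset.range (n + 1),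
      (Nat.choose n i : ℝ) * a ^ i * b ^ (n - i) *
        (2 * ((n : ℝ) + 1) + 1 + (i : ℝ)) *
        (x ^ (n + 1) / (Nat.factorial (n + 1) : ℝ)) * (1 / (2 * (k : ℝ) + 2)) * (1 - x))
      = 0 * (((a + b) * x) ^ n / (n ! : ℝ))
        + 0 * ((n : ℝ) * (((a + b) * x) ^ n / (n ! : ℝ)))
        + (3 * (1 - x) / ((a + b) * (2 * (k : ℝ) + 2))) * (((a + b) * x) ^ (n + 1) / ((n + 1)! : ℝ))
        + ((2 + a / (a + b)) * (1 - x) / ((a + b) * (2 * (k : ℝ) + 2))) * ((n : ℝ) * (((a + b) * x) ^ (n + 1) / ((n + 1)! : ℝ))) := by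
    intro n
    rw [← Finset.sum_mul, ← Finset.sum_mul, ← Finset.sum_mul,
      inner_eval a b (2 * ((n : ℝ) + 1) + 1) n]
    cases n with
    | zero => norm_num; field_simp
    | succ p =>
      have h1 : ((p ! : ℕ) : ℝ) ≠ 0 := Nat.cast_ne_zero.mpr p.factorial_ne_zero
      have h2 : ((p : ℝ) + 1) ≠ 0 := by positivity
      have h3 : ((p : ℝ) + 2) ≠ 0 := by positivity
      simp only [Nat.add_sub_cancel, Nat.factorial_succ, mul_pow, pow_succ]
      push_cast
      field_simp
      ring
  rw [tsum_congr P1, tsum_congr P2, tsum_congr P3, combo, combo, combo]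
  have harg : x * (2 * (k : ℝ) + x) / (2 * (k : ℝ) + 2) = (a + b) * x := by
    rw [ha, hb]; field_simp; ring
  rw [harg]
  have h2kx : (2 * (k : ℝ) + x) ≠ 0 := by positivity
  rw [ha, hb] at hab ⊢
  generalize Real.exp ((x / (2 * (k : ℝ) + 2) + 2 * (k : ℝ) / (2 * (k : ℝ) + 2)) * x) = E
  field_simp
  ring
end

section
/- Let x be a real number with 0 < x < 1. Then ∑_{n=1}^{∞} [ (1/2)^n ( x^{n−1}/(n−1)! ) x^{n−1} (2n − 2) + (1/2)^n x^{n−1} ( x^{n−1}/(n−1)! − x^{n}/n! ) (2n − 1) + (1/2)^n x^{n−1} ( x^{n}/n! ) (1 − x) (2n) ] = ( (x + 2) e^{x²/2} − 2 ) / (2x). -/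
/-- Proposition 5: for `0 < x < 1`,
`∑_{n=1}^{∞} [ (1/2)^n (x^{n−1}/(n−1)!) x^{n−1} (2n − 2)
  + (1/2)^n x^{n−1} (x^{n−1}/(n−1)! − x^{n}/n!) (2n − 1)
  + (1/2)^n x^{n−1} (x^{n}/n!) (1 − x) (2n) ]
  = ((x + 2) e^{x²/2} − 2) / (2x)`.
(The series is reindexed by `n ↦ n + 1`.) -/
theorem karney_alg3_k0_expected_deviates (x : ℝ) (hx0 : 0 < x) (hx1 : x < 1) :
    HasSum (fun n : ℕ =>
        (1 / 2 : ℝ) ^ (n + 1) * (x ^ n / (Nat.factorial n : ℝ)) * x ^ n *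
            (2 * ((n : ℝ) + 1) - 2) +
          (1 / 2 : ℝ) ^ (n + 1) * x ^ n *
            (x ^ n / (Nat.factorial n : ℝ) - x ^ (n + 1) / (Nat.factorial (n + 1) : ℝ)) *
            (2 * ((n : ℝ) + 1) - 1) +
          (1 / 2 : ℝ) ^ (n + 1) * x ^ n * (x ^ (n + 1) / (Nat.factorial (n + 1) : ℝ)) *
            (1 - x) * (2 * ((n : ℝ) + 1)))
      (((x + 2) * Real.exp (x ^ 2 / 2) - 2) / (2 * x)) := by
  have hx : x ≠ 0 := ne_of_gt hx0
  set t : ℝ := x ^ 2 / 2 with ht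
  have htne : t ≠ 0 := by
    simp [ht]
    positivity
  set E : ℝ := Real.exp t with hE
  -- basic exponential series
  have hf : HasSum (fun n : ℕ => t ^ n / (Nat.factorial n : ℝ)) E := by
    have := NormedSpace.expSeries_div_hasSum_exp (𝔸 := ℝ) t
    rwa [← Real.exp_eq_exp_ℝ] at this
  -- shifted series: n * t^n / n!
  have hg : HasSum (fun n : ℕ => (n : ℝ) * t ^ n / (Nat.factorial n : ℝ)) (t * E) := by
    have h1 : HasSum (fun n : ℕ => t * (t ^ n / (Nat.factorial n : ℝ))) (t * E) :=
      hf.mul_left t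
    have h2 : (fun n : ℕ => ((n + 1 : ℕ) : ℝ) * t ^ (n + 1) / (Nat.factorial (n + 1) : ℝ))
        = fun n : ℕ => t * (t ^ n / (Nat.factorial n : ℝ)) := by
      funext n
      have hfac : (Nat.factorial (n + 1) : ℝ) = ((n : ℝ) + 1) * (Nat.factorial n : ℝ) := by
        push_cast [Nat.factorial_succ]; ring
      have hfn : (Nat.factorial n : ℝ) ≠ 0 := by
        exact_mod_cast (Nat.factorial_pos n).ne'
      have hn1 : ((n : ℝ) + 1) ≠ 0 := by positivity
      rw [hfac]
      push_cast
      field_simp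
      ring
    have := (hasSum_nat_add_iff (f := fun n : ℕ => (n : ℝ) * t ^ n / (Nat.factorial n : ℝ)) 1).mp
      (by rw [show (fun n : ℕ => ((n + 1 : ℕ) : ℝ) * t ^ (n + 1) / (Nat.factorial (n + 1) : ℝ))
              = _ from h2] at *; exact h1)
    simpa using this
  -- series for t^n/(n+1)!
  have hh : HasSum (fun n : ℕ => t ^ n / (Nat.factorial (n + 1) : ℝ)) ((E - 1) / t) := by
    have h1 : HasSum (fun n : ℕ => t ^ (n + 1) / (Nat.factorial (n + 1) : ℝ)) (E - 1) := by
      apply (hasSum_nat_add_iff (f := fun n : ℕ => t ^ n / (Nat.factorial n : ℝ)) 1).mpr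
      simpa using hf
    have h2 : HasSum (fun n : ℕ => (1 / t) * (t ^ (n + 1) / (Nat.factorial (n + 1) : ℝ)))
        ((1 / t) * (E - 1)) := h1.mul_left _
    have h3 : (fun n : ℕ => (1 / t) * (t ^ (n + 1) / (Nat.factorial (n + 1) : ℝ)))
        = fun n : ℕ => t ^ n / (Nat.factorial (n + 1) : ℝ) := by
      funext n
      have hfn : (Nat.factorial (n + 1) : ℝ) ≠ 0 := by
        exact_mod_cast (Nat.factorial_pos (n + 1)).ne'
      field_simp
      ring
    rw [h3] at h2
    simpa [div_eq_mul_inv, one_div, mul_comm] using h2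
  -- the combination
  have hcomb : HasSum (fun n : ℕ =>
      2 * ((n : ℝ) * t ^ n / (Nat.factorial n : ℝ))
        + ((1 / 2 - x ^ 2) * (t ^ n / (Nat.factorial n : ℝ))
        + (x / 2) * (t ^ n / (Nat.factorial (n + 1) : ℝ))))
      (2 * (t * E) + ((1 / 2 - x ^ 2) * E + (x / 2) * ((E - 1) / t))) := by
    have := (hg.mul_left 2).add ((hf.mul_left (1 / 2 - x ^ 2)).add (hh.mul_left (x / 2)))
    simpa [mul_div_assoc] using this
  have hfun : (fun n : ℕ =>
        (1 / 2 : ℝ) ^ (n + 1) * (x ^ n / (Nat.factorial n : ℝ)) * x ^ n *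
            (2 * ((n : ℝ) + 1) - 2) +
          (1 / 2 : ℝ) ^ (n + 1) * x ^ n *
            (x ^ n / (Nat.factorial n : ℝ) - x ^ (n + 1) / (Nat.factorial (n + 1) : ℝ)) *
            (2 * ((n : ℝ) + 1) - 1) +
          (1 / 2 : ℝ) ^ (n + 1) * x ^ n * (x ^ (n + 1) / (Nat.factorial (n + 1) : ℝ)) *
            (1 - x) * (2 * ((n : ℝ) + 1)))
      = (fun n : ℕ =>
      2 * ((n : ℝ) * t ^ n / (Nat.factorial n : ℝ))
        + ((1 / 2 - x ^ 2) * (t ^ n / (Nat.factorial n : ℝ))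
        + (x / 2) * (t ^ n / (Nat.factorial (n + 1) : ℝ)))) := by
    funext n
    have hfac : (Nat.factorial (n + 1) : ℝ) = ((n : ℝ) + 1) * (Nat.factorial n : ℝ) := by
      push_cast [Nat.factorial_succ]; ring
    have hfn : (Nat.factorial n : ℝ) ≠ 0 := by
      exact_mod_cast (Nat.factorial_pos n).ne'
    have hn1 : ((n : ℝ) + 1) ≠ 0 := by positivity
    have htn : t ^ n = x ^ n * x ^ n / 2 ^ n := by
      rw [ht, div_pow, ← pow_mul]
      ring_nf
    rw [hfac, htn, one_div_pow]
    field_simp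
    ring
  have hval : (((x + 2) * Real.exp (x ^ 2 / 2) - 2) / (2 * x))
      = 2 * (t * E) + ((1 / 2 - x ^ 2) * E + (x / 2) * ((E - 1) / t)) := by
    rw [hE, ht]
    field_simp
    ring
  rw [hfun, hval]
  exact hcomb
end

section
/- For all real numbers x and y with 0 < x < 1 and 0 < y < 1, the inequality ( e^{xy} (1 + y) − 1 ) / y < ( e^{xy} (1 + x) − 1 ) / x holds if and only if x < y. -/
/-- For `0 < x < 1` and `0 < y < 1`,
`(e^{xy}(1 + y) − 1)/y < (e^{xy}(1 + x) − 1)/x` if and only if `x < y`. -/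
theorem alg6_argument_order (x y : ℝ) (hx0 : 0 < x) (hx1 : x < 1)
    (hy0 : 0 < y) (hy1 : y < 1) :
    (Real.exp (x * y) * (1 + y) - 1) / y < (Real.exp (x * y) * (1 + x) - 1) / x ↔
      x < y := by
  have hE : 1 < Real.exp (x * y) := Real.one_lt_exp_iff.mpr (by positivity)
  rw [div_lt_div_iff₀ hy0 hx0]
  constructor <;> intro h <;> nlinarith
end

section
/- Let D(k) = e^{−k²/2} / ∑_{j=0}^{∞} e^{−j²/2} for integers k ≥ 0, and for integers k ≥ 1 let t_k(x) = ∑_{i=1}^{k−1} i e^{−x(i−1)} (1 − e^{−x}) + k e^{−x(k−1)}. Then the quantity W := ∑_{k=1}^{∞} D(k) ∫₀¹ t_k(x) e^{x} dx + ∑_{k=0}^{∞} D(k) ∫₀¹ ( ( (1 + x) e^{x²/2} − 1 ) / x ) e^{−kx} dx satisfies 2.01 < W < 2.02. -/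
open Real Finset MeasureTheory intervalIntegral

namespace ImprovedStep34
set_option maxHeartbeats 2000000


lemma d_lb : (0.60653065915 : ℝ) < Real.exp (-(1/2)) := by
  have h := Real.exp_bound (x := -(1/2)) (by rw [abs_neg, abs_of_nonneg] <;> norm_num) (n := 10) (by norm_num)
  rw [abs_le] at h
  have hs : ∑ m ∈ Finset.range 10, (-(1/2) : ℝ) ^ m / m.factorial = 112690097/185794560 := by
    norm_num [Finset.sum_range_succ, Nat.factorial]
  rw [hs] at h
  have : |(-(1/2) : ℝ)| = 1/2 := by norm_num
  rw [this] at h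
  norm_num [Nat.factorial] at h
  linarith [h.1]

lemma d_ub : Real.exp (-(1/2)) < (0.60653065976 : ℝ) := by
  have h := Real.exp_bound (x := -(1/2)) (by rw [abs_neg, abs_of_nonneg] <;> norm_num) (n := 10) (by norm_num)
  rw [abs_le] at h
  have hs : ∑ m ∈ Finset.range 10, (-(1/2) : ℝ) ^ m / m.factorial = 112690097/185794560 := by
    norm_num [Finset.sum_range_succ, Nat.factorial]
  rw [hs] at h
  have : |(-(1/2) : ℝ)| = 1/2 := by norm_num
  rw [this] at h
  norm_num [Nat.factorial] at h
  linarith [h.2]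

lemma t_eq (k : ℕ) (x : ℝ) :
    ((∑ i ∈ Finset.Icc 1 (k - 1),
        (i : ℝ) * Real.exp (-x * ((i : ℝ) - 1)) * (1 - Real.exp (-x))) +
      (k : ℝ) * Real.exp (-x * ((k : ℝ) - 1))) =
    ∑ i ∈ Finset.range k, Real.exp (-(i : ℝ) * x) := by
  induction k with
  | zero => simp
  | succ n ih =>
    rcases Nat.eq_zero_or_pos n with hn | hn
    · subst hn; simp
    · have hIcc : Finset.Icc 1 ((n+1) - 1) = Finset.Icc 1 ((n-1) + 1) := by
        congr 1; omega
      rw [hIcc, Finset.sum_Icc_succ_top (by omega : 1 ≤ (n-1)+1)]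
      have hn1 : ((n - 1 : ℕ) + 1 : ℕ) = n := by omega
      rw [hn1] at *
      rw [Finset.sum_range_succ, ← ih]
      push_cast
      have h1 : Real.exp (-x * ((n:ℝ) + 1 - 1)) = Real.exp (-x * ((n:ℝ) - 1)) * Real.exp (-x) := by
        rw [← Real.exp_add]; ring_nf
      have h2 : Real.exp (-(n:ℝ) * x) = Real.exp (-x * ((n:ℝ) - 1)) * Real.exp (-x) := by
        rw [← Real.exp_add]; ring_nf
      rw [h1, h2]
      ring


lemma contA (k : ℕ) : Continuous (fun x : ℝ => (∑ i ∈ Finset.range k, Real.exp (-(i:ℝ) * x)) * Real.exp x) := by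
  fun_prop

lemma intA_nonneg (k : ℕ) :
    0 ≤ ∫ x in (0:ℝ)..1, (∑ i ∈ Finset.range k, Real.exp (-(i:ℝ) * x)) * Real.exp x := by
  apply intervalIntegral.integral_nonneg (by norm_num)
  intro u _
  positivity

lemma intA_le (k : ℕ) :
    (∫ x in (0:ℝ)..1, (∑ i ∈ Finset.range k, Real.exp (-(i:ℝ) * x)) * Real.exp x) ≤ 3 * k := by
  have h : ∀ x ∈ Set.Icc (0:ℝ) 1,
      (∑ i ∈ Finset.range k, Real.exp (-(i:ℝ) * x)) * Real.exp x ≤ (k : ℝ) * 3 := by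
    intro x hx
    have h1 : (∑ i ∈ Finset.range k, Real.exp (-(i:ℝ) * x)) ≤ (k : ℝ) := by
      calc (∑ i ∈ Finset.range k, Real.exp (-(i:ℝ) * x)) ≤ ∑ i ∈ Finset.range k, 1 := by
            apply Finset.sum_le_sum
            intro i _
            rw [Real.exp_le_one_iff]
            have hx0 := hx.1
            have : (0:ℝ) ≤ (i:ℝ) * x := mul_nonneg (Nat.cast_nonneg i) hx0
            linarith
        _ = (k : ℝ) := by simp
    have h2 : Real.exp x ≤ 3 := by
      calc Real.exp x ≤ Real.exp 1 := Real.exp_le_exp.mpr hx.2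
        _ ≤ 3 := by linarith [Real.exp_one_lt_d9]
    have h3 : (0:ℝ) ≤ ∑ i ∈ Finset.range k, Real.exp (-(i:ℝ) * x) := by positivity
    nlinarith [Real.exp_pos x]
  calc (∫ x in (0:ℝ)..1, (∑ i ∈ Finset.range k, Real.exp (-(i:ℝ) * x)) * Real.exp x)
      ≤ ∫ _x in (0:ℝ)..1, (k : ℝ) * 3 := by
        apply intervalIntegral.integral_mono_on (by norm_num)
          ((contA k).intervalIntegrable _ _) (intervalIntegrable_const) h
    _ = (k : ℝ) * 3 := by simp
    _ = 3 * k := by ring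

lemma intA1 : ∫ x in (0:ℝ)..1, (∑ i ∈ Finset.range 1, Real.exp (-(i:ℝ) * x)) * Real.exp x
    = Real.exp 1 - 1 := by
  rw [intervalIntegral.integral_congr (g := fun x => Real.exp x) (fun x _ => by norm_num)]
  rw [integral_exp]
  norm_num

lemma intA2 : ∫ x in (0:ℝ)..1, (∑ i ∈ Finset.range 2, Real.exp (-(i:ℝ) * x)) * Real.exp x
    = Real.exp 1 := by
  rw [intervalIntegral.integral_congr (g := fun x => Real.exp x + 1) (fun x _ => by
    simp [Finset.sum_range_succ]
    rw [add_mul, ← Real.exp_add]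
    norm_num)]
  rw [intervalIntegral.integral_add (continuous_exp.intervalIntegrable _ _) (continuous_const.intervalIntegrable _ _), integral_exp]
  norm_num


lemma intA3 : ∫ x in (0:ℝ)..1, (∑ i ∈ Finset.range 3, Real.exp (-(i:ℝ) * x)) * Real.exp x
    = Real.exp 1 + 1 - Real.exp (-1) := by
  rw [intervalIntegral.integral_congr
      (g := fun x => Real.exp x + 1 + Real.exp (-x)) (fun x _ => by
    simp [Finset.sum_range_succ]
    rw [add_mul, add_mul, ← Real.exp_add, ← Real.exp_add]
    norm_num; ring)]
  have hF : ∀ x ∈ Set.uIcc (0:ℝ) 1,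
      HasDerivAt (fun y => Real.exp y + y - Real.exp (-y))
        (Real.exp x + 1 + Real.exp (-x)) x := by
    intro x _
    have h1 := Real.hasDerivAt_exp x
    have h2 : HasDerivAt (fun y : ℝ => Real.exp (-y)) (Real.exp (-x) * (-1)) x :=
      (hasDerivAt_id x).neg.exp
    refine ((h1.add (hasDerivAt_id x)).sub h2).congr_deriv ?_
    ring
  rw [intervalIntegral.integral_eq_sub_of_hasDerivAt hF (by
    apply Continuous.intervalIntegrable; fun_prop)]
  norm_num

lemma intA4 : ∫ x in (0:ℝ)..1, (∑ i ∈ Finset.range 4, Real.exp (-(i:ℝ) * x)) * Real.exp x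
    = Real.exp 1 + 3/2 - Real.exp (-1) - Real.exp (-2)/2 := by
  rw [intervalIntegral.integral_congr
      (g := fun x => Real.exp x + 1 + Real.exp (-x) + Real.exp (-(2*x))) (fun x _ => by
    simp [Finset.sum_range_succ]
    rw [add_mul, add_mul, add_mul, ← Real.exp_add, ← Real.exp_add, ← Real.exp_add]
    norm_num
    rw [show -(2*x)+x = -x by ring, show -(3*x)+x = -(2*x) by ring])]
  have hF : ∀ x ∈ Set.uIcc (0:ℝ) 1,
      HasDerivAt (fun y => Real.exp y + y - Real.exp (-y) - Real.exp (-(2*y))/2)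
        (Real.exp x + 1 + Real.exp (-x) + Real.exp (-(2*x))) x := by
    intro x _
    have h1 := Real.hasDerivAt_exp x
    have h2 : HasDerivAt (fun y : ℝ => Real.exp (-y)) (Real.exp (-x) * (-1)) x :=
      (hasDerivAt_id x).neg.exp
    have h3 : HasDerivAt (fun y : ℝ => Real.exp (-(2*y))) (Real.exp (-(2*x)) * (-(2*1))) x :=
      ((hasDerivAt_id x).const_mul 2).neg.exp
    refine (((h1.add (hasDerivAt_id x)).sub h2).sub (h3.div_const 2)).congr_deriv ?_
    ring
  rw [intervalIntegral.integral_eq_sub_of_hasDerivAt hF (by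
    apply Continuous.intervalIntegrable; fun_prop)]
  norm_num
  ring


lemma E_lb {u : ℝ} (h0 : 0 ≤ u) :
    1 + u + u^2/2 + u^3/6 + u^4/24 ≤ Real.exp u := by
  have h := Real.sum_le_exp_of_nonneg h0 5
  norm_num [Finset.sum_range_succ, Nat.factorial] at h
  linarith

lemma E_ub {u : ℝ} (h0 : 0 ≤ u) (h1 : u ≤ 1) :
    Real.exp u ≤ 1 + u + u^2/2 + u^3/6 + u^4/24 + u^5/100 := by
  have h := Real.exp_bound (x := u) (by rwa [abs_of_nonneg h0]) (n := 5) (by norm_num)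
  rw [abs_le] at h
  rw [abs_of_nonneg h0] at h
  norm_num [Finset.sum_range_succ, Nat.factorial] at h
  linarith [h.2]

lemma g_lb {x : ℝ} (hx : 0 < x) (hx1 : x ≤ 1) :
    1 + x/2 + x^2/2 + x^3/8 + x^4/8 + x^5/48 + x^6/48 + x^7/384 + x^8/384
      ≤ ((1+x)*Real.exp (x^2/2) - 1)/x := by
  have hu0 : (0:ℝ) ≤ x^2/2 := by positivity
  have h := E_lb hu0
  have h2 := mul_le_mul_of_nonneg_left h (by linarith : (0:ℝ) ≤ 1 + x)
  rw [le_div_iff₀ hx]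
  nlinarith [h2]

lemma g_ub {x : ℝ} (hx : 0 < x) (hx1 : x ≤ 1) :
    ((1+x)*Real.exp (x^2/2) - 1)/x ≤
      1 + x/2 + x^2/2 + x^3/8 + x^4/8 + x^5/48 + x^6/48 + x^7/384 + x^8/384
        + x^9/3200 + x^10/3200 := by
  have hu0 : (0:ℝ) ≤ x^2/2 := by positivity
  have hu1 : x^2/2 ≤ 1 := by nlinarith
  have h := E_ub hu0 hu1
  have h2 := mul_le_mul_of_nonneg_left h (by linarith : (0:ℝ) ≤ 1 + x)
  rw [div_le_iff₀ hx]
  nlinarith [h2]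

lemma g_nonneg {x : ℝ} (hx : 0 ≤ x) (c : ℝ) :
    0 ≤ ((1+x)*Real.exp (x^2/2) - 1)/x * Real.exp (c*x) := by
  have h1 : (1:ℝ) ≤ Real.exp (x^2/2) := Real.one_le_exp (by positivity)
  have : (0:ℝ) ≤ ((1+x)*Real.exp (x^2/2) - 1) := by nlinarith
  positivity

lemma gq_le {x : ℝ} (hx : 0 ≤ x) (hx1 : x ≤ 1) {c : ℝ} (hc : c ≤ 0) :
    ((1+x)*Real.exp (x^2/2) - 1)/x * Real.exp (c*x) ≤ 2.2976 := by
  have hec : Real.exp (c*x) ≤ 1 := Real.exp_le_one_iff.mpr (by nlinarith)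
  rcases eq_or_lt_of_le hx with h0 | h0
  · rw [← h0]; norm_num
  · have hg := g_ub h0 hx1
    have hgn : 0 ≤ ((1+x)*Real.exp (x^2/2) - 1)/x := by
      have h1 : (1:ℝ) ≤ Real.exp (x^2/2) := Real.one_le_exp (by positivity)
      have : (0:ℝ) ≤ ((1+x)*Real.exp (x^2/2) - 1) := by nlinarith
      positivity
    have hp : ∀ n : ℕ, x^n ≤ 1 := fun n => pow_le_one₀ hx hx1
    have := hp 2; have := hp 3; have := hp 4; have := hp 5; have := hp 6
    have := hp 7; have := hp 8; have := hp 9; have := hp 10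
    nlinarith [mul_le_mul_of_nonneg_left hec hgn]

lemma intgB_integrable (c : ℝ) (hc : c ≤ 0) :
    IntervalIntegrable (fun x => ((1+x)*Real.exp (x^2/2) - 1)/x * Real.exp (c*x))
      volume (0:ℝ) 1 := by
  rw [intervalIntegrable_iff]
  apply MeasureTheory.Measure.integrableOn_of_bounded (M := 2.2976)
  · rw [Set.uIoc_of_le (by norm_num : (0:ℝ) ≤ 1), Real.volume_Ioc]
    norm_num
  · apply Measurable.aestronglyMeasurable
    apply Measurable.mul
    · apply Measurable.div
      · fun_prop
      · exact measurable_id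
    · fun_prop
  · rw [Set.uIoc_of_le (by norm_num : (0:ℝ) ≤ 1)]
    rw [ae_restrict_iff' measurableSet_Ioc]
    apply Filter.Eventually.of_forall
    intro x hx
    rw [Real.norm_eq_abs, abs_of_nonneg (g_nonneg hx.1.le c)]
    exact gq_le hx.1.le hx.2 hc


lemma intPL1 : ∫ x in (0:ℝ)..1, (1 + x/2 + x^2/2 + x^3/8 + x^4/8 + x^5/48 + x^6/48 + x^7/384 + x^8/384) * Real.exp (-(1:ℝ)*x)
    = (1135/8 : ℝ) - (147181/384 : ℝ) * Real.exp (-1) := by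
  have hF : ∀ x ∈ Set.uIcc (0:ℝ) 1, HasDerivAt
      (fun y => -((1135/8 : ℝ) + (1127/8 : ℝ)*y + (1123/16 : ℝ)*y^2 + (1115/48 : ℝ)*y^3 + (1109/192 : ℝ)*y^4 + (217/192 : ℝ)*y^5 + (71/384 : ℝ)*y^6 + (3/128 : ℝ)*y^7 + (1/384 : ℝ)*y^8) * Real.exp (-(1:ℝ)*y))
      ((1 + x/2 + x^2/2 + x^3/8 + x^4/8 + x^5/48 + x^6/48 + x^7/384 + x^8/384) * Real.exp (-(1:ℝ)*x)) x := by
    intro x _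
    have hq := ((((((((((hasDerivAt_id' x).const_mul (1127/8 : ℝ)).const_add (1135/8 : ℝ)).add ((hasDerivAt_pow 2 x).const_mul (1123/16 : ℝ))).add ((hasDerivAt_pow 3 x).const_mul (1115/48 : ℝ))).add ((hasDerivAt_pow 4 x).const_mul (1109/192 : ℝ))).add ((hasDerivAt_pow 5 x).const_mul (217/192 : ℝ))).add ((hasDerivAt_pow 6 x).const_mul (71/384 : ℝ))).add ((hasDerivAt_pow 7 x).const_mul (3/128 : ℝ))).add ((hasDerivAt_pow 8 x).const_mul (1/384 : ℝ))).neg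
    have he := (((hasDerivAt_id' x).const_mul (-(1:ℝ)))).exp
    refine (hq.mul he).congr_deriv ?_
    push_cast
    simp only [Pi.add_apply, Pi.neg_apply, Pi.mul_apply]
    ring
  rw [intervalIntegral.integral_eq_sub_of_hasDerivAt hF (by apply Continuous.intervalIntegrable; fun_prop)]
  norm_num
  try ring

lemma intPP1 : ∫ x in (0:ℝ)..1, (1 + x/2 + x^2/2 + x^3/8 + x^4/8 + x^5/48 + x^6/48 + x^7/384 + x^8/384 + x^9/3200 + x^10/3200) * Real.exp (-(1:ℝ)*x)
    = (55571/40 : ℝ) - (18115529/4800 : ℝ) * Real.exp (-1) := by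
  have hF : ∀ x ∈ Set.uIcc (0:ℝ) 1, HasDerivAt
      (fun y => -((55571/40 : ℝ) + (55531/40 : ℝ)*y + (55511/80 : ℝ)*y^2 + (55471/240 : ℝ)*y^3 + (55441/960 : ℝ)*y^4 + (55321/4800 : ℝ)*y^5 + (18407/9600 : ℝ)*y^6 + (867/3200 : ℝ)*y^7 + (161/4800 : ℝ)*y^8 + (11/3200 : ℝ)*y^9 + (1/3200 : ℝ)*y^10) * Real.exp (-(1:ℝ)*y))
      ((1 + x/2 + x^2/2 + x^3/8 + x^4/8 + x^5/48 + x^6/48 + x^7/384 + x^8/384 + x^9/3200 + x^10/3200) * Real.exp (-(1:ℝ)*x)) x := by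
    intro x _
    have hq := ((((((((((((hasDerivAt_id' x).const_mul (55531/40 : ℝ)).const_add (55571/40 : ℝ)).add ((hasDerivAt_pow 2 x).const_mul (55511/80 : ℝ))).add ((hasDerivAt_pow 3 x).const_mul (55471/240 : ℝ))).add ((hasDerivAt_pow 4 x).const_mul (55441/960 : ℝ))).add ((hasDerivAt_pow 5 x).const_mul (55321/4800 : ℝ))).add ((hasDerivAt_pow 6 x).const_mul (18407/9600 : ℝ))).add ((hasDerivAt_pow 7 x).const_mul (867/3200 : ℝ))).add ((hasDerivAt_pow 8 x).const_mul (161/4800 : ℝ))).add ((hasDerivAt_pow 9 x).const_mul (11/3200 : ℝ))).add ((hasDerivAt_pow 10 x).const_mul (1/3200 : ℝ))).neg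
    have he := (((hasDerivAt_id' x).const_mul (-(1:ℝ)))).exp
    refine (hq.mul he).congr_deriv ?_
    push_cast
    simp only [Pi.add_apply, Pi.neg_apply, Pi.mul_apply]
    ring
  rw [intervalIntegral.integral_eq_sub_of_hasDerivAt hF (by apply Continuous.intervalIntegrable; fun_prop)]
  norm_num
  try ring

lemma intPL2 : ∫ x in (0:ℝ)..1, (1 + x/2 + x^2/2 + x^3/8 + x^4/8 + x^5/48 + x^6/48 + x^7/384 + x^8/384) * Real.exp (-(2:ℝ)*x)
    = (2669/2048 : ℝ) - (33745/6144 : ℝ) * Real.exp (-2) := by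
  have hF : ∀ x ∈ Set.uIcc (0:ℝ) 1, HasDerivAt
      (fun y => -((2669/2048 : ℝ) + (1645/1024 : ℝ)*y + (1389/1024 : ℝ)*y^2 + (1133/1536 : ℝ)*y^3 + (1037/3072 : ℝ)*y^4 + (169/1536 : ℝ)*y^5 + (17/512 : ℝ)*y^6 + (5/768 : ℝ)*y^7 + (1/768 : ℝ)*y^8) * Real.exp (-(2:ℝ)*y))
      ((1 + x/2 + x^2/2 + x^3/8 + x^4/8 + x^5/48 + x^6/48 + x^7/384 + x^8/384) * Real.exp (-(2:ℝ)*x)) x := by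
    intro x _
    have hq := ((((((((((hasDerivAt_id' x).const_mul (1645/1024 : ℝ)).const_add (2669/2048 : ℝ)).add ((hasDerivAt_pow 2 x).const_mul (1389/1024 : ℝ))).add ((hasDerivAt_pow 3 x).const_mul (1133/1536 : ℝ))).add ((hasDerivAt_pow 4 x).const_mul (1037/3072 : ℝ))).add ((hasDerivAt_pow 5 x).const_mul (169/1536 : ℝ))).add ((hasDerivAt_pow 6 x).const_mul (17/512 : ℝ))).add ((hasDerivAt_pow 7 x).const_mul (5/768 : ℝ))).add ((hasDerivAt_pow 8 x).const_mul (1/768 : ℝ))).neg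
    have he := (((hasDerivAt_id' x).const_mul (-(2:ℝ)))).exp
    refine (hq.mul he).congr_deriv ?_
    push_cast
    simp only [Pi.add_apply, Pi.neg_apply, Pi.mul_apply]
    ring
  rw [intervalIntegral.integral_eq_sub_of_hasDerivAt hF (by apply Continuous.intervalIntegrable; fun_prop)]
  norm_num
  try ring

lemma intPP2 : ∫ x in (0:ℝ)..1, (1 + x/2 + x^2/2 + x^3/8 + x^4/8 + x^5/48 + x^6/48 + x^7/384 + x^8/384 + x^9/3200 + x^10/3200) * Real.exp (-(2:ℝ)*x)
    = (20149/10240 : ℝ) - (1597741/153600 : ℝ) * Real.exp (-2) := by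
  have hF : ∀ x ∈ Set.uIcc (0:ℝ) 1, HasDerivAt
      (fun y => -((20149/10240 : ℝ) + (15029/5120 : ℝ)*y + (13749/5120 : ℝ)*y^2 + (12469/7680 : ℝ)*y^3 + (11989/15360 : ℝ)*y^4 + (11029/38400 : ℝ)*y^5 + (1181/12800 : ℝ)*y^6 + (449/19200 : ℝ)*y^7 + (53/9600 : ℝ)*y^8 + (3/3200 : ℝ)*y^9 + (1/6400 : ℝ)*y^10) * Real.exp (-(2:ℝ)*y))
      ((1 + x/2 + x^2/2 + x^3/8 + x^4/8 + x^5/48 + x^6/48 + x^7/384 + x^8/384 + x^9/3200 + x^10/3200) * Real.exp (-(2:ℝ)*x)) x := by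
    intro x _
    have hq := ((((((((((((hasDerivAt_id' x).const_mul (15029/5120 : ℝ)).const_add (20149/10240 : ℝ)).add ((hasDerivAt_pow 2 x).const_mul (13749/5120 : ℝ))).add ((hasDerivAt_pow 3 x).const_mul (12469/7680 : ℝ))).add ((hasDerivAt_pow 4 x).const_mul (11989/15360 : ℝ))).add ((hasDerivAt_pow 5 x).const_mul (11029/38400 : ℝ))).add ((hasDerivAt_pow 6 x).const_mul (1181/12800 : ℝ))).add ((hasDerivAt_pow 7 x).const_mul (449/19200 : ℝ))).add ((hasDerivAt_pow 8 x).const_mul (53/9600 : ℝ))).add ((hasDerivAt_pow 9 x).const_mul (3/3200 : ℝ))).add ((hasDerivAt_pow 10 x).const_mul (1/6400 : ℝ))).neg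
    have he := (((hasDerivAt_id' x).const_mul (-(2:ℝ)))).exp
    refine (hq.mul he).congr_deriv ?_
    push_cast
    simp only [Pi.add_apply, Pi.neg_apply, Pi.mul_apply]
    ring
  rw [intervalIntegral.integral_eq_sub_of_hasDerivAt hF (by apply Continuous.intervalIntegrable; fun_prop)]
  norm_num
  try ring

lemma intPL3 : ∫ x in (0:ℝ)..1, (1 + x/2 + x^2/2 + x^3/8 + x^4/8 + x^5/48 + x^6/48 + x^7/384 + x^8/384) * Real.exp (-(3:ℝ)*x)
    = (24415/52488 : ℝ) - (1289599/839808 : ℝ) * Real.exp (-3) := by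
  have hF : ∀ x ∈ Set.uIcc (0:ℝ) 1, HasDerivAt
      (fun y => -((24415/52488 : ℝ) + (6919/17496 : ℝ)*y + (4003/11664 : ℝ)*y^2 + (2059/11664 : ℝ)*y^3 + (1573/15552 : ℝ)*y^4 + (185/5184 : ℝ)*y^5 + (149/10368 : ℝ)*y^6 + (11/3456 : ℝ)*y^7 + (1/1152 : ℝ)*y^8) * Real.exp (-(3:ℝ)*y))
      ((1 + x/2 + x^2/2 + x^3/8 + x^4/8 + x^5/48 + x^6/48 + x^7/384 + x^8/384) * Real.exp (-(3:ℝ)*x)) x := by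
    intro x _
    have hq := ((((((((((hasDerivAt_id' x).const_mul (6919/17496 : ℝ)).const_add (24415/52488 : ℝ)).add ((hasDerivAt_pow 2 x).const_mul (4003/11664 : ℝ))).add ((hasDerivAt_pow 3 x).const_mul (2059/11664 : ℝ))).add ((hasDerivAt_pow 4 x).const_mul (1573/15552 : ℝ))).add ((hasDerivAt_pow 5 x).const_mul (185/5184 : ℝ))).add ((hasDerivAt_pow 6 x).const_mul (149/10368 : ℝ))).add ((hasDerivAt_pow 7 x).const_mul (11/3456 : ℝ))).add ((hasDerivAt_pow 8 x).const_mul (1/1152 : ℝ))).neg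
    have he := (((hasDerivAt_id' x).const_mul (-(3:ℝ)))).exp
    refine (hq.mul he).congr_deriv ?_
    push_cast
    simp only [Pi.add_apply, Pi.neg_apply, Pi.mul_apply]
    ring
  rw [intervalIntegral.integral_eq_sub_of_hasDerivAt hF (by apply Continuous.intervalIntegrable; fun_prop)]
  norm_num
  try ring

lemma intPP3 : ∫ x in (0:ℝ)..1, (1 + x/2 + x^2/2 + x^3/8 + x^4/8 + x^5/48 + x^6/48 + x^7/384 + x^8/384 + x^9/3200 + x^10/3200) * Real.exp (-(3:ℝ)*x)
    = (124259/262440 : ℝ) - (17873819/10497600 : ℝ) * Real.exp (-3) := by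
  have hF : ∀ x ∈ Set.uIcc (0:ℝ) 1, HasDerivAt
      (fun y => -((124259/262440 : ℝ) + (36779/87480 : ℝ)*y + (22199/58320 : ℝ)*y^2 + (12479/58320 : ℝ)*y^3 + (10049/77760 : ℝ)*y^4 + (6809/129600 : ℝ)*y^5 + (5909/259200 : ℝ)*y^6 + (587/86400 : ℝ)*y^7 + (1/450 : ℝ)*y^8 + (13/28800 : ℝ)*y^9 + (1/9600 : ℝ)*y^10) * Real.exp (-(3:ℝ)*y))
      ((1 + x/2 + x^2/2 + x^3/8 + x^4/8 + x^5/48 + x^6/48 + x^7/384 + x^8/384 + x^9/3200 + x^10/3200) * Real.exp (-(3:ℝ)*x)) x := by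
    intro x _
    have hq := ((((((((((((hasDerivAt_id' x).const_mul (36779/87480 : ℝ)).const_add (124259/262440 : ℝ)).add ((hasDerivAt_pow 2 x).const_mul (22199/58320 : ℝ))).add ((hasDerivAt_pow 3 x).const_mul (12479/58320 : ℝ))).add ((hasDerivAt_pow 4 x).const_mul (10049/77760 : ℝ))).add ((hasDerivAt_pow 5 x).const_mul (6809/129600 : ℝ))).add ((hasDerivAt_pow 6 x).const_mul (5909/259200 : ℝ))).add ((hasDerivAt_pow 7 x).const_mul (587/86400 : ℝ))).add ((hasDerivAt_pow 8 x).const_mul (1/450 : ℝ))).add ((hasDerivAt_pow 9 x).const_mul (13/28800 : ℝ))).add ((hasDerivAt_pow 10 x).const_mul (1/9600 : ℝ))).neg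
    have he := (((hasDerivAt_id' x).const_mul (-(3:ℝ)))).exp
    refine (hq.mul he).congr_deriv ?_
    push_cast
    simp only [Pi.add_apply, Pi.neg_apply, Pi.mul_apply]
    ring
  rw [intervalIntegral.integral_eq_sub_of_hasDerivAt hF (by apply Continuous.intervalIntegrable; fun_prop)]
  norm_num
  try ring

lemma intPL0 : ∫ x in (0:ℝ)..1, (1 + x/2 + x^2/2 + x^3/8 + x^4/8 + x^5/48 + x^6/48 + x^7/384 + x^8/384) = (1432147/967680 : ℝ) := by
  have hF : ∀ x ∈ Set.uIcc (0:ℝ) 1, HasDerivAt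
      (fun y => (0 : ℝ) + (1 : ℝ)*y + (1/4 : ℝ)*y^2 + (1/6 : ℝ)*y^3 + (1/32 : ℝ)*y^4 + (1/40 : ℝ)*y^5 + (1/288 : ℝ)*y^6 + (1/336 : ℝ)*y^7 + (1/3072 : ℝ)*y^8 + (1/3456 : ℝ)*y^9)
      (1 + x/2 + x^2/2 + x^3/8 + x^4/8 + x^5/48 + x^6/48 + x^7/384 + x^8/384) x := by
    intro x _
    have hq := (((((((((((hasDerivAt_id' x).const_mul (1 : ℝ)).const_add (0 : ℝ)).add ((hasDerivAt_pow 2 x).const_mul (1/4 : ℝ))).add ((hasDerivAt_pow 3 x).const_mul (1/6 : ℝ))).add ((hasDerivAt_pow 4 x).const_mul (1/32 : ℝ))).add ((hasDerivAt_pow 5 x).const_mul (1/40 : ℝ))).add ((hasDerivAt_pow 6 x).const_mul (1/288 : ℝ))).add ((hasDerivAt_pow 7 x).const_mul (1/336 : ℝ))).add ((hasDerivAt_pow 8 x).const_mul (1/3072 : ℝ))).add ((hasDerivAt_pow 9 x).const_mul (1/3456 : ℝ)))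
    refine hq.congr_deriv ?_
    push_cast
    ring
  rw [intervalIntegral.integral_eq_sub_of_hasDerivAt hF (by apply Continuous.intervalIntegrable; fun_prop)]
  norm_num
  try ring

lemma intPP0 : ∫ x in (0:ℝ)..1, (1 + x/2 + x^2/2 + x^3/8 + x^4/8 + x^5/48 + x^6/48 + x^7/384 + x^8/384 + x^9/3200 + x^10/3200) = (393856301/266112000 : ℝ) := by
  have hF : ∀ x ∈ Set.uIcc (0:ℝ) 1, HasDerivAt
      (fun y => (0 : ℝ) + (1 : ℝ)*y + (1/4 : ℝ)*y^2 + (1/6 : ℝ)*y^3 + (1/32 : ℝ)*y^4 + (1/40 : ℝ)*y^5 + (1/288 : ℝ)*y^6 + (1/336 : ℝ)*y^7 + (1/3072 : ℝ)*y^8 + (1/3456 : ℝ)*y^9 + (1/32000 : ℝ)*y^10 + (1/35200 : ℝ)*y^11)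
      (1 + x/2 + x^2/2 + x^3/8 + x^4/8 + x^5/48 + x^6/48 + x^7/384 + x^8/384 + x^9/3200 + x^10/3200) x := by
    intro x _
    have hq := (((((((((((((hasDerivAt_id' x).const_mul (1 : ℝ)).const_add (0 : ℝ)).add ((hasDerivAt_pow 2 x).const_mul (1/4 : ℝ))).add ((hasDerivAt_pow 3 x).const_mul (1/6 : ℝ))).add ((hasDerivAt_pow 4 x).const_mul (1/32 : ℝ))).add ((hasDerivAt_pow 5 x).const_mul (1/40 : ℝ))).add ((hasDerivAt_pow 6 x).const_mul (1/288 : ℝ))).add ((hasDerivAt_pow 7 x).const_mul (1/336 : ℝ))).add ((hasDerivAt_pow 8 x).const_mul (1/3072 : ℝ))).add ((hasDerivAt_pow 9 x).const_mul (1/3456 : ℝ))).add ((hasDerivAt_pow 10 x).const_mul (1/32000 : ℝ))).add ((hasDerivAt_pow 11 x).const_mul (1/35200 : ℝ)))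
    refine hq.congr_deriv ?_
    push_cast
    ring
  rw [intervalIntegral.integral_eq_sub_of_hasDerivAt hF (by apply Continuous.intervalIntegrable; fun_prop)]
  norm_num
  try ring

lemma ae_ne_zero : ∀ᵐ x ∂(volume.restrict (Set.Icc (0:ℝ) 1)), x ≠ (0:ℝ) := by
  rw [MeasureTheory.ae_iff]
  have h : {x : ℝ | ¬ x ≠ 0} = {0} := by ext y; simp
  rw [h, Measure.restrict_apply (measurableSet_singleton 0)]
  exact measure_mono_null Set.inter_subset_left Real.volume_singleton

lemma intB_lower (c : ℝ) (hc : c ≤ 0) :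
    (∫ x in (0:ℝ)..1,
        (1 + x/2 + x^2/2 + x^3/8 + x^4/8 + x^5/48 + x^6/48 + x^7/384 + x^8/384)
          * Real.exp (c*x)) ≤
      ∫ x in (0:ℝ)..1, ((1+x)*Real.exp (x^2/2) - 1)/x * Real.exp (c*x) := by
  apply intervalIntegral.integral_mono_ae_restrict (by norm_num)
    (by apply Continuous.intervalIntegrable; fun_prop) (intgB_integrable c hc)
  filter_upwards [ae_ne_zero, MeasureTheory.ae_restrict_mem measurableSet_Icc] with x hx hmem
  have hx0 : 0 < x := lt_of_le_of_ne hmem.1 (Ne.symm hx)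
  exact mul_le_mul_of_nonneg_right (g_lb hx0 hmem.2) (Real.exp_nonneg _)

lemma intB_upper (c : ℝ) (hc : c ≤ 0) :
    (∫ x in (0:ℝ)..1, ((1+x)*Real.exp (x^2/2) - 1)/x * Real.exp (c*x)) ≤
      ∫ x in (0:ℝ)..1,
        (1 + x/2 + x^2/2 + x^3/8 + x^4/8 + x^5/48 + x^6/48 + x^7/384 + x^8/384
          + x^9/3200 + x^10/3200) * Real.exp (c*x) := by
  apply intervalIntegral.integral_mono_on (by norm_num) (intgB_integrable c hc)
    (by apply Continuous.intervalIntegrable; fun_prop)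
  intro x hx
  rcases eq_or_lt_of_le hx.1 with h0 | h0
  · rw [← h0]
    norm_num
  · exact mul_le_mul_of_nonneg_right (g_ub h0 hx.2) (Real.exp_nonneg _)

lemma PP_int_le (c : ℝ) (hc : c ≤ 0) :
    (∫ x in (0:ℝ)..1,
        (1 + x/2 + x^2/2 + x^3/8 + x^4/8 + x^5/48 + x^6/48 + x^7/384 + x^8/384
          + x^9/3200 + x^10/3200) * Real.exp (c*x)) ≤
      ∫ x in (0:ℝ)..1,
        (1 + x/2 + x^2/2 + x^3/8 + x^4/8 + x^5/48 + x^6/48 + x^7/384 + x^8/384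
          + x^9/3200 + x^10/3200) := by
  apply intervalIntegral.integral_mono_on (by norm_num)
    (by apply Continuous.intervalIntegrable; fun_prop)
    (by apply Continuous.intervalIntegrable; fun_prop)
  intro x hx
  have h1 : Real.exp (c*x) ≤ 1 := Real.exp_le_one_iff.mpr (by nlinarith [hx.1, hx.2])
  have h2 : (0:ℝ) ≤ 1 + x/2 + x^2/2 + x^3/8 + x^4/8 + x^5/48 + x^6/48 + x^7/384 + x^8/384
      + x^9/3200 + x^10/3200 := by
    have h0 := hx.1
    linarith [pow_nonneg h0 2, pow_nonneg h0 3, pow_nonneg h0 4, pow_nonneg h0 5,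
      pow_nonneg h0 6, pow_nonneg h0 7, pow_nonneg h0 8, pow_nonneg h0 9, pow_nonneg h0 10]
  nlinarith [h2]


noncomputable def dd : ℝ := Real.exp (-(1/2))

lemma dd_lb : (0.60653065915 : ℝ) < dd := d_lb
lemma dd_ub : dd < (0.60653065976 : ℝ) := d_ub
lemma dd_pos : (0:ℝ) < dd := Real.exp_pos _
lemma dd_lt_one : dd < 1 := by have := dd_ub; linarith

lemma dpow_lo' (n : ℕ) (r : ℝ) (hr : r ≤ (0.60653065915:ℝ)^n) : r ≤ dd^n :=
  hr.trans (pow_le_pow_left₀ (by norm_num) dd_lb.le n)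

lemma dpow_hi' (n : ℕ) (r : ℝ) (hr : (0.60653065976:ℝ)^n ≤ r) : dd^n ≤ r :=
  le_trans (pow_le_pow_left₀ dd_pos.le dd_ub.le n) hr

lemma exp_pow (k : ℕ) : Real.exp (-(k:ℝ)^2/2) = dd^(k^2) := by
  unfold dd
  rw [← Real.exp_nat_mul]
  congr 1
  push_cast
  ring

lemma em1 : Real.exp (-1) = dd^2 := by
  unfold dd; rw [← Real.exp_nat_mul]; norm_num

lemma em2 : Real.exp (-2) = dd^4 := by
  unfold dd; rw [← Real.exp_nat_mul]; norm_num

lemma em3 : Real.exp (-3) = dd^6 := by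
  unfold dd; rw [← Real.exp_nat_mul]; norm_num

lemma em4 : Real.exp (-4) = dd^8 := by
  unfold dd; rw [← Real.exp_nat_mul]; norm_num

lemma em5 : Real.exp (-5) = dd^10 := by
  unfold dd; rw [← Real.exp_nat_mul]; norm_num

lemma expm4_le : Real.exp (-4) ≤ 1/50 := by
  rw [em4]; exact dpow_hi' 8 _ (by norm_num)

lemma S_sum : Summable (fun j : ℕ => Real.exp (-(j:ℝ)^2/2)) := by
  apply Summable.of_nonneg_of_le (fun j => Real.exp_nonneg _) (fun j => ?_)
    (summable_geometric_of_lt_one dd_pos.le dd_lt_one)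
  rw [exp_pow j]
  exact pow_le_pow_of_le_one dd_pos.le dd_lt_one.le (Nat.le_self_pow (by norm_num) j)

lemma S_lo : (1.7533141274:ℝ) ≤ ∑' j : ℕ, Real.exp (-(j:ℝ)^2/2) := by
  have h := Summable.sum_le_tsum (Finset.range 6) (fun i _ => Real.exp_nonneg _) S_sum
  refine le_trans ?_ h
  rw [Finset.sum_range_succ, Finset.sum_range_succ, Finset.sum_range_succ,
      Finset.sum_range_succ, Finset.sum_range_succ, Finset.sum_range_one,
      exp_pow 0, exp_pow 1, exp_pow 2, exp_pow 3, exp_pow 4, exp_pow 5]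
  have b0 : dd^(0^2) = 1 := by norm_num
  have b1 : (0.60653065915:ℝ) ≤ dd^(1^2) := dpow_lo' _ _ (by norm_num)
  have b4 : (0.1353352827:ℝ) ≤ dd^(2^2) := dpow_lo' _ _ (by norm_num)
  have b9 : (0.0111089964:ℝ) ≤ dd^(3^2) := dpow_lo' _ _ (by norm_num)
  have b16 : (0.0003354626:ℝ) ≤ dd^(4^2) := dpow_lo' _ _ (by norm_num)
  have b25 : (0.0000037266:ℝ) ≤ dd^(5^2) := dpow_lo' _ _ (by norm_num)
  linarith

lemma S_one_le : (1:ℝ) ≤ ∑' j : ℕ, Real.exp (-(j:ℝ)^2/2) := by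
  linarith [S_lo]

lemma S_pos : (0:ℝ) < ∑' j : ℕ, Real.exp (-(j:ℝ)^2/2) := by linarith [S_lo]

lemma S_hi : (∑' j : ℕ, Real.exp (-(j:ℝ)^2/2)) ≤ (1.7533141491:ℝ) := by
  rw [← Summable.sum_add_tsum_nat_add 6 S_sum]
  have htail : (∑' j : ℕ, Real.exp (-((j+6:ℕ):ℝ)^2/2)) ≤ (0.0000000153:ℝ) * (1-1/50)⁻¹ := by
    have hper : ∀ j : ℕ, Real.exp (-((j+6:ℕ):ℝ)^2/2) ≤ (0.0000000153:ℝ) * (1/50)^j := by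
      intro j
      rw [exp_pow (j+6)]
      have h1 : dd^((j+6)^2) ≤ dd^36 * (dd^12)^j := by
        rw [← pow_mul, ← pow_add]
        apply pow_le_pow_of_le_one dd_pos.le dd_lt_one.le
        calc 36 + 12*j ≤ j*j + (36 + 12*j) := Nat.le_add_left _ _
          _ = (j+6)^2 := by ring
      have h2 : dd^36 ≤ (0.0000000153:ℝ) := dpow_hi' _ _ (by norm_num)
      have h3 : (dd^12)^j ≤ ((1:ℝ)/50)^j :=
        pow_le_pow_left₀ (pow_nonneg dd_pos.le _) (dpow_hi' 12 _ (by norm_num)) j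
      calc dd^((j+6)^2) ≤ dd^36 * (dd^12)^j := h1
        _ ≤ 0.0000000153 * (1/50)^j := by
            apply mul_le_mul h2 h3 (pow_nonneg (pow_nonneg dd_pos.le _) _) (by norm_num)
    calc (∑' j : ℕ, Real.exp (-((j+6:ℕ):ℝ)^2/2))
        ≤ ∑' j : ℕ, (0.0000000153:ℝ) * (1/50)^j := by
          apply Summable.tsum_le_tsum hper ((summable_nat_add_iff 6).mpr S_sum)
          exact (summable_geometric_of_lt_one (by norm_num) (by norm_num)).mul_left _
      _ = (0.0000000153:ℝ) * (1-1/50)⁻¹ := by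
          rw [tsum_mul_left, tsum_geometric_of_lt_one (by norm_num) (by norm_num)]
  have hhead : (∑ i ∈ Finset.range 6, Real.exp (-(i:ℝ)^2/2)) ≤ 1.7533141291 := by
    rw [Finset.sum_range_succ, Finset.sum_range_succ, Finset.sum_range_succ,
        Finset.sum_range_succ, Finset.sum_range_succ, Finset.sum_range_one,
        exp_pow 0, exp_pow 1, exp_pow 2, exp_pow 3, exp_pow 4, exp_pow 5]
    have b0 : dd^(0^2) = 1 := by norm_num
    have b1 : dd^(1^2) ≤ (0.60653065976:ℝ) := dpow_hi' _ _ (by norm_num)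
    have b4 : dd^(2^2) ≤ (0.1353352833:ℝ) := dpow_hi' _ _ (by norm_num)
    have b9 : dd^(3^2) ≤ (0.0111089966:ℝ) := dpow_hi' _ _ (by norm_num)
    have b16 : dd^(4^2) ≤ (0.0003354627:ℝ) := dpow_hi' _ _ (by norm_num)
    have b25 : dd^(5^2) ≤ (0.0000037267:ℝ) := dpow_hi' _ _ (by norm_num)
    linarith
  have : (0.0000000153:ℝ) * (1-1/50)⁻¹ ≤ 0.0000000157 := by norm_num
  linarith

lemma frac_lo {dp S I dpl Sh Il : ℝ} (h1 : dpl ≤ dp) (h2 : S ≤ Sh) (h3 : Il ≤ I)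
    (h4 : 0 ≤ dpl) (h5 : 0 < S) (h6 : 0 ≤ Il) : dpl/Sh*Il ≤ dp/S*I := by
  have hdiv : dpl/Sh ≤ dp/S := div_le_div₀ (le_trans h4 h1) h1 h5 h2
  exact mul_le_mul hdiv h3 h6 (div_nonneg (le_trans h4 h1) h5.le)

lemma frac_hi {dp S I dph Sl Ih : ℝ} (h1 : dp ≤ dph) (h2 : Sl ≤ S) (h3 : I ≤ Ih)
    (h4 : 0 ≤ dp) (h5 : 0 < Sl) (h6 : 0 ≤ I) : dp/S*I ≤ dph/Sl*Ih := by
  have hdiv : dp/S ≤ dph/Sl := div_le_div₀ (le_trans h4 h1) h1 h5 h2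
  exact mul_le_mul hdiv h3 h6 (div_nonneg (le_trans h4 h1) h5.le)

lemma IB0_lo : (1.4799799520:ℝ) ≤
    ∫ x in (0:ℝ)..1, ((1+x)*Real.exp (x^2/2) - 1)/x * Real.exp (-(0:ℝ)*x) := by
  have h := intB_lower (-(0:ℝ)) (by norm_num)
  have he : (∫ x in (0:ℝ)..1, (1 + x/2 + x^2/2 + x^3/8 + x^4/8 + x^5/48 + x^6/48 + x^7/384 + x^8/384) * Real.exp (-(0:ℝ)*x))
      = ∫ x in (0:ℝ)..1, (1 + x/2 + x^2/2 + x^3/8 + x^4/8 + x^5/48 + x^6/48 + x^7/384 + x^8/384) := by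
    apply intervalIntegral.integral_congr
    intro x _
    norm_num
  rw [he, intPL0] at h
  linarith

lemma IB0_hi : (∫ x in (0:ℝ)..1, ((1+x)*Real.exp (x^2/2) - 1)/x * Real.exp (-(0:ℝ)*x))
    ≤ (1.4800396112:ℝ) := by
  have h := intB_upper (-(0:ℝ)) (by norm_num)
  have he : (∫ x in (0:ℝ)..1, (1 + x/2 + x^2/2 + x^3/8 + x^4/8 + x^5/48 + x^6/48 + x^7/384 + x^8/384 + x^9/3200 + x^10/3200) * Real.exp (-(0:ℝ)*x))
      = ∫ x in (0:ℝ)..1, (1 + x/2 + x^2/2 + x^3/8 + x^4/8 + x^5/48 + x^6/48 + x^7/384 + x^8/384 + x^9/3200 + x^10/3200) := by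
    apply intervalIntegral.integral_congr
    intro x _
    norm_num
  rw [he, intPP0] at h
  linarith

lemma IB1_lo : (0.8727498698:ℝ) ≤
    ∫ x in (0:ℝ)..1, ((1+x)*Real.exp (x^2/2) - 1)/x * Real.exp (-(1:ℝ)*x) := by
  have h := intB_lower (-(1:ℝ)) (by norm_num)
  rw [intPL1, em1] at h
  have hb : dd^2 ≤ (0.60653065976^2:ℝ) := dpow_hi' _ _ (by norm_num)
  nlinarith [h, hb]

lemma IB1_hi : (∫ x in (0:ℝ)..1, ((1+x)*Real.exp (x^2/2) - 1)/x * Real.exp (-(1:ℝ)*x))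
    ≤ (0.8727768605:ℝ) := by
  have h := intB_upper (-(1:ℝ)) (by norm_num)
  rw [intPP1, em1] at h
  have hb : (0.60653065915^2:ℝ) ≤ dd^2 := dpow_lo' _ _ (by norm_num)
  nlinarith [h, hb]

lemma IB2_lo : (0.5599138777:ℝ) ≤
    ∫ x in (0:ℝ)..1, ((1+x)*Real.exp (x^2/2) - 1)/x * Real.exp (-(2:ℝ)*x) := by
  have h := intB_lower (-(2:ℝ)) (by norm_num)
  rw [intPL2, em2] at h
  have hb : dd^4 ≤ (0.60653065976^4:ℝ) := dpow_hi' _ _ (by norm_num)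
  nlinarith [h, hb]

lemma IB2_hi : (∫ x in (0:ℝ)..1, ((1+x)*Real.exp (x^2/2) - 1)/x * Real.exp (-(2:ℝ)*x))
    ≤ (0.5599236334:ℝ) := by
  have h := intB_upper (-(2:ℝ)) (by norm_num)
  rw [intPP2, em2] at h
  have hb : (0.60653065915^4:ℝ) ≤ dd^4 := dpow_lo' _ _ (by norm_num)
  nlinarith [h, hb]

lemma IB3_lo : (0.3887015203:ℝ) ≤
    ∫ x in (0:ℝ)..1, ((1+x)*Real.exp (x^2/2) - 1)/x * Real.exp (-(3:ℝ)*x) := by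
  have h := intB_lower (-(3:ℝ)) (by norm_num)
  rw [intPL3, em3] at h
  have hb : dd^6 ≤ (0.60653065976^6:ℝ) := dpow_hi' _ _ (by norm_num)
  nlinarith [h, hb]

lemma IB3_hi : (∫ x in (0:ℝ)..1, ((1+x)*Real.exp (x^2/2) - 1)/x * Real.exp (-(3:ℝ)*x))
    ≤ (0.3887055097:ℝ) := by
  have h := intB_upper (-(3:ℝ)) (by norm_num)
  rw [intPP3, em3] at h
  have hb : (0.60653065915^6:ℝ) ≤ dd^6 := dpow_lo' _ _ (by norm_num)
  nlinarith [h, hb]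

end ImprovedStep34

set_option maxHeartbeats 4000000

/-- The expected number of uniform deviates used by steps 3 and 4 of the improved
Algorithm 7: with `D(k) = e^{−k²/2} / ∑_{j≥0} e^{−j²/2}` and, for `k ≥ 1`,
`t_k(x) = ∑_{i=1}^{k−1} i e^{−x(i−1)} (1 − e^{−x}) + k e^{−x(k−1)}`,
the quantity
`W = ∑_{k=1}^{∞} D(k) ∫₀¹ t_k(x) e^{x} dx
   + ∑_{k=0}^{∞} D(k) ∫₀¹ (((1+x) e^{x²/2} − 1)/x) e^{−kx} dx`
satisfies `2.01 < W < 2.02`.  (The first series is reindexed by `k ↦ k + 1`.) -/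
theorem improved_step34_expected_deviates :
    let D : ℕ → ℝ := fun k =>
      Real.exp (-(k : ℝ) ^ 2 / 2) / ∑' j : ℕ, Real.exp (-(j : ℝ) ^ 2 / 2)
    let t : ℕ → ℝ → ℝ := fun k x =>
      (∑ i ∈ Finset.Icc 1 (k - 1),
          (i : ℝ) * Real.exp (-x * ((i : ℝ) - 1)) * (1 - Real.exp (-x))) +
        (k : ℝ) * Real.exp (-x * ((k : ℝ) - 1))
    let W : ℝ :=
      (∑' k : ℕ, D (k + 1) * ∫ x in (0 : ℝ)..1, t (k + 1) x * Real.exp x) +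
        ∑' k : ℕ, D k *
          ∫ x in (0 : ℝ)..1,
            ((1 + x) * Real.exp (x ^ 2 / 2) - 1) / x * Real.exp (-(k : ℝ) * x)
    2.01 < W ∧ W < 2.02 := by
  intro D t W
  have h0 : W = (∑' k : ℕ, D (k + 1) * ∫ x in (0 : ℝ)..1,
        (∑ i ∈ Finset.range (k+1), Real.exp (-(i : ℝ) * x)) * Real.exp x) +
      ∑' k : ℕ, D k * ∫ x in (0 : ℝ)..1,
        ((1 + x) * Real.exp (x ^ 2 / 2) - 1) / x * Real.exp (-(k : ℝ) * x) := by
    simp only [W, t, ImprovedStep34.t_eq]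
  rw [h0]
  set S : ℝ := ∑' j : ℕ, Real.exp (-(j:ℝ)^2/2) with hSdef
  have hD : ∀ k : ℕ, D k = ImprovedStep34.dd^(k^2) / S := by
    intro k
    simp only [D]
    rw [ImprovedStep34.exp_pow]
  have hSlo : (1.7533141274:ℝ) ≤ S := ImprovedStep34.S_lo
  have hShi : S ≤ (1.7533141491:ℝ) := ImprovedStep34.S_hi
  have hS1 : (1:ℝ) ≤ S := ImprovedStep34.S_one_le
  have hSpos : (0:ℝ) < S := ImprovedStep34.S_pos
  have ddpos := ImprovedStep34.dd_pos
  have ddlt1 := ImprovedStep34.dd_lt_one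
  set F := fun k : ℕ => D (k + 1) * ∫ x in (0:ℝ)..1,
      (∑ i ∈ Finset.range (k + 1), Real.exp (-(i:ℝ) * x)) * Real.exp x with hF
  set G := fun k : ℕ => D k * ∫ x in (0:ℝ)..1,
      ((1 + x) * Real.exp (x ^ 2 / 2) - 1) / x * Real.exp (-(k:ℝ) * x) with hG
  have hIAnn : ∀ k:ℕ, 0 ≤ ∫ x in (0:ℝ)..1,
      (∑ i ∈ Finset.range k, Real.exp (-(i:ℝ) * x)) * Real.exp x := ImprovedStep34.intA_nonneg
  have hIBnn : ∀ k:ℕ, 0 ≤ ∫ x in (0:ℝ)..1,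
      ((1 + x) * Real.exp (x ^ 2 / 2) - 1) / x * Real.exp (-(k:ℝ) * x) := fun k =>
    intervalIntegral.integral_nonneg (by norm_num) (fun u hu => ImprovedStep34.g_nonneg hu.1 _)
  have hIBle : ∀ k:ℕ, (∫ x in (0:ℝ)..1,
      ((1 + x) * Real.exp (x ^ 2 / 2) - 1) / x * Real.exp (-(k:ℝ) * x)) ≤ 1.4801 := by
    intro k
    have hc : -(k:ℝ) ≤ 0 := neg_nonpos.mpr (Nat.cast_nonneg k)
    have h1 := ImprovedStep34.intB_upper (-(k:ℝ)) hc
    have h2 := ImprovedStep34.PP_int_le (-(k:ℝ)) hc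
    rw [ImprovedStep34.intPP0] at h2
    linarith
  have hDnn : ∀ k:ℕ, 0 ≤ D k := fun k => by
    rw [hD]; exact div_nonneg (pow_nonneg ddpos.le _) hSpos.le
  have hDle : ∀ k:ℕ, D k ≤ ImprovedStep34.dd^(k^2) := fun k => by
    rw [hD]; exact div_le_self (pow_nonneg ddpos.le _) hS1
  have hFnn : ∀ k, 0 ≤ F k := fun k => mul_nonneg (hDnn _) (hIAnn _)
  have hGnn : ∀ k, 0 ≤ G k := fun k => mul_nonneg (hDnn _) (hIBnn _)
  have hFle : ∀ k:ℕ, F k ≤ ImprovedStep34.dd^((k+1)^2) * (3*((k+1:ℕ):ℝ)) := fun k =>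
    mul_le_mul (hDle (k+1)) (ImprovedStep34.intA_le (k+1)) (hIAnn (k+1))
      (pow_nonneg ddpos.le _)
  have hMsum : Summable (fun k:ℕ => ImprovedStep34.dd^(k+1) * (3*((k+1:ℕ):ℝ))) := by
    have m1 : Summable (fun k:ℕ => (k:ℝ) * ImprovedStep34.dd^k) := by
      have h := summable_pow_mul_geometric_of_norm_lt_one (R := ℝ) 1
        (r := ImprovedStep34.dd) (by rw [Real.norm_eq_abs, abs_of_pos ddpos]; exact ddlt1)
      simpa using h
    have m2 : Summable (fun k:ℕ => ImprovedStep34.dd^k) :=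
      summable_geometric_of_lt_one ddpos.le ddlt1
    have m3 := (m1.mul_left (3*ImprovedStep34.dd)).add (m2.mul_left (3*ImprovedStep34.dd))
    apply m3.congr
    intro k
    push_cast
    ring
  have hFsum : Summable F := by
    apply Summable.of_nonneg_of_le hFnn (fun k => ?_) hMsum
    calc F k ≤ ImprovedStep34.dd^((k+1)^2) * (3*((k+1:ℕ):ℝ)) := hFle k
      _ ≤ ImprovedStep34.dd^(k+1) * (3*((k+1:ℕ):ℝ)) := by
          apply mul_le_mul_of_nonneg_right
            (pow_le_pow_of_le_one ddpos.le ddlt1.le (Nat.le_self_pow (by norm_num) _))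
          positivity
  have hGle' : ∀ k:ℕ, G k ≤ ImprovedStep34.dd^(k^2) * 1.4801 := fun k =>
    mul_le_mul (hDle k) (hIBle k) (hIBnn k) (pow_nonneg ddpos.le _)
  have hGsum : Summable G := by
    apply Summable.of_nonneg_of_le hGnn (fun k => ?_)
      ((summable_geometric_of_lt_one ddpos.le ddlt1).mul_right 1.4801)
    calc G k ≤ ImprovedStep34.dd^(k^2) * 1.4801 := hGle' k
      _ ≤ ImprovedStep34.dd^k * 1.4801 := by
          apply mul_le_mul_of_nonneg_right
            (pow_le_pow_of_le_one ddpos.le ddlt1.le (Nat.le_self_pow (by norm_num) _))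
          norm_num
  have bF0lo : (0.60653065915:ℝ)/1.7533141491*1.7182818283 ≤ F 0 := by
    have e : F 0 = D 1 * ∫ x in (0:ℝ)..1,
        (∑ i ∈ Finset.range 1, Real.exp (-(i:ℝ) * x)) * Real.exp x := rfl
    rw [e, hD 1]
    apply ImprovedStep34.frac_lo (ImprovedStep34.dpow_lo' _ _ (by norm_num)) hShi ?_
      (by norm_num) hSpos (by norm_num)
    rw [ImprovedStep34.intA1]; linarith [Real.exp_one_gt_d9]
  have bF0hi : F 0 ≤ (0.60653065976:ℝ)/1.7533141274*1.7182818286 := by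
    have e : F 0 = D 1 * ∫ x in (0:ℝ)..1,
        (∑ i ∈ Finset.range 1, Real.exp (-(i:ℝ) * x)) * Real.exp x := rfl
    rw [e, hD 1]
    apply ImprovedStep34.frac_hi (ImprovedStep34.dpow_hi' _ _ (by norm_num)) hSlo ?_
      (pow_nonneg ddpos.le _) (by norm_num) (hIAnn _)
    rw [ImprovedStep34.intA1]; linarith [Real.exp_one_lt_d9]
  have bF1lo : (0.1353352827:ℝ)/1.7533141491*2.7182818283 ≤ F 1 := by
    have e : F 1 = D 2 * ∫ x in (0:ℝ)..1,
        (∑ i ∈ Finset.range 2, Real.exp (-(i:ℝ) * x)) * Real.exp x := rfl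
    rw [e, hD 2]
    apply ImprovedStep34.frac_lo (ImprovedStep34.dpow_lo' _ _ (by norm_num)) hShi ?_
      (by norm_num) hSpos (by norm_num)
    rw [ImprovedStep34.intA2]; linarith [Real.exp_one_gt_d9]
  have bF1hi : F 1 ≤ (0.1353352833:ℝ)/1.7533141274*2.7182818286 := by
    have e : F 1 = D 2 * ∫ x in (0:ℝ)..1,
        (∑ i ∈ Finset.range 2, Real.exp (-(i:ℝ) * x)) * Real.exp x := rfl
    rw [e, hD 2]
    apply ImprovedStep34.frac_hi (ImprovedStep34.dpow_hi' _ _ (by norm_num)) hSlo ?_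
      (pow_nonneg ddpos.le _) (by norm_num) (hIAnn _)
    rw [ImprovedStep34.intA2]; linarith [Real.exp_one_lt_d9]
  have bF2lo : (0.0111089964:ℝ)/1.7533141491*3.350402387 ≤ F 2 := by
    have e : F 2 = D 3 * ∫ x in (0:ℝ)..1,
        (∑ i ∈ Finset.range 3, Real.exp (-(i:ℝ) * x)) * Real.exp x := rfl
    rw [e, hD 3]
    apply ImprovedStep34.frac_lo (ImprovedStep34.dpow_lo' _ _ (by norm_num)) hShi ?_
      (by norm_num) hSpos (by norm_num)
    rw [ImprovedStep34.intA3, ImprovedStep34.em1]; linarith [Real.exp_one_gt_d9, ImprovedStep34.dpow_hi' 2 (0.3678794413:ℝ) (by norm_num)]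
  have bF2hi : F 2 ≤ (0.0111089966:ℝ)/1.7533141274*3.3504023882 := by
    have e : F 2 = D 3 * ∫ x in (0:ℝ)..1,
        (∑ i ∈ Finset.range 3, Real.exp (-(i:ℝ) * x)) * Real.exp x := rfl
    rw [e, hD 3]
    apply ImprovedStep34.frac_hi (ImprovedStep34.dpow_hi' _ _ (by norm_num)) hSlo ?_
      (pow_nonneg ddpos.le _) (by norm_num) (hIAnn _)
    rw [ImprovedStep34.intA3, ImprovedStep34.em1]; linarith [Real.exp_one_lt_d9, ImprovedStep34.dpow_lo' 2 (0.3678794404:ℝ) (by norm_num)]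
  have bF3lo : (0.0003354626:ℝ)/1.7533141491*3.7827347453 ≤ F 3 := by
    have e : F 3 = D 4 * ∫ x in (0:ℝ)..1,
        (∑ i ∈ Finset.range 4, Real.exp (-(i:ℝ) * x)) * Real.exp x := rfl
    rw [e, hD 4]
    apply ImprovedStep34.frac_lo (ImprovedStep34.dpow_lo' _ _ (by norm_num)) hShi ?_
      (by norm_num) hSpos (by norm_num)
    rw [ImprovedStep34.intA4, ImprovedStep34.em1, ImprovedStep34.em2]; linarith [Real.exp_one_gt_d9, ImprovedStep34.dpow_hi' 2 (0.3678794413:ℝ) (by norm_num), ImprovedStep34.dpow_hi' 4 (0.1353352833:ℝ) (by norm_num)]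
  have bF3hi : F 3 ≤ (0.0003354627:ℝ)/1.7533141274*3.7827347469 := by
    have e : F 3 = D 4 * ∫ x in (0:ℝ)..1,
        (∑ i ∈ Finset.range 4, Real.exp (-(i:ℝ) * x)) * Real.exp x := rfl
    rw [e, hD 4]
    apply ImprovedStep34.frac_hi (ImprovedStep34.dpow_hi' _ _ (by norm_num)) hSlo ?_
      (pow_nonneg ddpos.le _) (by norm_num) (hIAnn _)
    rw [ImprovedStep34.intA4, ImprovedStep34.em1, ImprovedStep34.em2]; linarith [Real.exp_one_lt_d9, ImprovedStep34.dpow_lo' 2 (0.3678794404:ℝ) (by norm_num), ImprovedStep34.dpow_lo' 4 (0.1353352827:ℝ) (by norm_num)]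
  have eG0 : G 0 = D 0 * ∫ x in (0:ℝ)..1,
      ((1 + x) * Real.exp (x ^ 2 / 2) - 1) / x * Real.exp (-((0:ℕ):ℝ) * x) := rfl
  have hcG0 : (∫ x in (0:ℝ)..1,
      ((1 + x) * Real.exp (x ^ 2 / 2) - 1) / x * Real.exp (-((0:ℕ):ℝ) * x))
      = ∫ x in (0:ℝ)..1,
      ((1+x)*Real.exp (x^2/2) - 1)/x * Real.exp (-(0:ℝ)*x) :=
    intervalIntegral.integral_congr (fun x _ => by norm_num)
  have bG0lo : (1:ℝ)/1.7533141491*1.4799799520 ≤ G 0 := by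
    rw [eG0, hD 0, hcG0]
    exact ImprovedStep34.frac_lo (ImprovedStep34.dpow_lo' _ _ (by norm_num)) hShi
      ImprovedStep34.IB0_lo (by norm_num) hSpos (by norm_num)
  have bG0hi : G 0 ≤ (1:ℝ)/1.7533141274*1.4800396112 := by
    rw [eG0, hD 0, hcG0]
    exact ImprovedStep34.frac_hi (ImprovedStep34.dpow_hi' _ _ (by norm_num)) hSlo
      ImprovedStep34.IB0_hi (pow_nonneg ddpos.le _) (by norm_num)
      (by rw [← hcG0]; exact hIBnn 0)
  have eG1 : G 1 = D 1 * ∫ x in (0:ℝ)..1,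
      ((1 + x) * Real.exp (x ^ 2 / 2) - 1) / x * Real.exp (-((1:ℕ):ℝ) * x) := rfl
  have hcG1 : (∫ x in (0:ℝ)..1,
      ((1 + x) * Real.exp (x ^ 2 / 2) - 1) / x * Real.exp (-((1:ℕ):ℝ) * x))
      = ∫ x in (0:ℝ)..1,
      ((1+x)*Real.exp (x^2/2) - 1)/x * Real.exp (-(1:ℝ)*x) :=
    intervalIntegral.integral_congr (fun x _ => by norm_num)
  have bG1lo : (0.60653065915:ℝ)/1.7533141491*0.8727498698 ≤ G 1 := by
    rw [eG1, hD 1, hcG1]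
    exact ImprovedStep34.frac_lo (ImprovedStep34.dpow_lo' _ _ (by norm_num)) hShi
      ImprovedStep34.IB1_lo (by norm_num) hSpos (by norm_num)
  have bG1hi : G 1 ≤ (0.60653065976:ℝ)/1.7533141274*0.8727768605 := by
    rw [eG1, hD 1, hcG1]
    exact ImprovedStep34.frac_hi (ImprovedStep34.dpow_hi' _ _ (by norm_num)) hSlo
      ImprovedStep34.IB1_hi (pow_nonneg ddpos.le _) (by norm_num)
      (by rw [← hcG1]; exact hIBnn 1)
  have eG2 : G 2 = D 2 * ∫ x in (0:ℝ)..1,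
      ((1 + x) * Real.exp (x ^ 2 / 2) - 1) / x * Real.exp (-((2:ℕ):ℝ) * x) := rfl
  have hcG2 : (∫ x in (0:ℝ)..1,
      ((1 + x) * Real.exp (x ^ 2 / 2) - 1) / x * Real.exp (-((2:ℕ):ℝ) * x))
      = ∫ x in (0:ℝ)..1,
      ((1+x)*Real.exp (x^2/2) - 1)/x * Real.exp (-(2:ℝ)*x) :=
    intervalIntegral.integral_congr (fun x _ => by norm_num)
  have bG2lo : (0.1353352827:ℝ)/1.7533141491*0.5599138777 ≤ G 2 := by
    rw [eG2, hD 2, hcG2]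
    exact ImprovedStep34.frac_lo (ImprovedStep34.dpow_lo' _ _ (by norm_num)) hShi
      ImprovedStep34.IB2_lo (by norm_num) hSpos (by norm_num)
  have bG2hi : G 2 ≤ (0.1353352833:ℝ)/1.7533141274*0.5599236334 := by
    rw [eG2, hD 2, hcG2]
    exact ImprovedStep34.frac_hi (ImprovedStep34.dpow_hi' _ _ (by norm_num)) hSlo
      ImprovedStep34.IB2_hi (pow_nonneg ddpos.le _) (by norm_num)
      (by rw [← hcG2]; exact hIBnn 2)
  have eG3 : G 3 = D 3 * ∫ x in (0:ℝ)..1,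
      ((1 + x) * Real.exp (x ^ 2 / 2) - 1) / x * Real.exp (-((3:ℕ):ℝ) * x) := rfl
  have hcG3 : (∫ x in (0:ℝ)..1,
      ((1 + x) * Real.exp (x ^ 2 / 2) - 1) / x * Real.exp (-((3:ℕ):ℝ) * x))
      = ∫ x in (0:ℝ)..1,
      ((1+x)*Real.exp (x^2/2) - 1)/x * Real.exp (-(3:ℝ)*x) :=
    intervalIntegral.integral_congr (fun x _ => by norm_num)
  have bG3lo : (0.0111089964:ℝ)/1.7533141491*0.3887015203 ≤ G 3 := by
    rw [eG3, hD 3, hcG3]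
    exact ImprovedStep34.frac_lo (ImprovedStep34.dpow_lo' _ _ (by norm_num)) hShi
      ImprovedStep34.IB3_lo (by norm_num) hSpos (by norm_num)
  have bG3hi : G 3 ≤ (0.0111089966:ℝ)/1.7533141274*0.3887055097 := by
    rw [eG3, hD 3, hcG3]
    exact ImprovedStep34.frac_hi (ImprovedStep34.dpow_hi' _ _ (by norm_num)) hSlo
      ImprovedStep34.IB3_hi (pow_nonneg ddpos.le _) (by norm_num)
      (by rw [← hcG3]; exact hIBnn 3)
  have hAtail : (∑' j:ℕ, F (j+4)) ≤ 15 * 0.0000037267 * ((1:ℝ)-1/50)⁻¹ := by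
    have hper : ∀ j:ℕ, F (j+4) ≤ (15 * 0.0000037267) * ((1:ℝ)/50)^j := by
      intro j
      have e : F (j+4) = D (j+5) * ∫ x in (0:ℝ)..1,
          (∑ i ∈ Finset.range (j+5), Real.exp (-(i:ℝ) * x)) * Real.exp x := rfl
      have h1 : F (j+4) ≤ ImprovedStep34.dd^((j+5)^2) * (3*((j+5:ℕ):ℝ)) := by
        rw [e]
        exact mul_le_mul (hDle (j+5)) (ImprovedStep34.intA_le (j+5)) (hIAnn _)
          (pow_nonneg ddpos.le _)
      have h2 : ImprovedStep34.dd^((j+5)^2) ≤ ImprovedStep34.dd^25 * (ImprovedStep34.dd^10)^j := by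
        rw [← pow_mul, ← pow_add]
        apply pow_le_pow_of_le_one ddpos.le ddlt1.le
        calc 25 + 10*j ≤ j*j + (25+10*j) := Nat.le_add_left _ _
          _ = (j+5)^2 := by ring
      have h3 : (3*((j+5:ℕ):ℝ)) ≤ 15 * Real.exp j := by
        have hj := Real.add_one_le_exp (j:ℝ)
        have hj0 : (0:ℝ) ≤ (j:ℝ) := Nat.cast_nonneg j
        push_cast
        linarith
      have h4 : F (j+4) ≤ (ImprovedStep34.dd^25 * (ImprovedStep34.dd^10)^j) * (15 * Real.exp j) := by
        refine h1.trans (mul_le_mul h2 h3 (by positivity) (by positivity))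
      have hexpj : Real.exp (j:ℝ) = Real.exp 1 ^ j := by
        rw [← Real.exp_nat_mul, mul_one]
      have h6 : ImprovedStep34.dd^10 * Real.exp 1 = Real.exp (-4) := by
        rw [← ImprovedStep34.em5, ← Real.exp_add]; norm_num
      have h5 : (ImprovedStep34.dd^25 * (ImprovedStep34.dd^10)^j) * (15 * Real.exp j)
          = (15 * ImprovedStep34.dd^25) * (Real.exp (-4))^j := by
        rw [hexpj, ← h6, mul_pow]; ring
      have h8 : (Real.exp (-4))^j ≤ ((1:ℝ)/50)^j :=
        pow_le_pow_left₀ (Real.exp_nonneg _) ImprovedStep34.expm4_le j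
      have h9 : (15 : ℝ) * ImprovedStep34.dd^25 ≤ 15 * 0.0000037267 := by
        linarith [ImprovedStep34.dpow_hi' 25 (0.0000037267:ℝ) (by norm_num)]
      calc F (j+4) ≤ (15 * ImprovedStep34.dd^25) * (Real.exp (-4))^j := by rw [← h5]; exact h4
        _ ≤ (15 * 0.0000037267) * ((1:ℝ)/50)^j :=
            mul_le_mul h9 h8 (by positivity) (by norm_num)
    calc (∑' j:ℕ, F (j+4)) ≤ ∑' j:ℕ, (15 * 0.0000037267 : ℝ) * ((1:ℝ)/50)^j :=
        Summable.tsum_le_tsum hper ((summable_nat_add_iff 4).mpr hFsum)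
          ((summable_geometric_of_lt_one (by norm_num) (by norm_num)).mul_left _)
      _ = 15 * 0.0000037267 * ((1:ℝ)-1/50)⁻¹ := by
          rw [tsum_mul_left, tsum_geometric_of_lt_one (by norm_num) (by norm_num)]
  have hBtail : (∑' j:ℕ, G (j+4)) ≤ 1.4801 * 0.0003354627 * ((1:ℝ)-1/50)⁻¹ := by
    have hper : ∀ j:ℕ, G (j+4) ≤ (1.4801 * 0.0003354627) * ((1:ℝ)/50)^j := by
      intro j
      have h1 : G (j+4) ≤ ImprovedStep34.dd^((j+4)^2) * 1.4801 := hGle' (j+4)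
      have h2 : ImprovedStep34.dd^((j+4)^2) ≤ ImprovedStep34.dd^16 * (ImprovedStep34.dd^8)^j := by
        rw [← pow_mul, ← pow_add]
        apply pow_le_pow_of_le_one ddpos.le ddlt1.le
        calc 16 + 8*j ≤ j*j + (16+8*j) := Nat.le_add_left _ _
          _ = (j+4)^2 := by ring
      have h8 : (ImprovedStep34.dd^8)^j ≤ ((1:ℝ)/50)^j :=
        pow_le_pow_left₀ (pow_nonneg ddpos.le _) (ImprovedStep34.dpow_hi' 8 _ (by norm_num)) j
      have h9 : ImprovedStep34.dd^16 ≤ (0.0003354627:ℝ) :=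
        ImprovedStep34.dpow_hi' _ _ (by norm_num)
      calc G (j+4) ≤ ImprovedStep34.dd^((j+4)^2) * 1.4801 := h1
        _ ≤ (ImprovedStep34.dd^16 * (ImprovedStep34.dd^8)^j) * 1.4801 := by
            apply mul_le_mul_of_nonneg_right h2 (by norm_num)
        _ = (ImprovedStep34.dd^16 * 1.4801) * (ImprovedStep34.dd^8)^j := by ring
        _ ≤ (0.0003354627 * 1.4801) * ((1:ℝ)/50)^j := by
            apply mul_le_mul (by nlinarith [pow_nonneg ddpos.le 16]) h8
              (pow_nonneg (pow_nonneg ddpos.le _) _) (by norm_num)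
        _ = (1.4801 * 0.0003354627) * ((1:ℝ)/50)^j := by ring
    calc (∑' j:ℕ, G (j+4)) ≤ ∑' j:ℕ, (1.4801 * 0.0003354627 : ℝ) * ((1:ℝ)/50)^j :=
        Summable.tsum_le_tsum hper ((summable_nat_add_iff 4).mpr hGsum)
          ((summable_geometric_of_lt_one (by norm_num) (by norm_num)).mul_left _)
      _ = 1.4801 * 0.0003354627 * ((1:ℝ)-1/50)⁻¹ := by
          rw [tsum_mul_left, tsum_geometric_of_lt_one (by norm_num) (by norm_num)]
  constructor
  · have pF := Summable.sum_le_tsum (Finset.range 4) (fun i _ => hFnn i) hFsum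
    have pG := Summable.sum_le_tsum (Finset.range 4) (fun i _ => hGnn i) hGsum
    rw [Finset.sum_range_succ, Finset.sum_range_succ, Finset.sum_range_succ,
        Finset.sum_range_one] at pF pG
    linarith [bF0lo, bF1lo, bF2lo, bF3lo, bG0lo, bG1lo, bG2lo, bG3lo]
  · rw [← Summable.sum_add_tsum_nat_add 4 hFsum, ← Summable.sum_add_tsum_nat_add 4 hGsum,
        Finset.sum_range_succ, Finset.sum_range_succ, Finset.sum_range_succ,
        Finset.sum_range_one, Finset.sum_range_succ, Finset.sum_range_succ,
        Finset.sum_range_succ, Finset.sum_range_one]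
    linarith [bF0hi, bF1hi, bF2hi, bF3hi, bG0hi, bG1hi, bG2hi, bG3hi, hAtail, hBtail]
end
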